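/- arXiv:2408.02325 — 8 statements merged into one kernel-verified Lean document; each statement's English description precedes it below -/
import Mathlib

section
/- Let A be a symmetric 2×2 real matrix that is ℝ-equivalent to the split binary matrix S₂, and let B be a symmetric 4×4 real matrix that is ℝ-equivalent to the split quaternary matrix S₄. Then the set U(ℝ) := {M ∈ Mat₄ₓ₂(ℝ) : MᵀBM = A} is nonempty, and the group SO(B)(ℝ) := {g ∈ Mat₄ₓ₄(ℝ) : gᵀBg = B and det g = 1}, acting on U(ℝ) by left multiplication M ↦ gM, acts transitively on U(ℝ): for all M, M′ ∈ U(ℝ) there exists g ∈ SO(B)(ℝ) with gM = M′. -/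
open Matrix

/-- Two symmetric `n × n` matrices `M`, `M'` over a field are equivalent if
`M' = Pᵀ * M * P` for some invertible `P`. -/
def MatrixEquiv {n : ℕ} (M M' : Matrix (Fin n) (Fin n) ℝ) : Prop :=
  ∃ P : Matrix (Fin n) (Fin n) ℝ, IsUnit P ∧ M' = Pᵀ * M * P

/-- The split binary matrix `S₂` (the quadratic form `2·x₁·x₂`). -/
def splitBinary : Matrix (Fin 2) (Fin 2) ℝ :=
  Matrix.of fun i j => if i ≠ j then 1 else 0

/-- The split quaternary matrix `S₄` (the quadratic form `2·x₁·x₄ + 2·x₂·x₃`);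
with zero-based indices, `(S₄)ᵢⱼ = 1` iff `i + j = 3`. -/
def splitQuaternary : Matrix (Fin 4) (Fin 4) ℝ :=
  Matrix.of fun i j => if (i : ℕ) + (j : ℕ) = 3 then 1 else 0

namespace Statement5Aux

lemma sb_eq : splitBinary = !![0, 1; 1, 0] := by
  ext i j; fin_cases i <;> fin_cases j <;> rfl

lemma sq_eq : splitQuaternary = !![0,0,0,1; 0,0,1,0; 0,1,0,0; 1,0,0,0] := by
  ext i j; fin_cases i <;> fin_cases j <;> rfl

lemma det_fin_four' (M : Matrix (Fin 4) (Fin 4) ℝ) :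
    M.det = M 0 0 * M 1 1 * M 2 2 * M 3 3 - M 0 0 * M 1 1 * M 2 3 * M 3 2 -
      M 0 0 * M 1 2 * M 2 1 * M 3 3 + M 0 0 * M 1 2 * M 2 3 * M 3 1 +
      M 0 0 * M 1 3 * M 2 1 * M 3 2 - M 0 0 * M 1 3 * M 2 2 * M 3 1 -
      M 0 1 * M 1 0 * M 2 2 * M 3 3 + M 0 1 * M 1 0 * M 2 3 * M 3 2 +
      M 0 1 * M 1 2 * M 2 0 * M 3 3 - M 0 1 * M 1 2 * M 2 3 * M 3 0 -
      M 0 1 * M 1 3 * M 2 0 * M 3 2 + M 0 1 * M 1 3 * M 2 2 * M 3 0 +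
      M 0 2 * M 1 0 * M 2 1 * M 3 3 - M 0 2 * M 1 0 * M 2 3 * M 3 1 -
      M 0 2 * M 1 1 * M 2 0 * M 3 3 + M 0 2 * M 1 1 * M 2 3 * M 3 0 +
      M 0 2 * M 1 3 * M 2 0 * M 3 1 - M 0 2 * M 1 3 * M 2 1 * M 3 0 -
      M 0 3 * M 1 0 * M 2 1 * M 3 2 + M 0 3 * M 1 0 * M 2 2 * M 3 1 +
      M 0 3 * M 1 1 * M 2 0 * M 3 2 - M 0 3 * M 1 1 * M 2 2 * M 3 0 -
      M 0 3 * M 1 2 * M 2 0 * M 3 1 + M 0 3 * M 1 2 * M 2 1 * M 3 0 := by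
  rw [Matrix.det_succ_row_zero]
  simp [Fin.sum_univ_succ, Matrix.det_fin_three, Fin.succAbove, -Fin.val_fin_lt,
    show (Fin.succ 2 : Fin 4) = 3 from rfl, show ((2 : Fin 3).castSucc : Fin 4) = 2 from rfl]
  ring

/-- The "Kronecker-like" isometry of the split quaternary form built from two `2x2` blocks:
under the identification `x <-> !![x0, x1; -x2, x3]`, this is `X |-> P * X * Q`. -/
def kg (P Q : Matrix (Fin 2) (Fin 2) ℝ) : Matrix (Fin 4) (Fin 4) ℝ :=
  !![P 0 0 * Q 0 0, P 0 0 * Q 1 0, -(P 0 1 * Q 0 0), P 0 1 * Q 1 0;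
     P 0 0 * Q 0 1, P 0 0 * Q 1 1, -(P 0 1 * Q 0 1), P 0 1 * Q 1 1;
     -(P 1 0 * Q 0 0), -(P 1 0 * Q 1 0), P 1 1 * Q 0 0, -(P 1 1 * Q 1 0);
     P 1 0 * Q 0 1, P 1 0 * Q 1 1, -(P 1 1 * Q 0 1), P 1 1 * Q 1 1]

lemma kg_transpose (P Q : Matrix (Fin 2) (Fin 2) ℝ) :
    (kg P Q)ᵀ =
  !![P 0 0 * Q 0 0, P 0 0 * Q 0 1, -(P 1 0 * Q 0 0), P 1 0 * Q 0 1;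
     P 0 0 * Q 1 0, P 0 0 * Q 1 1, -(P 1 0 * Q 1 0), P 1 0 * Q 1 1;
     -(P 0 1 * Q 0 0), -(P 0 1 * Q 0 1), P 1 1 * Q 0 0, -(P 1 1 * Q 0 1);
     P 0 1 * Q 1 0, P 0 1 * Q 1 1, -(P 1 1 * Q 1 0), P 1 1 * Q 1 1] := by
  ext i j; fin_cases i <;> fin_cases j <;> rfl

/-- The base point of `U(ℝ)` for `A = S2`, `B = S4`: columns `e0`, `e3`. -/
def N0 : Matrix (Fin 4) (Fin 2) ℝ := !![1, 0; 0, 0; 0, 0; 0, 1]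

lemma N0_transpose : N0ᵀ = !![(1:ℝ), 0, 0, 0; 0, 0, 0, 1] := by
  ext i j; fin_cases i <;> fin_cases j <;> rfl

lemma N0_gram : N0ᵀ * splitQuaternary * N0 = splitBinary := by
  rw [sb_eq, sq_eq, N0_transpose]
  ext i j
  fin_cases i <;> fin_cases j <;>
    simp [N0, Matrix.mul_apply, Fin.sum_univ_four, Matrix.vecHead, Matrix.vecTail]

set_option maxHeartbeats 2000000 in
lemma kg_gram (P Q : Matrix (Fin 2) (Fin 2) ℝ) (h : P.det * Q.det = 1) :
    (kg P Q)ᵀ * splitQuaternary * kg P Q = splitQuaternary := by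
  rw [Matrix.det_fin_two, Matrix.det_fin_two] at h
  rw [sq_eq, kg_transpose]
  ext i j
  fin_cases i <;> fin_cases j <;>
    simp [kg, Matrix.mul_apply, Fin.sum_univ_four, Matrix.vecHead, Matrix.vecTail] <;>
    (first | ring1 | linear_combination h)

set_option maxHeartbeats 1000000 in
lemma kg_det (P Q : Matrix (Fin 2) (Fin 2) ℝ) :
    (kg P Q).det = (P.det * Q.det) ^ 2 := by
  rw [det_fin_four', Matrix.det_fin_two, Matrix.det_fin_two]
  simp [kg, Matrix.vecHead, Matrix.vecTail]
  ring

/-- Any `2x2` matrix with trace `1` and determinant `0` is conjugate, by a pair of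
mutually inverse matrices of determinant product `1`, to `!![1,0;0,0]`. -/
lemma exists_conj (a b c d : ℝ) (hdet : a * d = b * c) (htr : a + d = 1) :
    ∃ s t : Matrix (Fin 2) (Fin 2) ℝ, s * t = 1 ∧ s.det * t.det = 1 ∧
      s * !![(1 : ℝ), 0; 0, 0] * t = !![a, b; c, d] := by
  by_cases ha : a = 0
  · have hbc : b * c = 0 := by linear_combination d * ha - hdet
    have hd1 : d = 1 := by linear_combination htr - ha
    refine ⟨!![b, -1; 1, c], !![c, 1; -1, b], ?_, ?_, ?_⟩
    · rw [Matrix.one_fin_two]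
      ext i j
      fin_cases i <;> fin_cases j <;>
        simp [Matrix.mul_apply, Fin.sum_univ_two] <;>
        (first
          | ring1
          | linear_combination hbc
          | exact mul_eq_zero.mp hbc
          | exact Or.symm (mul_eq_zero.mp hbc)
          | linear_combination hbc - hdet + d * ha)
    · rw [Matrix.det_fin_two, Matrix.det_fin_two]
      simp only [Matrix.cons_val', Matrix.cons_val_zero, Matrix.cons_val_one,
        Matrix.head_cons, Matrix.empty_val', Matrix.cons_val_fin_one,
        Matrix.head_fin_const, Matrix.of_apply]
      linear_combination (b * c + 2) * hbc
    · ext i j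
      fin_cases i <;> fin_cases j <;>
        simp [Matrix.mul_apply, Fin.sum_univ_two] <;>
        (first
          | ring1
          | linear_combination hbc + ha
          | linear_combination hbc - ha
          | linear_combination ha - htr
          | linear_combination htr - ha
          | linear_combination hbc)
  · refine ⟨!![a, -(b / a); c, 1], !![1, b / a; -c, a], ?_, ?_, ?_⟩
    · rw [Matrix.one_fin_two]
      ext i j
      fin_cases i <;> fin_cases j <;>
        simp [Matrix.mul_apply, Fin.sum_univ_two] <;>
        field_simp <;>
        (first
          | ring1
          | linear_combination a * htr - hdet
          | linear_combination hdet - a * htr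
          | linear_combination a * a * htr - a * hdet)
    · rw [Matrix.det_fin_two, Matrix.det_fin_two]
      simp only [Matrix.cons_val', Matrix.cons_val_zero, Matrix.cons_val_one,
        Matrix.head_cons, Matrix.empty_val', Matrix.cons_val_fin_one,
        Matrix.head_fin_const, Matrix.of_apply]
      field_simp
      (first
        | linear_combination (a * a + b * c + a) * a * htr - (a * a + b * c + a) * hdet
        | linear_combination (a * a + b * c + a) * htr - ((a * a + b * c + a) / a) * hdet
        | nlinarith [hdet, htr, sq_nonneg a, sq_nonneg (a*a + b*c)])
    · ext i j
      fin_cases i <;> fin_cases j <;>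
        simp [Matrix.mul_apply, Fin.sum_univ_two] <;>
        field_simp <;>
        (first
          | ring1
          | linear_combination a * htr - hdet
          | linear_combination hdet
          | linear_combination -hdet
          | linear_combination a * hdet
          | linear_combination -(a * hdet))

/-- Witt-type transitivity for the split quaternary form: every point of `U(ℝ)`
(for `A = S2`, `B = S4`) lies in the `SO(S4)(ℝ)`-orbit of the base point `N0`. -/
lemma witt (N : Matrix (Fin 4) (Fin 2) ℝ)
    (hN : Nᵀ * splitQuaternary * N = splitBinary) :
    ∃ g : Matrix (Fin 4) (Fin 4) ℝ,
      gᵀ * splitQuaternary * g = splitQuaternary ∧ g.det = 1 ∧ g * N0 = N := by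
  rw [sq_eq, sb_eq] at hN
  -- scalar consequences of `hN`
  have h1 : N 0 0 * N 3 0 + N 1 0 * N 2 0 = 0 := by
    have := congrFun (congrFun hN 0) 0
    simp [Matrix.mul_apply, Fin.sum_univ_four] at this
    linear_combination this / 2
  have h2 : N 0 1 * N 3 1 + N 1 1 * N 2 1 = 0 := by
    have := congrFun (congrFun hN 1) 1
    simp [Matrix.mul_apply, Fin.sum_univ_four] at this
    linear_combination this / 2
  have h3 : N 0 0 * N 3 1 + N 3 0 * N 0 1 + N 1 0 * N 2 1 + N 2 0 * N 1 1 = 1 := by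
    have := congrFun (congrFun hN 0) 1
    simp [Matrix.mul_apply, Fin.sum_univ_four] at this
    linear_combination this
  -- the 2x2 picture
  set U : Matrix (Fin 2) (Fin 2) ℝ := !![N 0 0, N 1 0; -N 2 0, N 3 0] with hU
  set V : Matrix (Fin 2) (Fin 2) ℝ := !![N 0 1, N 1 1; -N 2 1, N 3 1] with hV
  set T : Matrix (Fin 2) (Fin 2) ℝ :=
    !![N 0 0 + N 0 1, N 1 0 + N 1 1; -(N 2 0 + N 2 1), N 3 0 + N 3 1] with hT
  set Tadj : Matrix (Fin 2) (Fin 2) ℝ :=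
    !![N 3 0 + N 3 1, -(N 1 0 + N 1 1); N 2 0 + N 2 1, N 0 0 + N 0 1] with hTadj
  have hTT : T * Tadj = 1 := by
    rw [hT, hTadj, Matrix.one_fin_two]
    ext i j
    fin_cases i <;> fin_cases j <;>
      simp [Matrix.mul_apply, Fin.sum_univ_two] <;>
      (first | ring1 | linear_combination h1 + h2 + h3)
  have hTaU : Tadj * U =
      !![(N 3 0 + N 3 1) * N 0 0 + (N 1 0 + N 1 1) * N 2 0,
         (N 3 0 + N 3 1) * N 1 0 - (N 1 0 + N 1 1) * N 3 0;
         (N 2 0 + N 2 1) * N 0 0 - (N 0 0 + N 0 1) * N 2 0,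
         (N 2 0 + N 2 1) * N 1 0 + (N 0 0 + N 0 1) * N 3 0] := by
    rw [hTadj, hU]
    ext i j
    fin_cases i <;> fin_cases j <;>
      simp [Matrix.mul_apply, Fin.sum_univ_two] <;> ring1
  have hdet : ((N 3 0 + N 3 1) * N 0 0 + (N 1 0 + N 1 1) * N 2 0) *
        ((N 2 0 + N 2 1) * N 1 0 + (N 0 0 + N 0 1) * N 3 0) =
      ((N 3 0 + N 3 1) * N 1 0 - (N 1 0 + N 1 1) * N 3 0) *
        ((N 2 0 + N 2 1) * N 0 0 - (N 0 0 + N 0 1) * N 2 0) := by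
    linear_combination
      ((N 0 0 + N 0 1) * (N 3 0 + N 3 1) + (N 1 0 + N 1 1) * (N 2 0 + N 2 1)) * h1
  have htr : ((N 3 0 + N 3 1) * N 0 0 + (N 1 0 + N 1 1) * N 2 0) +
      ((N 2 0 + N 2 1) * N 1 0 + (N 0 0 + N 0 1) * N 3 0) = 1 := by
    linear_combination 2 * h1 + h3
  obtain ⟨s, t, hst, hdst, hconj⟩ := exists_conj _ _ _ _ hdet htr
  set P := T * s with hP
  set Q := t with hQ
  have hPEQ : P * !![(1 : ℝ), 0; 0, 0] * Q = U := by
    calc P * !![(1 : ℝ), 0; 0, 0] * Q = T * (s * !![(1 : ℝ), 0; 0, 0] * t) := by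
          rw [hP, hQ]; simp only [Matrix.mul_assoc]
      _ = T * (Tadj * U) := by rw [hconj, hTaU]
      _ = (T * Tadj) * U := by rw [Matrix.mul_assoc]
      _ = U := by rw [hTT, Matrix.one_mul]
  have hPFQ : P * !![(0 : ℝ), 0; 0, 1] * Q = V := by
    have hE : !![(0 : ℝ), 0; 0, 1] = 1 - !![(1 : ℝ), 0; 0, 0] := by
      rw [Matrix.one_fin_two]
      ext i j; fin_cases i <;> fin_cases j <;> simp [Matrix.sub_apply]
    have hTV : T - U = V := by
      rw [hT, hU, hV]
      ext i j; fin_cases i <;> fin_cases j <;> simp [Matrix.sub_apply] <;> ring1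
    calc P * !![(0 : ℝ), 0; 0, 1] * Q
        = P * Q - P * !![(1 : ℝ), 0; 0, 0] * Q := by
          rw [hE, Matrix.mul_sub, Matrix.mul_one, Matrix.sub_mul]
      _ = T * (s * t) - U := by rw [hPEQ, hP, hQ, Matrix.mul_assoc]
      _ = V := by rw [hst, Matrix.mul_one, hTV]
  have hdetPQ : P.det * Q.det = 1 := by
    have hTdet : T.det = 1 := by
      rw [hT, Matrix.det_fin_two]
      simp only [Matrix.cons_val', Matrix.cons_val_zero, Matrix.cons_val_one,
        Matrix.head_cons, Matrix.empty_val', Matrix.cons_val_fin_one,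
        Matrix.head_fin_const, Matrix.of_apply]
      linear_combination h1 + h2 + h3
    rw [hP, hQ, Matrix.det_mul, mul_assoc, hdst, hTdet, mul_one]
  refine ⟨kg P Q, kg_gram P Q hdetPQ, ?_, ?_⟩
  · rw [kg_det, hdetPQ, one_pow]
  · have e00 := congrFun (congrFun hPEQ 0) 0
    have e01 := congrFun (congrFun hPEQ 0) 1
    have e10 := congrFun (congrFun hPEQ 1) 0
    have e11 := congrFun (congrFun hPEQ 1) 1
    have f00 := congrFun (congrFun hPFQ 0) 0
    have f01 := congrFun (congrFun hPFQ 0) 1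
    have f10 := congrFun (congrFun hPFQ 1) 0
    have f11 := congrFun (congrFun hPFQ 1) 1
    rw [hU] at e00 e01 e10 e11
    rw [hV] at f00 f01 f10 f11
    simp [Matrix.mul_apply, Fin.sum_univ_two] at e00 e01 e10 e11 f00 f01 f10 f11
    ext i j
    fin_cases i <;> fin_cases j <;>
      simp [kg, N0, Matrix.mul_apply, Fin.sum_univ_four,
        Matrix.vecHead, Matrix.vecTail] <;>
      linarith [e00, e01, e10, e11, f00, f01, f10, f11]

end Statement5Aux

open Statement5Aux in
/-- Let `A` be a symmetric `2 × 2` real matrix ℝ-equivalent to the split binary matrix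
and `B` a symmetric `4 × 4` real matrix ℝ-equivalent to the split quaternary matrix.
Then `U(ℝ) = {M : MᵀBM = A}` is nonempty and the group
`SO(B)(ℝ) = {g : gᵀBg = B, det g = 1}` acts transitively on it by left multiplication. -/
theorem statement5 (A : Matrix (Fin 2) (Fin 2) ℝ) (B : Matrix (Fin 4) (Fin 4) ℝ)
    (hA : A.IsSymm) (hB : B.IsSymm)
    (hAeq : MatrixEquiv A splitBinary) (hBeq : MatrixEquiv B splitQuaternary) :
    (∃ M : Matrix (Fin 4) (Fin 2) ℝ, Mᵀ * B * M = A) ∧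
    (∀ M M' : Matrix (Fin 4) (Fin 2) ℝ, Mᵀ * B * M = A → M'ᵀ * B * M' = A →
      ∃ g : Matrix (Fin 4) (Fin 4) ℝ, gᵀ * B * g = B ∧ g.det = 1 ∧ g * M = M') := by
  obtain ⟨Pa, hPa, hA2⟩ := hAeq
  obtain ⟨Qb, hQb, hB2⟩ := hBeq
  have hPad : IsUnit Pa.det := (Matrix.isUnit_iff_isUnit_det Pa).1 hPa
  have hQbd : IsUnit Qb.det := (Matrix.isUnit_iff_isUnit_det Qb).1 hQb
  have hPadT : IsUnit Paᵀ.det := by rwa [Matrix.det_transpose]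
  have hQbdT : IsUnit Qbᵀ.det := by rwa [Matrix.det_transpose]
  -- recover A and B from the split forms
  have hArec : (Pa⁻¹)ᵀ * splitBinary * Pa⁻¹ = A := by
    rw [hA2, Matrix.transpose_nonsing_inv]
    calc Paᵀ⁻¹ * (Paᵀ * A * Pa) * Pa⁻¹
        = (Paᵀ⁻¹ * Paᵀ) * A * (Pa * Pa⁻¹) := by
          simp only [Matrix.mul_assoc]
      _ = A := by rw [Matrix.nonsing_inv_mul _ hPadT, Matrix.mul_nonsing_inv _ hPad,
            Matrix.one_mul, Matrix.mul_one]
  have hBrec : (Qb⁻¹)ᵀ * splitQuaternary * Qb⁻¹ = B := by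
    rw [hB2, Matrix.transpose_nonsing_inv]
    calc Qbᵀ⁻¹ * (Qbᵀ * B * Qb) * Qb⁻¹
        = (Qbᵀ⁻¹ * Qbᵀ) * B * (Qb * Qb⁻¹) := by
          simp only [Matrix.mul_assoc]
      _ = B := by rw [Matrix.nonsing_inv_mul _ hQbdT, Matrix.mul_nonsing_inv _ hQbd,
            Matrix.one_mul, Matrix.mul_one]
  constructor
  · refine ⟨Qb * N0 * Pa⁻¹, ?_⟩
    have : (Qb * N0 * Pa⁻¹)ᵀ * B * (Qb * N0 * Pa⁻¹)
        = (Pa⁻¹)ᵀ * (N0ᵀ * (Qbᵀ * B * Qb) * N0) * Pa⁻¹ := by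
      simp only [Matrix.transpose_mul, Matrix.mul_assoc]
    rw [this, ← hB2, N0_gram]
    exact hArec
  · intro M M' hM hM'
    -- transport to the split picture
    have key : ∀ X : Matrix (Fin 4) (Fin 2) ℝ, Xᵀ * B * X = A →
        (Qb⁻¹ * X * Pa)ᵀ * splitQuaternary * (Qb⁻¹ * X * Pa) = splitBinary := by
      intro X hX
      rw [hB2]
      have : (Qb⁻¹ * X * Pa)ᵀ * (Qbᵀ * B * Qb) * (Qb⁻¹ * X * Pa)
          = Paᵀ * (Xᵀ * ((Qb * Qb⁻¹)ᵀ * B * (Qb * Qb⁻¹)) * X) * Pa := by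
        simp only [Matrix.transpose_mul, Matrix.transpose_nonsing_inv, Matrix.mul_assoc]
      rw [this, Matrix.mul_nonsing_inv _ hQbd]
      simp only [Matrix.transpose_one, Matrix.one_mul, Matrix.mul_one]
      rw [hX]
      exact hA2.symm
    obtain ⟨g1, hg1a, hg1d, hg1N⟩ := witt (Qb⁻¹ * M * Pa) (key M hM)
    obtain ⟨g2, hg2a, hg2d, hg2N⟩ := witt (Qb⁻¹ * M' * Pa) (key M' hM')
    have hg1u : IsUnit g1.det := by rw [hg1d]; exact isUnit_one
    -- the element of SO(S₄) moving N to N'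
    set h : Matrix (Fin 4) (Fin 4) ℝ := g2 * g1⁻¹ with hh
    have hhS : hᵀ * splitQuaternary * h = splitQuaternary := by
      have hS4 : (g1⁻¹)ᵀ * splitQuaternary * g1⁻¹ = splitQuaternary := by
        conv_lhs => rw [← hg1a]
        rw [Matrix.transpose_nonsing_inv]
        calc g1ᵀ⁻¹ * (g1ᵀ * splitQuaternary * g1) * g1⁻¹
            = (g1ᵀ⁻¹ * g1ᵀ) * splitQuaternary * (g1 * g1⁻¹) := by
              simp only [Matrix.mul_assoc]
          _ = splitQuaternary := by
              rw [Matrix.nonsing_inv_mul _ (by rwa [Matrix.det_transpose]),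
                Matrix.mul_nonsing_inv _ hg1u, Matrix.one_mul, Matrix.mul_one]
      rw [hh]
      calc (g2 * g1⁻¹)ᵀ * splitQuaternary * (g2 * g1⁻¹)
          = (g1⁻¹)ᵀ * (g2ᵀ * splitQuaternary * g2) * g1⁻¹ := by
            simp only [Matrix.transpose_mul, Matrix.mul_assoc]
        _ = splitQuaternary := by rw [hg2a]; exact hS4
    have hhd : h.det = 1 := by
      rw [hh, Matrix.det_mul, hg2d, Matrix.det_nonsing_inv, hg1d, one_mul]
      simp
    have hhN : h * (Qb⁻¹ * M * Pa) = Qb⁻¹ * M' * Pa := by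
      rw [hh, ← hg1N, ← hg2N]
      calc g2 * g1⁻¹ * (g1 * N0) = g2 * ((g1⁻¹ * g1) * N0) := by
            simp only [Matrix.mul_assoc]
        _ = g2 * N0 := by rw [Matrix.nonsing_inv_mul _ hg1u, Matrix.one_mul]
    refine ⟨Qb * h * Qb⁻¹, ?_, ?_, ?_⟩
    · calc (Qb * h * Qb⁻¹)ᵀ * B * (Qb * h * Qb⁻¹)
          = (Qb⁻¹)ᵀ * (hᵀ * (Qbᵀ * B * Qb) * h) * Qb⁻¹ := by
            simp only [Matrix.transpose_mul, Matrix.mul_assoc]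
        _ = (Qb⁻¹)ᵀ * splitQuaternary * Qb⁻¹ := by
            rw [← hB2, hhS, Matrix.mul_assoc]
        _ = B := hBrec
    · rw [Matrix.det_mul, Matrix.det_mul, Matrix.det_nonsing_inv, hhd, mul_one]
      rw [Ring.mul_inverse_cancel _ hQbd]
    · have hM2 : Qb * (Qb⁻¹ * M * Pa) * Pa⁻¹ = M := by
        calc Qb * (Qb⁻¹ * M * Pa) * Pa⁻¹
            = (Qb * Qb⁻¹) * M * (Pa * Pa⁻¹) := by simp only [Matrix.mul_assoc]
          _ = M := by rw [Matrix.mul_nonsing_inv _ hQbd, Matrix.mul_nonsing_inv _ hPad,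
                Matrix.one_mul, Matrix.mul_one]
      have hM'2 : Qb * (Qb⁻¹ * M' * Pa) * Pa⁻¹ = M' := by
        calc Qb * (Qb⁻¹ * M' * Pa) * Pa⁻¹
            = (Qb * Qb⁻¹) * M' * (Pa * Pa⁻¹) := by simp only [Matrix.mul_assoc]
          _ = M' := by rw [Matrix.mul_nonsing_inv _ hQbd, Matrix.mul_nonsing_inv _ hPad,
                Matrix.one_mul, Matrix.mul_one]
      calc Qb * h * Qb⁻¹ * M
          = Qb * (h * (Qb⁻¹ * M * Pa)) * Pa⁻¹ := by
            simp only [Matrix.mul_assoc, Matrix.mul_nonsing_inv _ hPad, Matrix.mul_one]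
        _ = Qb * (Qb⁻¹ * M' * Pa) * Pa⁻¹ := by rw [hhN]
        _ = M' := hM'2
end

section
/- X(ℝ) is the disjoint union of the six G-orbits of the points y₀ = ([e₁:1],[e₁:1]), y₁* = ([e₂:0],[e₁:1]), y₁⁰ = ([e₂:0],[0:1]), y₂* = ([e₁:1],[e₂:0]), y₂⁰ = ([0:1],[e₂:0]) and y₁₂ = ([e₁:0],[e₂:0]); that is, these six orbits are pairwise disjoint and their union is all of X(ℝ). -/
open Matrix

noncomputable section

open Module Submodule Projectivization

local notation "⟪" x ", " y "⟫" => inner (𝕜 := ℝ) x y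

abbrev toE {m : ℕ} (x : Fin m → ℝ) : EuclideanSpace ℝ (Fin m) :=
  (WithLp.equiv 2 (Fin m → ℝ)).symm x

lemma dot_eq_inner {m : ℕ} (x y : Fin m → ℝ) :
    x ⬝ᵥ y = ⟪toE x, toE y⟫ := by
  simp [PiLp.inner_apply, RCLike.inner_apply, dotProduct, mul_comm]

lemma toE_ne_zero {m : ℕ} {x : Fin m → ℝ} (hx : x ≠ 0) : toE x ≠ 0 :=
  fun h => hx ((WithLp.equiv 2 (Fin m → ℝ)).symm.injective (h.trans rfl))

lemma dot_self_ne_zero {m : ℕ} {v : Fin m → ℝ} (hv : v ≠ 0) :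
    (v ⬝ᵥ v) ≠ 0 := by
  rw [dot_eq_inner]
  intro h
  exact toE_ne_zero hv (inner_self_eq_zero.mp h)

lemma master {n : ℕ} (hn : 1 ≤ n) (v α : Fin (n+1) → ℝ) (hv : v ≠ 0) (hα : α ≠ 0)
    (hort : α ⬝ᵥ v = 0) :
    ∃ (g : Matrix.SpecialLinearGroup (Fin (n+1)) ℝ) (c : ℝ), c ≠ 0 ∧
      (g : Matrix (Fin (n+1)) (Fin (n+1)) ℝ) *ᵥ v = Pi.single 0 1 ∧
      (g : Matrix (Fin (n+1)) (Fin (n+1)) ℝ) 1 = c • α := by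
  classical
  have hva : ⟪toE v, toE α⟫ = 0 := by
    rw [← dot_eq_inner]
    simpa [dotProduct, mul_comm] using hort
  have hvv : ⟪toE v, toE v⟫ ≠ 0 := by
    rw [← dot_eq_inner]; exact dot_self_ne_zero hv
  have hpair : LinearIndependent ℝ ![toE v, toE α] := by
    rw [LinearIndependent.pair_iff]
    intro s t hst
    have h1 : s * ⟪toE v, toE v⟫ + t * ⟪toE v, toE α⟫ = 0 := by
      simpa [inner_add_right, inner_smul_right] using congrArg (fun w => ⟪toE v, w⟫) hst
    rw [hva, mul_zero, add_zero, mul_eq_zero] at h1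
    have hs : s = 0 := h1.resolve_right hvv
    subst hs
    rw [zero_smul, zero_add, smul_eq_zero] at hst
    exact ⟨rfl, hst.resolve_right (toE_ne_zero hα)⟩
  set K : Submodule ℝ (EuclideanSpace ℝ (Fin (n+1))) := Submodule.span ℝ (Set.range ![toE v, toE α]) with hK
  have hK2 : finrank ℝ K = 2 := by rw [finrank_span_eq_card hpair]; simp
  have hEm : finrank ℝ (EuclideanSpace ℝ (Fin (n+1))) = n + 1 := finrank_euclideanSpace_fin
  have hKo : finrank ℝ Kᗮ = n - 1 := by
    have := K.finrank_add_finrank_orthogonal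
    omega
  set d := finrank ℝ ↥Kᗮ with hd
  set b := finBasis ℝ ↥Kᗮ with hb
  set r : Fin (d + 2) → EuclideanSpace ℝ (Fin (n+1)) :=
    Fin.cons (toE v) (Fin.cons (toE α) (fun k => ((b k : ↥Kᗮ) : EuclideanSpace ℝ (Fin (n+1))))) with hr
  have hvK : toE v ∈ K := Submodule.subset_span (by simp)
  have hαK : toE α ∈ K := Submodule.subset_span (by simp)
  have hbli : LinearIndependent ℝ (fun k : Fin d => ((b k : ↥Kᗮ) : EuclideanSpace ℝ (Fin (n+1)))) :=
    b.linearIndependent.map' Kᗮ.subtype (Submodule.ker_subtype _)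
  have hspan_b : Submodule.span ℝ (Set.range fun k : Fin d => ((b k : ↥Kᗮ) : EuclideanSpace ℝ (Fin (n+1)))) ≤ Kᗮ :=
    Submodule.span_le.2 (by rintro _ ⟨k, rfl⟩; exact (b k).2)
  have h1 : LinearIndependent ℝ
      (Fin.cons (toE α) (fun k : Fin d => ((b k : ↥Kᗮ) : EuclideanSpace ℝ (Fin (n+1)))) : Fin (d+1) → EuclideanSpace ℝ (Fin (n+1))) := by
    rw [linearIndependent_fin_cons]
    refine ⟨hbli, fun hmem => ?_⟩
    have h2 : toE α ∈ Kᗮ := hspan_b hmem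
    have h3 : ⟪toE α, toE α⟫ = 0 := (Submodule.mem_orthogonal _ _).mp h2 _ hαK
    exact toE_ne_zero hα (inner_self_eq_zero.mp h3)
  have hli : LinearIndependent ℝ r := by
    rw [hr, linearIndependent_fin_cons]
    refine ⟨h1, fun hmem => ?_⟩
    have hsub : Submodule.span ℝ
        (Set.range (Fin.cons (toE α) (fun k : Fin d => ((b k : ↥Kᗮ) : EuclideanSpace ℝ (Fin (n+1)))) : Fin (d+1) → EuclideanSpace ℝ (Fin (n+1))))
        ≤ (ℝ ∙ (toE v))ᗮ := by
      rw [Submodule.span_le]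
      rintro x ⟨i, rfl⟩
      induction i using Fin.cases with
      | zero =>
        rw [Fin.cons_zero]
        exact Submodule.mem_orthogonal_singleton_iff_inner_right.mpr hva
      | succ j =>
        rw [Fin.cons_succ]
        have h4 : (ℝ ∙ (toE v)) ≤ K := by
          rw [Submodule.span_singleton_le_iff_mem]; exact hvK
        exact Submodule.orthogonal_le h4 (b j).2
    have h5 : toE v ∈ (ℝ ∙ toE v)ᗮ := hsub hmem
    exact hvv (Submodule.mem_orthogonal_singleton_iff_inner_right.mp h5)
  have hd2 : d + 2 = n + 1 := by omega
  set M : Matrix (Fin (n+1)) (Fin (n+1)) ℝ :=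
    Matrix.of (fun i j => r (Fin.cast hd2.symm i) j) with hM
  have hli' : LinearIndependent ℝ (fun i : Fin (n+1) => M i) := by
    have := hli.comp (Fin.cast hd2.symm) (Fin.cast_injective _)
    exact this.map' (WithLp.linearEquiv 2 ℝ _).toLinearMap (LinearEquiv.ker _)
  have hMu : IsUnit M := Matrix.linearIndependent_rows_iff_isUnit.mp hli'
  have hdet : M.det ≠ 0 := by
    intro h
    have := (Matrix.isUnit_iff_isUnit_det M).mp hMu
    rw [h] at this
    exact this.ne_zero rfl
  
  set a := v ⬝ᵥ v with ha
  have haz : a ≠ 0 := dot_self_ne_zero hv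
  have hv1 : ((1 : Fin (n+1)) : ℕ) = 1 := by rw [Fin.val_one', Nat.mod_eq_of_lt (by omega)]
  have h01 : (0 : Fin (n+1)) ≠ 1 := by
    rw [Fin.ne_iff_vne, Fin.val_zero, hv1]; omega
  have hcast0 : Fin.cast hd2.symm (0 : Fin (n+1)) = 0 := by
    apply Fin.ext; rw [Fin.coe_cast, Fin.val_zero, Fin.val_zero]
  have hcast1 : Fin.cast hd2.symm (1 : Fin (n+1)) = 1 := by
    apply Fin.ext; rw [Fin.coe_cast, hv1, Fin.val_one', Nat.mod_eq_of_lt (by omega)]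
  have hrdot : ∀ k : Fin (d + 2), dotProduct (r k) v = if k = 0 then a else 0 := by
    intro k
    induction k using Fin.cases with
    | zero => rw [if_pos rfl, hr, Fin.cons_zero]; rfl
    | succ j =>
      rw [if_neg (Fin.succ_ne_zero j)]
      induction j using Fin.cases with
      | zero =>
        rw [hr, Fin.cons_succ, Fin.cons_zero]
        exact hort
      | succ l =>
        rw [hr, Fin.cons_succ, Fin.cons_succ, dot_eq_inner]
        exact (Submodule.mem_orthogonal' _ _).mp (b l).2 _ hvK
  have hrowdot : ∀ i : Fin (n+1), dotProduct (M i) v = if i = 0 then a else 0 := by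
    intro i
    have h6 : dotProduct (M i) v = dotProduct (r (Fin.cast hd2.symm i)) v := rfl
    rw [h6, hrdot]
    congr 1
    simp only [eq_iff_iff]
    constructor
    · intro h; apply Fin.ext
      have := congrArg Fin.val h
      simpa using this
    · intro h; subst h; exact hcast0
  set c := a * M.det⁻¹ with hc
  have hcz : c ≠ 0 := mul_ne_zero haz (inv_ne_zero hdet)
  set N := updateRow (updateRow M 0 (a⁻¹ • M 0)) 1 (c • M 1) with hN
  have hM1 : (updateRow M 0 (a⁻¹ • M 0)) 1 = M 1 := updateRow_ne h01.symm
  have hdetN : N.det = 1 := by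
    have e1 : N.det = c * (updateRow M 0 (a⁻¹ • M 0)).det := by
      rw [hN, ← hM1, det_updateRow_smul, updateRow_eq_self]
    have e2 : (updateRow M 0 (a⁻¹ • M 0)).det = a⁻¹ * M.det := by
      rw [det_updateRow_smul, updateRow_eq_self]
    rw [e1, e2, hc]
    field_simp
  refine ⟨⟨N, hdetN⟩, c, hcz, ?_, ?_⟩
  · funext i
    have h7 : (N *ᵥ v) i = dotProduct (N i) v := rfl
    rw [h7, Pi.single_apply]
    by_cases hi1 : i = 1
    · subst hi1
      rw [hN, updateRow_self, smul_dotProduct, hrowdot, if_neg (Ne.symm h01),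
        if_neg (Ne.symm h01)]
      simp
    · rw [hN, updateRow_ne hi1]
      by_cases hi0 : i = 0
      · subst hi0
        rw [updateRow_self, smul_dotProduct, hrowdot, if_pos rfl, if_pos rfl]
        simp [smul_eq_mul, inv_mul_cancel₀ haz]
      · rw [updateRow_ne hi0, hrowdot, if_neg hi0, if_neg hi0]
  · show N 1 = c • α
    have h9 : N 1 = c • M 1 := by rw [hN, updateRow_self]
    rw [h9]
    congr 1
    funext j
    show r (Fin.cast hd2.symm 1) j = α j
    rw [hcast1, hr, ← Fin.succ_zero_eq_one, Fin.cons_succ, Fin.cons_zero]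
    rfl

lemma masterOne {n : ℕ} (hn : 1 ≤ n) (v α : Fin (n+1) → ℝ)
    (hort : α ⬝ᵥ v = 1) :
    ∃ (g : Matrix.SpecialLinearGroup (Fin (n+1)) ℝ),
      (g : Matrix (Fin (n+1)) (Fin (n+1)) ℝ) *ᵥ v = Pi.single 0 1 ∧
      (g : Matrix (Fin (n+1)) (Fin (n+1)) ℝ) 0 = α := by
  classical
  have hv : v ≠ 0 := by
    intro h; rw [h, dotProduct_zero] at hort; exact absurd hort (by norm_num)
  have hva : ⟪toE α, toE v⟫ = 1 := by rw [← dot_eq_inner]; exact hort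
  set K : Submodule ℝ (EuclideanSpace ℝ (Fin (n+1))) := ℝ ∙ (toE v) with hK
  have hK1 : finrank ℝ K = 1 := finrank_span_singleton (toE_ne_zero hv)
  have hEm : finrank ℝ (EuclideanSpace ℝ (Fin (n+1))) = n + 1 := finrank_euclideanSpace_fin
  have hKo : finrank ℝ Kᗮ = n := by
    have := K.finrank_add_finrank_orthogonal
    omega
  set d := finrank ℝ ↥Kᗮ with hd
  set b := finBasis ℝ ↥Kᗮ with hb
  set r : Fin (d + 1) → EuclideanSpace ℝ (Fin (n+1)) :=
    Fin.cons (toE α) (fun k => ((b k : ↥Kᗮ) : EuclideanSpace ℝ (Fin (n+1)))) with hr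
  have hbli : LinearIndependent ℝ (fun k : Fin d => ((b k : ↥Kᗮ) : EuclideanSpace ℝ (Fin (n+1)))) :=
    b.linearIndependent.map' Kᗮ.subtype (Submodule.ker_subtype _)
  have hspan_b : Submodule.span ℝ (Set.range fun k : Fin d =>
      ((b k : ↥Kᗮ) : EuclideanSpace ℝ (Fin (n+1)))) ≤ Kᗮ :=
    Submodule.span_le.2 (by rintro _ ⟨k, rfl⟩; exact (b k).2)
  have hli : LinearIndependent ℝ r := by
    rw [hr, linearIndependent_fin_cons]
    refine ⟨hbli, fun hmem => ?_⟩
    have h2 : toE α ∈ Kᗮ := hspan_b hmem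
    have h3 : ⟪toE v, toE α⟫ = 0 :=
      Submodule.mem_orthogonal_singleton_iff_inner_right.mp h2
    rw [real_inner_comm, hva] at h3
    exact one_ne_zero h3
  have hd1 : d + 1 = n + 1 := by omega
  set M : Matrix (Fin (n+1)) (Fin (n+1)) ℝ :=
    Matrix.of (fun i j => r (Fin.cast hd1.symm i) j) with hM
  have hli' : LinearIndependent ℝ (fun i : Fin (n+1) => M i) := by
    have := hli.comp (Fin.cast hd1.symm) (Fin.cast_injective _)
    exact this.map' (WithLp.linearEquiv 2 ℝ _).toLinearMap (LinearEquiv.ker _)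
  have hMu : IsUnit M := Matrix.linearIndependent_rows_iff_isUnit.mp hli'
  have hdet : M.det ≠ 0 := by
    intro h
    have := (Matrix.isUnit_iff_isUnit_det M).mp hMu
    rw [h] at this
    exact this.ne_zero rfl
  have hv1 : ((1 : Fin (n+1)) : ℕ) = 1 := by rw [Fin.val_one', Nat.mod_eq_of_lt (by omega)]
  have h01 : (0 : Fin (n+1)) ≠ 1 := by
    rw [Fin.ne_iff_vne, Fin.val_zero, hv1]; omega
  have hrdot : ∀ k : Fin (d + 1), dotProduct (r k) v = if k = 0 then 1 else 0 := by
    intro k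
    induction k using Fin.cases with
    | zero => rw [if_pos rfl, hr, Fin.cons_zero]; exact hort
    | succ j =>
      rw [if_neg (Fin.succ_ne_zero j)]
      rw [hr, Fin.cons_succ, dot_eq_inner]
      exact (Submodule.mem_orthogonal' _ _).mp (b j).2 _
        (Submodule.mem_span_singleton_self _)
  have hrowdot : ∀ i : Fin (n+1), dotProduct (M i) v = if i = 0 then 1 else 0 := by
    intro i
    have h6 : dotProduct (M i) v = dotProduct (r (Fin.cast hd1.symm i)) v := rfl
    rw [h6, hrdot]
    congr 1
    simp only [eq_iff_iff]
    constructor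
    · intro h; apply Fin.ext
      have := congrArg Fin.val h
      simpa using this
    · intro h; subst h; apply Fin.ext
      rw [Fin.coe_cast, Fin.val_zero, Fin.val_zero]
  set N := updateRow M 1 (M.det⁻¹ • M 1) with hN
  have hdetN : N.det = 1 := by
    rw [hN, det_updateRow_smul, updateRow_eq_self]
    field_simp
  refine ⟨⟨N, hdetN⟩, ?_, ?_⟩
  · funext i
    have h7 : (N *ᵥ v) i = dotProduct (N i) v := rfl
    rw [h7, Pi.single_apply]
    by_cases hi1 : i = 1
    · subst hi1
      rw [hN, updateRow_self, smul_dotProduct, hrowdot]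
      simp [Ne.symm h01]
    · rw [hN, updateRow_ne hi1, hrowdot]
  · show N 0 = α
    rw [hN, updateRow_ne h01]
    funext j
    show r (Fin.cast hd1.symm 0) j = α j
    have hc0 : Fin.cast hd1.symm (0 : Fin (n+1)) = 0 := by
      apply Fin.ext; rw [Fin.coe_cast, Fin.val_zero, Fin.val_zero]
    rw [hc0, hr, Fin.cons_zero]
    rfl

lemma exists_orth {n : ℕ} (hn : 1 ≤ n) (v : Fin (n+1) → ℝ) (hv : v ≠ 0) :
    ∃ β : Fin (n+1) → ℝ, β ≠ 0 ∧ β ⬝ᵥ v = 0 := by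
  classical
  obtain ⟨k, hk⟩ : ∃ k, v k ≠ 0 := by
    by_contra h
    push_neg at h
    exact hv (funext h)
  have h01 : (0 : Fin (n+1)) ≠ 1 := by
    rw [Fin.ne_iff_vne, Fin.val_zero, Fin.val_one', Nat.mod_eq_of_lt (by omega)]; omega
  set k' : Fin (n+1) := if k = 0 then 1 else 0 with hk'
  have hkk' : k' ≠ k := by
    rw [hk']
    by_cases h : k = 0
    · rw [if_pos h, h]; exact Ne.symm h01
    · rw [if_neg h]; exact Ne.symm h
  set β : Fin (n+1) → ℝ :=
    v k • (Pi.single k' 1 : Fin (n+1) → ℝ) - v k' • (Pi.single k 1 : Fin (n+1) → ℝ) with hβ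
  have hβk' : β k' = v k := by
    rw [hβ]
    simp [Pi.single_apply, hkk']
  refine ⟨β, ?_, ?_⟩
  · intro h
    rw [h] at hβk'
    exact hk (by simpa using hβk'.symm)
  · rw [hβ, sub_dotProduct, smul_dotProduct, smul_dotProduct,
      single_dotProduct, single_dotProduct]
    simp [smul_eq_mul]
    ring

/-- The vector space `ℝ^{n+1} × ℝ`, whose projectivization is `ℙ^{n+1}(ℝ)` with
points written `[v : s]`. -/
abbrev Vn (n : ℕ) := (Fin (n + 1) → ℝ) × ℝ

/-- The real projective space `ℙ^{n+1}(ℝ)`. -/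
abbrev Pt (n : ℕ) := Projectivization ℝ (Vn n)

/-- `X(ℝ) = {([v:s],[α:t]) : ⟨v,α⟩ = s·t} ⊆ ℙ^{n+1}(ℝ) × ℙ^{n+1}(ℝ)`. -/
def XR (n : ℕ) : Set (Pt n × Pt n) :=
  {P | ∃ (x y : Vn n) (hx : x ≠ 0) (hy : y ≠ 0),
    P.1 = Projectivization.mk ℝ x hx ∧ P.2 = Projectivization.mk ℝ y hy ∧
    (∑ i, x.1 i * y.1 i) = x.2 * y.2}

/-- The linear automorphism `(v, s) ↦ (g v, s)` of `ℝ^{n+1} × ℝ`. -/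
def slEquivFst (n : ℕ) (g : Matrix.SpecialLinearGroup (Fin (n + 1)) ℝ) :
    Vn n ≃ₗ[ℝ] Vn n :=
  (Matrix.SpecialLinearGroup.toLin' g).prodCongr (LinearEquiv.refl ℝ ℝ)

/-- The transpose of an element of `SL_{n+1}(ℝ)`. -/
def transposeSL (n : ℕ) (g : Matrix.SpecialLinearGroup (Fin (n + 1)) ℝ) :
    Matrix.SpecialLinearGroup (Fin (n + 1)) ℝ :=
  ⟨(g : Matrix (Fin (n + 1)) (Fin (n + 1)) ℝ)ᵀ, by
    rw [Matrix.det_transpose]; exact g.prop⟩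

/-- The linear automorphism `(α, t) ↦ ((gᵀ)⁻¹ α, t)` of `ℝ^{n+1} × ℝ`. -/
def slEquivSnd (n : ℕ) (g : Matrix.SpecialLinearGroup (Fin (n + 1)) ℝ) :
    Vn n ≃ₗ[ℝ] Vn n :=
  (Matrix.SpecialLinearGroup.toLin' ((transposeSL n g)⁻¹)).prodCongr (LinearEquiv.refl ℝ ℝ)

/-- The action of `G = SL_{n+1}(ℝ)` on `ℙ^{n+1}(ℝ) × ℙ^{n+1}(ℝ)`:
`g·([v:s],[α:t]) = ([gv : s], [(gᵀ)⁻¹α : t])`. -/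
def actP (n : ℕ) (g : Matrix.SpecialLinearGroup (Fin (n + 1)) ℝ) (P : Pt n × Pt n) :
    Pt n × Pt n :=
  (Projectivization.map (slEquivFst n g).toLinearMap
      (fun _ _ h => (slEquivFst n g).injective h) P.1,
   Projectivization.map (slEquivSnd n g).toLinearMap
      (fun _ _ h => (slEquivSnd n g).injective h) P.2)

lemma sndOne_ne (n : ℕ) (v : Fin (n + 1) → ℝ) : (v, (1 : ℝ)) ≠ (0 : Vn n) := by
  intro h
  simpa using congrArg Prod.snd h

lemma single_ne (n : ℕ) (i : Fin (n + 1)) :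
    ((Pi.single i 1 : Fin (n + 1) → ℝ), (0 : ℝ)) ≠ (0 : Vn n) := by
  intro h
  simpa using congrArg (fun p : Vn n => p.1 i) h

/-- The point `[v : 1]`. -/
def ptAffine (n : ℕ) (v : Fin (n + 1) → ℝ) : Pt n :=
  Projectivization.mk ℝ (v, 1) (sndOne_ne n v)

/-- The point `[eᵢ : 0]` (standard basis vector at infinity). -/
def ptInfty (n : ℕ) (i : Fin (n + 1)) : Pt n :=
  Projectivization.mk ℝ (Pi.single i 1, 0) (single_ne n i)

/-- `y₀ = ([e₁:1],[e₁:1])`. -/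
def y0 (n : ℕ) : Pt n × Pt n := (ptAffine n (Pi.single 0 1), ptAffine n (Pi.single 0 1))

/-- `y₁* = ([e₂:0],[e₁:1])`. -/
def y1s (n : ℕ) : Pt n × Pt n := (ptInfty n 1, ptAffine n (Pi.single 0 1))

/-- `y₁⁰ = ([e₂:0],[0:1])`. -/
def y10 (n : ℕ) : Pt n × Pt n := (ptInfty n 1, ptAffine n 0)

/-- `y₂* = ([e₁:1],[e₂:0])`. -/
def y2s (n : ℕ) : Pt n × Pt n := (ptAffine n (Pi.single 0 1), ptInfty n 1)

/-- `y₂⁰ = ([0:1],[e₂:0])`. -/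
def y20 (n : ℕ) : Pt n × Pt n := (ptAffine n 0, ptInfty n 1)

/-- `y₁₂ = ([e₁:0],[e₂:0])`. -/
def y12 (n : ℕ) : Pt n × Pt n := (ptInfty n 0, ptInfty n 1)

/-- The `G`-orbit of a point. -/
def orbitP (n : ℕ) (p : Pt n × Pt n) : Set (Pt n × Pt n) :=
  {q | ∃ g : Matrix.SpecialLinearGroup (Fin (n + 1)) ℝ, q = actP n g p}

/-- The six orbits of the six base points. -/
def orbFam (n : ℕ) : Fin 6 → Set (Pt n × Pt n) :=
  ![orbitP n (y0 n), orbitP n (y1s n), orbitP n (y10 n),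
    orbitP n (y2s n), orbitP n (y20 n), orbitP n (y12 n)]

-- action computation lemmas
variable {n : ℕ}

lemma slEquivFst_apply (g : Matrix.SpecialLinearGroup (Fin (n + 1)) ℝ) (x : Vn n) :
    slEquivFst n g x = ((g : Matrix (Fin (n+1)) (Fin (n+1)) ℝ) *ᵥ x.1, x.2) := rfl

lemma slEquivSnd_apply (g : Matrix.SpecialLinearGroup (Fin (n + 1)) ℝ) (x : Vn n) :
    slEquivSnd n g x = ((((transposeSL n g)⁻¹ : Matrix.SpecialLinearGroup (Fin (n+1)) ℝ) :
      Matrix (Fin (n+1)) (Fin (n+1)) ℝ) *ᵥ x.1, x.2) := rfl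

lemma actP_mk (g : Matrix.SpecialLinearGroup (Fin (n + 1)) ℝ) (x y : Vn n)
    (hx : x ≠ 0) (hy : y ≠ 0) :
    actP n g (Projectivization.mk ℝ x hx, Projectivization.mk ℝ y hy) =
      (Projectivization.mk ℝ (slEquivFst n g x) (fun h => hx ((slEquivFst n g).map_eq_zero_iff.mp h)),
       Projectivization.mk ℝ (slEquivSnd n g y) (fun h => hy ((slEquivSnd n g).map_eq_zero_iff.mp h))) := by
  unfold actP
  rw [Prod.mk.injEq]
  constructor
  · exact Projectivization.map_mk _ _ _ _
  · exact Projectivization.map_mk _ _ _ _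

lemma transposeSL_mul (g h : Matrix.SpecialLinearGroup (Fin (n + 1)) ℝ) :
    transposeSL n (g * h) = transposeSL n h * transposeSL n g := by
  apply Subtype.ext
  show ((g * h : Matrix.SpecialLinearGroup (Fin (n+1)) ℝ) :
    Matrix (Fin (n+1)) (Fin (n+1)) ℝ)ᵀ = _
  rw [Matrix.SpecialLinearGroup.coe_mul, Matrix.transpose_mul]
  rfl

lemma transposeSL_one : transposeSL n 1 = 1 := by
  apply Subtype.ext
  show ((1 : Matrix.SpecialLinearGroup (Fin (n+1)) ℝ) :
    Matrix (Fin (n+1)) (Fin (n+1)) ℝ)ᵀ = _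
  rw [Matrix.SpecialLinearGroup.coe_one, Matrix.transpose_one]

lemma actP_one (P : Pt n × Pt n) : actP n 1 P = P := by
  obtain ⟨P1, P2⟩ := P
  induction P1 using Projectivization.ind with | h x hx =>
  induction P2 using Projectivization.ind with | h y hy =>
  rw [actP_mk]
  have e1 : slEquivFst n 1 x = x := by
    rw [slEquivFst_apply, Matrix.SpecialLinearGroup.coe_one, Matrix.one_mulVec]
  have e2 : slEquivSnd n 1 y = y := by
    rw [slEquivSnd_apply, transposeSL_one, inv_one, Matrix.SpecialLinearGroup.coe_one,
      Matrix.one_mulVec]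
  rw [Prod.mk.injEq]
  constructor
  · apply Projectivization.mk_eq_mk_iff' ℝ _ _ _ _ |>.mpr
    exact ⟨1, by rw [one_smul, e1]⟩
  · apply Projectivization.mk_eq_mk_iff' ℝ _ _ _ _ |>.mpr
    exact ⟨1, by rw [one_smul, e2]⟩

lemma actP_mul (g h : Matrix.SpecialLinearGroup (Fin (n + 1)) ℝ) (P : Pt n × Pt n) :
    actP n (g * h) P = actP n g (actP n h P) := by
  obtain ⟨P1, P2⟩ := P
  induction P1 using Projectivization.ind with | h x hx =>
  induction P2 using Projectivization.ind with | h y hy =>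
  rw [actP_mk, actP_mk, actP_mk]
  have e1 : slEquivFst n (g * h) x = slEquivFst n g (slEquivFst n h x) := by
    rw [slEquivFst_apply, slEquivFst_apply, slEquivFst_apply,
      Matrix.SpecialLinearGroup.coe_mul, Matrix.mulVec_mulVec]
  have e2 : slEquivSnd n (g * h) y = slEquivSnd n g (slEquivSnd n h y) := by
    rw [slEquivSnd_apply, slEquivSnd_apply, slEquivSnd_apply]
    have : (transposeSL n (g * h))⁻¹ = (transposeSL n g)⁻¹ * (transposeSL n h)⁻¹ := by
      rw [transposeSL_mul, _root_.mul_inv_rev]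
    rw [this, Matrix.SpecialLinearGroup.coe_mul, Matrix.mulVec_mulVec]
  rw [Prod.mk.injEq]
  constructor
  · apply Projectivization.mk_eq_mk_iff' ℝ _ _ _ _ |>.mpr
    exact ⟨1, by rw [one_smul, e1]⟩
  · apply Projectivization.mk_eq_mk_iff' ℝ _ _ _ _ |>.mpr
    exact ⟨1, by rw [one_smul, e2]⟩

lemma mem_orbitP_of_actP_eq {g : Matrix.SpecialLinearGroup (Fin (n + 1)) ℝ}
    {P Q : Pt n × Pt n} (h : actP n g P = Q) : P ∈ orbitP n Q := by
  refine ⟨g⁻¹, ?_⟩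
  rw [← h, ← actP_mul, inv_mul_cancel, actP_one]

/-- Whether the last coordinate of (any representative of) a projective point vanishes. -/
def sZ (P : Pt n) : Prop := P.rep.2 = 0
/-- Whether the vector part of (any representative of) a projective point vanishes. -/
def vZ (P : Pt n) : Prop := P.rep.1 = 0

lemma sZ_mk (x : Vn n) (hx : x ≠ 0) : sZ (Projectivization.mk ℝ x hx) ↔ x.2 = 0 := by
  obtain ⟨a, ha⟩ := Projectivization.exists_smul_eq_mk_rep ℝ x hx
  unfold sZ
  rw [← ha]
  show (a : ℝ) * x.2 = 0 ↔ x.2 = 0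
  constructor
  · intro h
    rcases mul_eq_zero.mp h with h' | h'
    · exact absurd h' a.ne_zero
    · exact h'
  · intro h; rw [h, mul_zero]

lemma vZ_mk (x : Vn n) (hx : x ≠ 0) : vZ (Projectivization.mk ℝ x hx) ↔ x.1 = 0 := by
  obtain ⟨a, ha⟩ := Projectivization.exists_smul_eq_mk_rep ℝ x hx
  unfold vZ
  rw [← ha]
  show (a : ℝ) • x.1 = 0 ↔ x.1 = 0
  rw [smul_eq_zero]
  constructor
  · intro h
    exact h.resolve_left a.ne_zero
  · intro h; exact Or.inr h

/-- The invariant profile of a pair of projective points. -/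
def quad (P : Pt n × Pt n) : Prop × Prop × Prop × Prop :=
  (sZ P.1, vZ P.1, sZ P.2, vZ P.2)

lemma quad_actP (g : Matrix.SpecialLinearGroup (Fin (n + 1)) ℝ) (P : Pt n × Pt n) :
    quad (actP n g P) = quad P := by
  obtain ⟨P1, P2⟩ := P
  induction P1 using Projectivization.ind with | h x hx =>
  induction P2 using Projectivization.ind with | h y hy =>
  rw [actP_mk]
  unfold quad
  simp only [sZ_mk, vZ_mk, slEquivFst_apply, slEquivSnd_apply]
  have e1 : ((g : Matrix (Fin (n+1)) (Fin (n+1)) ℝ) *ᵥ x.1 = 0) ↔ x.1 = 0 := by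
    constructor
    · intro h
      have h3 : ((g⁻¹ * g : Matrix.SpecialLinearGroup (Fin (n+1)) ℝ) :
          Matrix (Fin (n+1)) (Fin (n+1)) ℝ) *ᵥ x.1 = 0 := by
        rw [Matrix.SpecialLinearGroup.coe_mul, ← Matrix.mulVec_mulVec, h, Matrix.mulVec_zero]
      rwa [inv_mul_cancel, Matrix.SpecialLinearGroup.coe_one, Matrix.one_mulVec] at h3
    · intro h; rw [h, Matrix.mulVec_zero]
  have e2 : ((((transposeSL n g)⁻¹ : Matrix.SpecialLinearGroup (Fin (n+1)) ℝ) :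
      Matrix (Fin (n+1)) (Fin (n+1)) ℝ) *ᵥ y.1 = 0) ↔ y.1 = 0 := by
    constructor
    · intro h
      have h3 : ((transposeSL n g * (transposeSL n g)⁻¹ : Matrix.SpecialLinearGroup (Fin (n+1)) ℝ) :
          Matrix (Fin (n+1)) (Fin (n+1)) ℝ) *ᵥ y.1 = 0 := by
        rw [Matrix.SpecialLinearGroup.coe_mul, ← Matrix.mulVec_mulVec, h, Matrix.mulVec_zero]
      rwa [mul_inv_cancel, Matrix.SpecialLinearGroup.coe_one, Matrix.one_mulVec] at h3
    · intro h; rw [h, Matrix.mulVec_zero]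
  rw [Prod.mk.injEq, Prod.mk.injEq, Prod.mk.injEq]
  exact ⟨rfl, propext e1, rfl, propext e2⟩

lemma quad_orbit {P Q : Pt n × Pt n} (h : Q ∈ orbitP n P) : quad Q = quad P := by
  obtain ⟨g, rfl⟩ := h
  exact quad_actP g P

lemma transpose_mulVec_single (M : Matrix (Fin (n+1)) (Fin (n+1)) ℝ) (j : Fin (n+1)) :
    Mᵀ *ᵥ Pi.single j 1 = M j := by
  funext i
  show dotProduct (Mᵀ i) (Pi.single j 1) = M j i
  rw [dotProduct_single]
  simp [Matrix.transpose_apply]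

lemma transposeSL_inv (g : Matrix.SpecialLinearGroup (Fin (n + 1)) ℝ) :
    transposeSL n g⁻¹ = (transposeSL n g)⁻¹ := by
  have h : transposeSL n g⁻¹ * transposeSL n g = 1 := by
    rw [← transposeSL_mul, mul_inv_cancel, transposeSL_one]
  exact eq_inv_of_mul_eq_one_left h

lemma transposeSL_transposeSL (g : Matrix.SpecialLinearGroup (Fin (n + 1)) ℝ) :
    transposeSL n (transposeSL n g) = g := by
  apply Subtype.ext
  show ((transposeSL n g : Matrix.SpecialLinearGroup (Fin (n+1)) ℝ) :
    Matrix (Fin (n+1)) (Fin (n+1)) ℝ)ᵀ = _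
  show ((g : Matrix (Fin (n+1)) (Fin (n+1)) ℝ)ᵀ)ᵀ = _
  rw [Matrix.transpose_transpose]

lemma rowInv (g : Matrix.SpecialLinearGroup (Fin (n + 1)) ℝ) (j : Fin (n+1))
    (α : Fin (n+1) → ℝ) (c : ℝ) (hc : c ≠ 0)
    (h : (g : Matrix (Fin (n+1)) (Fin (n+1)) ℝ) j = c • α) :
    (((transposeSL n g)⁻¹ : Matrix.SpecialLinearGroup (Fin (n+1)) ℝ) :
      Matrix (Fin (n+1)) (Fin (n+1)) ℝ) *ᵥ α = c⁻¹ • (Pi.single j 1 : Fin (n+1) → ℝ) := by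
  set B := (((transposeSL n g)⁻¹ : Matrix.SpecialLinearGroup (Fin (n+1)) ℝ) :
      Matrix (Fin (n+1)) (Fin (n+1)) ℝ) with hB
  have h1 : (transposeSL n g : Matrix.SpecialLinearGroup (Fin (n+1)) ℝ).val *ᵥ (Pi.single j 1 : Fin (n+1) → ℝ)
      = c • α := by
    show (g : Matrix (Fin (n+1)) (Fin (n+1)) ℝ)ᵀ *ᵥ (Pi.single j 1 : Fin (n+1) → ℝ) = c • α
    rw [transpose_mulVec_single, h]
  have h2 : B *ᵥ (c • α) = (Pi.single j 1 : Fin (n+1) → ℝ) := by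
    rw [← h1, Matrix.mulVec_mulVec, ← Matrix.SpecialLinearGroup.coe_mul,
      inv_mul_cancel, Matrix.SpecialLinearGroup.coe_one, Matrix.one_mulVec]
  have h3 : B *ᵥ (c • α) = c • (B *ᵥ α) := by rw [Matrix.mulVec_smul]
  rw [h3] at h2
  calc B *ᵥ α = c⁻¹ • (c • (B *ᵥ α)) := by rw [smul_smul, inv_mul_cancel₀ hc, one_smul]
  _ = c⁻¹ • (Pi.single j 1 : Fin (n+1) → ℝ) := by rw [h2]

lemma mk_eq_of_smul {u w : Vn n} (hu : u ≠ 0) (hw : w ≠ 0) (a : ℝ) (h : a • w = u) :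
    Projectivization.mk ℝ u hu = Projectivization.mk ℝ w hw :=
  (Projectivization.mk_eq_mk_iff' ℝ _ _ hu hw).mpr ⟨a, h⟩

lemma dot_act (g : Matrix.SpecialLinearGroup (Fin (n + 1)) ℝ) (u w : Fin (n+1) → ℝ) :
    dotProduct ((g : Matrix (Fin (n+1)) (Fin (n+1)) ℝ) *ᵥ u)
      ((((transposeSL n g)⁻¹ : Matrix.SpecialLinearGroup (Fin (n+1)) ℝ) :
        Matrix (Fin (n+1)) (Fin (n+1)) ℝ) *ᵥ w) = dotProduct u w := by
  set B := (((transposeSL n g)⁻¹ : Matrix.SpecialLinearGroup (Fin (n+1)) ℝ) :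
      Matrix (Fin (n+1)) (Fin (n+1)) ℝ) with hB
  have h1 : (g : Matrix (Fin (n+1)) (Fin (n+1)) ℝ) *ᵥ u =
      Matrix.vecMul u (g : Matrix (Fin (n+1)) (Fin (n+1)) ℝ)ᵀ := by
    rw [Matrix.vecMul_transpose]
  rw [h1, dotProduct_mulVec, Matrix.vecMul_vecMul]
  have h2 : (g : Matrix (Fin (n+1)) (Fin (n+1)) ℝ)ᵀ * B = 1 := by
    show ((transposeSL n g : Matrix.SpecialLinearGroup (Fin (n+1)) ℝ) :
      Matrix (Fin (n+1)) (Fin (n+1)) ℝ) * B = 1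
    rw [hB, ← Matrix.SpecialLinearGroup.coe_mul, mul_inv_cancel,
      Matrix.SpecialLinearGroup.coe_one]
  rw [h2, Matrix.vecMul_one]

lemma actP_mem_XR (g : Matrix.SpecialLinearGroup (Fin (n + 1)) ℝ) {P : Pt n × Pt n}
    (hP : P ∈ XR n) : actP n g P ∈ XR n := by
  obtain ⟨x, y, hx, hy, h1, h2, hsum⟩ := hP
  have hP' : P = (Projectivization.mk ℝ x hx, Projectivization.mk ℝ y hy) := Prod.ext h1 h2
  rw [hP', actP_mk]
  refine ⟨slEquivFst n g x, slEquivSnd n g y, _, _, rfl, rfl, ?_⟩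
  show dotProduct (slEquivFst n g x).1 (slEquivSnd n g y).1
    = (slEquivFst n g x).2 * (slEquivSnd n g y).2
  rw [slEquivFst_apply, slEquivSnd_apply]
  show dotProduct _ _ = x.2 * y.2
  rw [dot_act]
  exact hsum

lemma one_Fin_ne_zero (hn : 1 ≤ n) : (1 : Fin (n+1)) ≠ 0 := by
  rw [Fin.ne_iff_vne, Fin.val_zero, Fin.val_one', Nat.mod_eq_of_lt (by omega)]
  omega

lemma single_sum_zero (hn : 1 ≤ n) :
    dotProduct (Pi.single 1 1 : Fin (n+1) → ℝ) (Pi.single 0 1 : Fin (n+1) → ℝ) = 0 := by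
  rw [single_dotProduct]
  simp [Pi.single_apply, one_Fin_ne_zero hn]

lemma y0_mem : y0 n ∈ XR n := by
  refine ⟨(Pi.single 0 1, 1), (Pi.single 0 1, 1), sndOne_ne n _, sndOne_ne n _, rfl, rfl, ?_⟩
  show dotProduct (Pi.single 0 1 : Fin (n+1) → ℝ) (Pi.single 0 1 : Fin (n+1) → ℝ) = 1 * 1
  rw [single_dotProduct]
  simp

lemma y1s_mem (hn : 1 ≤ n) : y1s n ∈ XR n := by
  refine ⟨(Pi.single 1 1, 0), (Pi.single 0 1, 1), single_ne n _, sndOne_ne n _, rfl, rfl, ?_⟩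
  show dotProduct (Pi.single 1 1 : Fin (n+1) → ℝ) (Pi.single 0 1 : Fin (n+1) → ℝ) = 0 * 1
  rw [single_sum_zero hn, zero_mul]

lemma y10_mem (hn : 1 ≤ n) : y10 n ∈ XR n := by
  refine ⟨(Pi.single 1 1, 0), (0, 1), single_ne n _, sndOne_ne n _, rfl, rfl, ?_⟩
  show dotProduct (Pi.single 1 1 : Fin (n+1) → ℝ) (0 : Fin (n+1) → ℝ) = 0 * 1
  rw [dotProduct_zero, zero_mul]

lemma y2s_mem (hn : 1 ≤ n) : y2s n ∈ XR n := by
  refine ⟨(Pi.single 0 1, 1), (Pi.single 1 1, 0), sndOne_ne n _, single_ne n _, rfl, rfl, ?_⟩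
  show dotProduct (Pi.single 0 1 : Fin (n+1) → ℝ) (Pi.single 1 1 : Fin (n+1) → ℝ) = 1 * 0
  rw [single_dotProduct]
  simp [Pi.single_apply, Ne.symm (one_Fin_ne_zero hn)]

lemma y20_mem (hn : 1 ≤ n) : y20 n ∈ XR n := by
  refine ⟨(0, 1), (Pi.single 1 1, 0), sndOne_ne n _, single_ne n _, rfl, rfl, ?_⟩
  show dotProduct (0 : Fin (n+1) → ℝ) (Pi.single 1 1 : Fin (n+1) → ℝ) = 1 * 0
  rw [zero_dotProduct, mul_zero]

lemma y12_mem (hn : 1 ≤ n) : y12 n ∈ XR n := by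
  refine ⟨(Pi.single 0 1, 0), (Pi.single 1 1, 0), single_ne n _, single_ne n _, rfl, rfl, ?_⟩
  show dotProduct (Pi.single 0 1 : Fin (n+1) → ℝ) (Pi.single 1 1 : Fin (n+1) → ℝ) = 0 * 0
  rw [single_dotProduct]
  simp [Pi.single_apply, Ne.symm (one_Fin_ne_zero hn)]

lemma sZ_ptAffine (v : Fin (n+1) → ℝ) : sZ (ptAffine n v) = False :=
  eq_false (by rw [ptAffine, sZ_mk]; exact one_ne_zero)

lemma sZ_ptInfty (i : Fin (n+1)) : sZ (ptInfty n i) = True :=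
  eq_true (by rw [ptInfty, sZ_mk])

lemma vZ_ptInfty (i : Fin (n+1)) : vZ (ptInfty n i) = False :=
  eq_false (by
    rw [ptInfty, vZ_mk]
    intro h
    simpa using congrFun h i)

lemma vZ_ptAffine_zero : vZ (ptAffine n 0) = True :=
  eq_true (by rw [ptAffine, vZ_mk])

lemma vZ_ptAffine_single : vZ (ptAffine n (Pi.single 0 1)) = False :=
  eq_false (by
    rw [ptAffine, vZ_mk]
    intro h
    simpa using congrFun h 0)

lemma quad_y0 : quad (y0 n) = (False, False, False, False) := by
  unfold quad y0
  simp only [sZ_ptAffine, vZ_ptAffine_single, sZ_ptInfty, vZ_ptInfty, vZ_ptAffine_zero]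

lemma quad_y1s : quad (y1s n) = (True, False, False, False) := by
  unfold quad y1s
  simp only [sZ_ptAffine, vZ_ptAffine_single, sZ_ptInfty, vZ_ptInfty, vZ_ptAffine_zero]

lemma quad_y10 : quad (y10 n) = (True, False, False, True) := by
  unfold quad y10
  simp only [sZ_ptAffine, vZ_ptAffine_single, sZ_ptInfty, vZ_ptInfty, vZ_ptAffine_zero]

lemma quad_y2s : quad (y2s n) = (False, False, True, False) := by
  unfold quad y2s
  simp only [sZ_ptAffine, vZ_ptAffine_single, sZ_ptInfty, vZ_ptInfty, vZ_ptAffine_zero]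

lemma quad_y20 : quad (y20 n) = (False, True, True, False) := by
  unfold quad y20
  simp only [sZ_ptAffine, vZ_ptAffine_single, sZ_ptInfty, vZ_ptInfty, vZ_ptAffine_zero]

lemma quad_y12 : quad (y12 n) = (True, False, True, False) := by
  unfold quad y12
  simp only [sZ_ptAffine, vZ_ptAffine_single, sZ_ptInfty, vZ_ptInfty, vZ_ptAffine_zero]

lemma smul_pair (a : ℝ) (w1 : Fin (n+1) → ℝ) (w2 : ℝ) :
    a • ((w1, w2) : Vn n) = (a • w1, a * w2) := rfl


/-- `X(ℝ)` is the disjoint union of the six `G`-orbits of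
`y₀, y₁*, y₁⁰, y₂*, y₂⁰, y₁₂`. -/
theorem statement6 (n : ℕ) (hn : 1 ≤ n) :
    (⋃ i, orbFam n i) = XR n ∧
    (∀ i j : Fin 6, i ≠ j → Disjoint (orbFam n i) (orbFam n j)) := by
  constructor
  · apply Set.Subset.antisymm
    · apply Set.iUnion_subset
      intro i
      fin_cases i
      · rintro q ⟨g, rfl⟩; exact actP_mem_XR g y0_mem
      · rintro q ⟨g, rfl⟩; exact actP_mem_XR g (y1s_mem hn)
      · rintro q ⟨g, rfl⟩; exact actP_mem_XR g (y10_mem hn)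
      · rintro q ⟨g, rfl⟩; exact actP_mem_XR g (y2s_mem hn)
      · rintro q ⟨g, rfl⟩; exact actP_mem_XR g (y20_mem hn)
      · rintro q ⟨g, rfl⟩; exact actP_mem_XR g (y12_mem hn)
    · rintro P ⟨x, y, hx, hy, h1, h2, hsum⟩
      have hP' : P = (Projectivization.mk ℝ x hx, Projectivization.mk ℝ y hy) := Prod.ext h1 h2
      obtain ⟨v, s⟩ := x
      obtain ⟨α, t⟩ := y
      have hd : dotProduct v α = s * t := hsum
      rw [Set.mem_iUnion]
      by_cases hs : s = 0
      · subst hs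
        rw [zero_mul] at hd
        have hv : v ≠ 0 := fun h => hx (Prod.mk_eq_zero.mpr ⟨h, rfl⟩)
        by_cases ht : t = 0
        · -- y12 case
          subst ht
          have hα : α ≠ 0 := fun h => hy (Prod.mk_eq_zero.mpr ⟨h, rfl⟩)
          have hort : dotProduct α v = 0 := by rw [dotProduct_comm]; exact hd
          obtain ⟨g, c, hc, hg1, hg2⟩ := master hn v α hv hα hort
          have hB := rowInv g 1 α c hc hg2
          refine ⟨5, ?_⟩
          show P ∈ orbitP n (y12 n)
          apply mem_orbitP_of_actP_eq (g := g)
          rw [hP', actP_mk]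
          unfold y12 ptInfty
          rw [Prod.mk.injEq]
          constructor
          · apply mk_eq_of_smul _ _ 1
            rw [one_smul, slEquivFst_apply]
            exact Prod.ext hg1.symm rfl
          · apply mk_eq_of_smul _ _ c⁻¹
            rw [slEquivSnd_apply, smul_pair]
            exact Prod.ext hB.symm (mul_zero _)
        · -- s = 0, t ≠ 0
          by_cases hα : α = 0
          · -- y10 case
            subst hα
            obtain ⟨β, hβ0, hβv⟩ := exists_orth hn v hv
            have hort : dotProduct v β = 0 := by rw [dotProduct_comm]; exact hβv
            obtain ⟨g, c, hc, hg1, hg2⟩ := master hn β v hβ0 hv hort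
            have hB := rowInv g 1 v c hc hg2
            refine ⟨2, ?_⟩
            show P ∈ orbitP n (y10 n)
            apply mem_orbitP_of_actP_eq (g := (transposeSL n g)⁻¹)
            rw [hP', actP_mk]
            unfold y10 ptInfty ptAffine
            rw [Prod.mk.injEq]
            constructor
            · apply mk_eq_of_smul _ _ c⁻¹
              rw [slEquivFst_apply, smul_pair]
              exact Prod.ext hB.symm (mul_zero _)
            · apply mk_eq_of_smul _ _ t
              rw [slEquivSnd_apply, smul_pair]
              refine Prod.ext ?_ (mul_one _)
              rw [Matrix.mulVec_zero, smul_zero]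
          · -- y1s case
            have hα' : (t⁻¹ • α : Fin (n+1) → ℝ) ≠ 0 := smul_ne_zero (inv_ne_zero ht) hα
            have hort : dotProduct v (t⁻¹ • α) = 0 := by
              rw [dotProduct_smul, hd, smul_zero]
            obtain ⟨g, c, hc, hg1, hg2⟩ := master hn (t⁻¹ • α) v hα' hv hort
            have hB := rowInv g 1 v c hc hg2
            have htr : (transposeSL n ((transposeSL n g)⁻¹))⁻¹ = g := by
              rw [transposeSL_inv, transposeSL_transposeSL, inv_inv]
            refine ⟨1, ?_⟩
            show P ∈ orbitP n (y1s n)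
            apply mem_orbitP_of_actP_eq (g := (transposeSL n g)⁻¹)
            rw [hP', actP_mk]
            unfold y1s ptInfty ptAffine
            rw [Prod.mk.injEq]
            constructor
            · apply mk_eq_of_smul _ _ c⁻¹
              rw [slEquivFst_apply, smul_pair]
              exact Prod.ext hB.symm (mul_zero _)
            · apply mk_eq_of_smul _ _ t
              rw [slEquivSnd_apply, smul_pair, htr]
              refine Prod.ext ?_ (mul_one _)
              have hα2 : α = t • (t⁻¹ • α) := by
                rw [smul_smul, mul_inv_cancel₀ ht, one_smul]
              rw [hα2, Matrix.mulVec_smul, hg1]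
      · -- s ≠ 0
        have hv' : v = s • (s⁻¹ • v) := by rw [smul_smul, mul_inv_cancel₀ hs, one_smul]
        by_cases ht : t = 0
        · -- t = 0
          subst ht
          rw [mul_zero] at hd
          have hα : α ≠ 0 := fun h => hy (Prod.mk_eq_zero.mpr ⟨h, rfl⟩)
          by_cases hvz : v = 0
          · -- y20 case
            subst hvz
            obtain ⟨β, hβ0, hβα⟩ := exists_orth hn α hα
            have hort : dotProduct α β = 0 := by rw [dotProduct_comm]; exact hβα
            obtain ⟨g, c, hc, hg1, hg2⟩ := master hn β α hβ0 hα hort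
            have hB := rowInv g 1 α c hc hg2
            refine ⟨4, ?_⟩
            show P ∈ orbitP n (y20 n)
            apply mem_orbitP_of_actP_eq (g := g)
            rw [hP', actP_mk]
            unfold y20 ptInfty ptAffine
            rw [Prod.mk.injEq]
            constructor
            · apply mk_eq_of_smul _ _ s
              rw [slEquivFst_apply, smul_pair]
              refine Prod.ext ?_ (mul_one _)
              rw [Matrix.mulVec_zero, smul_zero]
            · apply mk_eq_of_smul _ _ c⁻¹
              rw [slEquivSnd_apply, smul_pair]
              exact Prod.ext hB.symm (mul_zero _)
          · -- y2s case
            have hv1 : (s⁻¹ • v : Fin (n+1) → ℝ) ≠ 0 := smul_ne_zero (inv_ne_zero hs) hvz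
            have hort : dotProduct α (s⁻¹ • v) = 0 := by
              rw [dotProduct_smul, dotProduct_comm, hd, smul_zero]
            obtain ⟨g, c, hc, hg1, hg2⟩ := master hn (s⁻¹ • v) α hv1 hα hort
            have hB := rowInv g 1 α c hc hg2
            refine ⟨3, ?_⟩
            show P ∈ orbitP n (y2s n)
            apply mem_orbitP_of_actP_eq (g := g)
            rw [hP', actP_mk]
            unfold y2s ptInfty ptAffine
            rw [Prod.mk.injEq]
            constructor
            · apply mk_eq_of_smul _ _ s
              rw [slEquivFst_apply, smul_pair]
              refine Prod.ext ?_ (mul_one _)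
              rw [hv', Matrix.mulVec_smul, hg1]
            · apply mk_eq_of_smul _ _ c⁻¹
              rw [slEquivSnd_apply, smul_pair]
              exact Prod.ext hB.symm (mul_zero _)
        · -- y0 case : s ≠ 0, t ≠ 0
          have hα2 : α = t • (t⁻¹ • α) := by rw [smul_smul, mul_inv_cancel₀ ht, one_smul]
          have hort : dotProduct (t⁻¹ • α) (s⁻¹ • v) = 1 := by
            rw [smul_dotProduct, dotProduct_smul, dotProduct_comm, hd]
            simp only [smul_eq_mul]
            field_simp
          obtain ⟨g, hg1, hg2⟩ := masterOne hn (s⁻¹ • v) (t⁻¹ • α) hort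
          have hB := rowInv g 0 (t⁻¹ • α) 1 one_ne_zero (by rw [one_smul]; exact hg2)
          rw [inv_one, one_smul] at hB
          refine ⟨0, ?_⟩
          show P ∈ orbitP n (y0 n)
          apply mem_orbitP_of_actP_eq (g := g)
          rw [hP', actP_mk]
          unfold y0 ptAffine
          rw [Prod.mk.injEq]
          constructor
          · apply mk_eq_of_smul _ _ s
            rw [slEquivFst_apply, smul_pair]
            refine Prod.ext ?_ (mul_one _)
            rw [hv', Matrix.mulVec_smul, hg1]
          · apply mk_eq_of_smul _ _ t
            rw [slEquivSnd_apply, smul_pair]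
            refine Prod.ext ?_ (mul_one _)
            rw [hα2, Matrix.mulVec_smul, hB]
  · intro i j hij
    rw [Set.disjoint_left]
    intro q hqi hqj
    fin_cases i <;> fin_cases j <;>
      first
        | exact absurd rfl hij
        | (have e := (quad_orbit hqi).symm.trans (quad_orbit hqj)
           simp only [quad_y0, quad_y1s, quad_y10, quad_y2s, quad_y20, quad_y12] at e
           simp [Prod.ext_iff, eq_iff_iff] at e)

end
end

section
/- The subset U(ℝ) := {([v:1],[α:1]) : v, α ∈ ℝ^{n+1} with ⟨v,α⟩ = 1} of X(ℝ) is connected and dense in X(ℝ) with respect to the analytic (Euclidean) topology. -/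
open Matrix

noncomputable section

/-- The analytic (Euclidean) topology on `ℙ^{n+1}(ℝ)`: the quotient topology of the
Euclidean topology on `(ℝ^{n+1} × ℝ) \ {0}`. -/
instance (n : ℕ) : TopologicalSpace (Pt n) :=
  inferInstanceAs (TopologicalSpace (Quotient (projectivizationSetoid ℝ (Vn n))))

/-- `U(ℝ) = {([v:1],[α:1]) : ⟨v,α⟩ = 1}`. -/
def UR (n : ℕ) : Set (Pt n × Pt n) :=
  {P | ∃ v α : Fin (n + 1) → ℝ, (∑ i, v i * α i) = 1 ∧
    P = (Projectivization.mk ℝ (v, 1) (sndOne_ne n v),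
         Projectivization.mk ℝ (α, 1) (sndOne_ne n α))}

namespace Statement7Aux

open Filter Topology

variable {n : ℕ}



def dot (v w : Fin (n + 1) → ℝ) : ℝ := ∑ i, v i * w i

lemma dot_comm (v w : Fin (n + 1) → ℝ) : dot v w = dot w v := by
  simp [dot, mul_comm]

lemma dot_smul_left (a : ℝ) (v w : Fin (n + 1) → ℝ) : dot (a • v) w = a * dot v w := by
  simp [dot, Finset.mul_sum, mul_assoc]

lemma dot_smul_right (a : ℝ) (v w : Fin (n + 1) → ℝ) : dot v (a • w) = a * dot v w := by
  simp [dot, Finset.mul_sum, mul_left_comm]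

lemma dot_add_left (u v w : Fin (n + 1) → ℝ) : dot (u + v) w = dot u w + dot v w := by
  simp [dot, add_mul, Finset.sum_add_distrib]

lemma dot_add_right (u v w : Fin (n + 1) → ℝ) : dot u (v + w) = dot u v + dot u w := by
  simp [dot, mul_add, Finset.sum_add_distrib]

lemma dot_self_ne_zero {v : Fin (n + 1) → ℝ} (hv : v ≠ 0) : dot v v ≠ 0 := by
  intro h
  apply hv
  funext i
  have := (Finset.sum_eq_zero_iff_of_nonneg (fun i _ => mul_self_nonneg (v i))).mp h i
    (Finset.mem_univ i)
  simpa [mul_self_eq_zero] using this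

lemma continuous_dot :
    Continuous (fun p : (Fin (n + 1) → ℝ) × (Fin (n + 1) → ℝ) => dot p.1 p.2) := by
  unfold dot
  exact continuous_finset_sum _ fun i _ =>
    ((continuous_apply i).comp continuous_fst).mul ((continuous_apply i).comp continuous_snd)

lemma continuous_mk :
    Continuous (fun x : {v : Vn n // v ≠ 0} => Projectivization.mk ℝ x.1 x.2) :=
  continuous_quotient_mk'

lemma tendsto_mk {x : ℕ → Vn n} (h : ∀ k, x k ≠ 0) {x₀ : Vn n} (h₀ : x₀ ≠ 0)
    (hx : Tendsto x atTop (𝓝 x₀)) :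
    Tendsto (fun k => Projectivization.mk ℝ (x k) (h k)) atTop
      (𝓝 (Projectivization.mk ℝ x₀ h₀)) := by
  have h1 : Tendsto (fun k => (⟨x k, h k⟩ : {v : Vn n // v ≠ 0})) atTop (𝓝 ⟨x₀, h₀⟩) := by
    rw [tendsto_subtype_rng]
    exact hx
  exact ((continuous_mk (n := n)).tendsto _).comp h1

lemma mem_closure_UR {p : Pt n × Pt n} (v α : ℕ → Fin (n + 1) → ℝ)
    (hsum : ∀ k, (∑ i, v k i * α k i) = 1)
    (h1 : Tendsto (fun k => Projectivization.mk ℝ (v k, 1) (sndOne_ne n (v k))) atTop (𝓝 p.1))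
    (h2 : Tendsto (fun k => Projectivization.mk ℝ (α k, 1) (sndOne_ne n (α k))) atTop (𝓝 p.2)) :
    p ∈ closure (UR n) := by
  refine mem_closure_of_tendsto (h1.prodMk_nhds h2) ?_
  exact Eventually.of_forall fun k => ⟨v k, α k, hsum k, rfl⟩


/-- Parametrization of `UR`. -/
def Phi (n : ℕ) (q : (Fin (n + 1) → ℝ) × (Fin (n + 1) → ℝ)) : Pt n × Pt n :=
  (Projectivization.mk ℝ (q.1, 1) (sndOne_ne n q.1),
   Projectivization.mk ℝ (q.2 + ((1 - dot q.1 q.2) / dot q.1 q.1) • q.1, 1)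
     (sndOne_ne n _))

lemma UR_eq_image :
    UR n = Phi n '' {q : (Fin (n + 1) → ℝ) × (Fin (n + 1) → ℝ) | q.1 ≠ 0} := by
  ext p
  constructor
  · rintro ⟨v, α, hsum, rfl⟩
    have hv : v ≠ 0 := by
      intro h
      rw [h] at hsum
      simpa using hsum
    refine ⟨(v, α), hv, ?_⟩
    have hc : (1 - dot v α) / dot v v = 0 := by
      have : dot v α = 1 := hsum
      simp [this]
    unfold Phi
    simp only [hc, zero_smul, add_zero]
  · rintro ⟨⟨v, w⟩, hv, rfl⟩
    have hvv : dot v v ≠ 0 := dot_self_ne_zero hv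
    refine ⟨v, w + ((1 - dot v w) / dot v v) • v, ?_, rfl⟩
    show dot v (w + ((1 - dot v w) / dot v v) • v) = 1
    rw [dot_add_right, dot_smul_right]
    field_simp
    ring


lemma continuousOn_Phi :
    ContinuousOn (Phi n) {q : (Fin (n + 1) → ℝ) × (Fin (n + 1) → ℝ) | q.1 ≠ 0} := by
  unfold Phi
  apply ContinuousOn.prodMk
  · apply Continuous.continuousOn
    have h1 : Continuous (fun q : (Fin (n + 1) → ℝ) × (Fin (n + 1) → ℝ) =>
        (⟨(q.1, 1), sndOne_ne n q.1⟩ : {v : Vn n // v ≠ 0})) :=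
      Continuous.subtype_mk (continuous_fst.prodMk continuous_const) _
    exact (continuous_mk (n := n)).comp h1
  · have h2 : ContinuousOn (fun q : (Fin (n + 1) → ℝ) × (Fin (n + 1) → ℝ) =>
        (⟨(q.2 + ((1 - dot q.1 q.2) / dot q.1 q.1) • q.1, 1),
          sndOne_ne n (q.2 + ((1 - dot q.1 q.2) / dot q.1 q.1) • q.1)⟩ :
          {v : Vn n // v ≠ 0})) {q | q.1 ≠ 0} := by
      apply (Topology.IsInducing.subtypeVal (t := {v : Vn n | v ≠ 0})).continuousOn_iff.mpr
      apply ContinuousOn.prodMk _ continuousOn_const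
      apply ContinuousOn.add continuous_snd.continuousOn
      apply ContinuousOn.fun_smul _ continuous_fst.continuousOn
      apply ContinuousOn.div
      · exact (continuous_const.sub continuous_dot).continuousOn
      · exact (continuous_dot.comp (continuous_fst.prodMk continuous_fst)).continuousOn
      · exact fun q hq => dot_self_ne_zero hq
    exact (continuous_mk (n := n)).comp_continuousOn h2

lemma isConnected_UR (hn : 1 ≤ n) : IsConnected (UR n) := by
  rw [UR_eq_image]
  apply IsConnected.image _ _ continuousOn_Phi
  have : {q : (Fin (n + 1) → ℝ) × (Fin (n + 1) → ℝ) | q.1 ≠ 0}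
      = ({(0 : Fin (n + 1) → ℝ)}ᶜ) ×ˢ (Set.univ) := by
    ext q; simp [Set.mem_prod]
  rw [this]
  apply IsConnected.prod _ isConnected_univ
  apply isConnected_compl_singleton_of_one_lt_rank
  rw [rank_fun']
  simp only [Fintype.card_fin]
  exact_mod_cast by omega


lemma fst_ne {v : Fin (n + 1) → ℝ} (hv : v ≠ 0) (s : ℝ) : ((v, s) : Vn n) ≠ 0 :=
  fun h => hv (congrArg Prod.fst h)

lemma snd_ne {s : ℝ} (hs : s ≠ 0) (w : Fin (n + 1) → ℝ) : ((w, s) : Vn n) ≠ 0 :=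
  fun h => hs (congrArg Prod.snd h)

lemma mk_eq_of_smul {x y : Vn n} (hx : x ≠ 0) (hy : y ≠ 0) (a : ℝ) (h : a • y = x) :
    Projectivization.mk ℝ x hx = Projectivization.mk ℝ y hy :=
  (Projectivization.mk_eq_mk_iff' ℝ x y hx hy).mpr ⟨a, h⟩

lemma tendsto_inv_m : Tendsto (fun k : ℕ => ((k : ℝ) + 1)⁻¹) atTop (𝓝 0) := by
  simpa [one_div] using tendsto_one_div_add_atTop_nhds_zero_nat (𝕜 := ℝ)

lemma caseA {x y : Vn n} (hx : x ≠ 0) (hy : y ≠ 0)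
    (hxy : (∑ i, x.1 i * y.1 i) = x.2 * y.2) (hxs : x.2 ≠ 0) (hys : y.2 ≠ 0) :
    (Projectivization.mk ℝ x hx, Projectivization.mk ℝ y hy) ∈ UR n := by
  refine ⟨x.2⁻¹ • x.1, y.2⁻¹ • y.1, ?_, ?_⟩
  · show dot (x.2⁻¹ • x.1) (y.2⁻¹ • y.1) = 1
    rw [dot_smul_left, dot_smul_right]
    have h : dot x.1 y.1 = x.2 * y.2 := hxy
    rw [h]
    field_simp
  · refine Prod.ext ?_ ?_
    · exact mk_eq_of_smul hx (sndOne_ne n _) x.2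
        (Prod.ext (by rw [Prod.smul_fst, smul_smul, mul_inv_cancel₀ hxs, one_smul])
          (by simp [hxs]))
    · exact mk_eq_of_smul hy (sndOne_ne n _) y.2
        (Prod.ext (by rw [Prod.smul_fst, smul_smul, mul_inv_cancel₀ hys, one_smul])
          (by simp [hys]))

lemma caseB {x y : Vn n} (hx : x ≠ 0) (hy : y ≠ 0)
    (hxy : (∑ i, x.1 i * y.1 i) = x.2 * y.2) (hxs : x.2 = 0) (hys : y.2 ≠ 0) :
    (Projectivization.mk ℝ x hx, Projectivization.mk ℝ y hy) ∈ closure (UR n) := by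
  obtain ⟨v, hvdef⟩ : ∃ v, v = x.1 := ⟨_, rfl⟩
  obtain ⟨α, hadef⟩ : ∃ α, α = y.2⁻¹ • y.1 := ⟨_, rfl⟩
  have hv : v ≠ 0 := fun h => hx (Prod.ext (hvdef ▸ h) hxs)
  have hvv : dot v v ≠ 0 := dot_self_ne_zero hv
  have hva : dot v α = 0 := by
    have h1 : dot x.1 y.1 = x.2 * y.2 := hxy
    rw [hadef, hvdef, dot_smul_right, h1, hxs]
    ring
  set m : ℕ → ℝ := fun k => (k : ℝ) + 1 with hmdef
  have hm : ∀ k, m k ≠ 0 := fun k => by positivity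
  apply mem_closure_UR (fun k => m k • v) (fun k => α + ((m k)⁻¹ * (dot v v)⁻¹) • v)
  · intro k
    show dot (m k • v) (α + ((m k)⁻¹ * (dot v v)⁻¹) • v) = 1
    rw [dot_smul_left, dot_add_right, dot_smul_right, hva]
    field_simp
    rw [zero_add, mul_one_div_cancel (hm k)]
  · -- first component
    have heq : (fun k => Projectivization.mk ℝ (m k • v, 1) (sndOne_ne n (m k • v)))
        = fun k => Projectivization.mk ℝ (v, (m k)⁻¹) (fst_ne hv _) := by
      funext k
      exact mk_eq_of_smul _ _ (m k)
        (Prod.ext (by rw [Prod.smul_fst]) (by simp [mul_inv_cancel₀ (hm k)]))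
    rw [heq]
    have hx0 : ((v, (0 : ℝ)) : Vn n) = x := Prod.ext (by rw [hvdef]) hxs.symm
    have hT : Tendsto (fun k => ((v, (m k)⁻¹) : Vn n)) atTop (𝓝 ((v, 0) : Vn n)) :=
      tendsto_const_nhds.prodMk_nhds tendsto_inv_m
    have := tendsto_mk (fun k => fst_ne hv ((m k)⁻¹)) (fst_ne hv 0) hT
    have hmk : Projectivization.mk ℝ ((v, (0:ℝ)) : Vn n) (fst_ne hv 0)
        = Projectivization.mk ℝ x hx := mk_eq_of_smul _ _ 1 (by rw [one_smul, hx0])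
    rw [hmk] at this
    exact this
  · -- second component
    have hT : Tendsto (fun k => ((α + ((m k)⁻¹ * (dot v v)⁻¹) • v, 1) : Vn n)) atTop
        (𝓝 ((α, 1) : Vn n)) := by
      have h1 : Tendsto (fun k => α + ((m k)⁻¹ * (dot v v)⁻¹) • v) atTop (𝓝 α) := by
        have h2 : Tendsto (fun k => ((m k)⁻¹ * (dot v v)⁻¹ : ℝ)) atTop (𝓝 0) := by
          simpa using tendsto_inv_m.mul_const (dot v v)⁻¹
        have h3 : Tendsto (fun k : ℕ => ((m k)⁻¹ * (dot v v)⁻¹) • v) atTop (𝓝 ((0:ℝ) • v)) :=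
          h2.smul tendsto_const_nhds
        have := (tendsto_const_nhds (x := α) (f := atTop)).add h3
        simpa using this
      exact h1.prodMk_nhds tendsto_const_nhds
    have := tendsto_mk (fun k => sndOne_ne n _) (sndOne_ne n α) hT
    have hmk : Projectivization.mk ℝ ((α, (1:ℝ)) : Vn n) (sndOne_ne n α)
        = Projectivization.mk ℝ y hy := by
      refine (mk_eq_of_smul hy (sndOne_ne n α) y.2 ?_).symm
      refine Prod.ext ?_ (by simp [hys])
      rw [Prod.smul_fst, hadef, smul_smul, mul_inv_cancel₀ hys, one_smul]
      
    rw [hmk] at this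
    exact this


lemma caseD {x y : Vn n} (hx : x ≠ 0) (hy : y ≠ 0)
    (hxy : (∑ i, x.1 i * y.1 i) = x.2 * y.2) (hxs : x.2 = 0) (hys : y.2 = 0) :
    (Projectivization.mk ℝ x hx, Projectivization.mk ℝ y hy) ∈ closure (UR n) := by
  obtain ⟨v, hvdef⟩ : ∃ v, v = x.1 := ⟨_, rfl⟩
  obtain ⟨α, hadef⟩ : ∃ α, α = y.1 := ⟨_, rfl⟩
  have hv : v ≠ 0 := fun h => hx (Prod.ext (hvdef ▸ h) hxs)
  have hvv : dot v v ≠ 0 := dot_self_ne_zero hv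
  have hva : dot v α = 0 := by
    have h1 : dot x.1 y.1 = x.2 * y.2 := hxy
    rw [hadef, hvdef, h1, hxs]
    ring
  set m : ℕ → ℝ := fun k => (k : ℝ) + 1 with hmdef
  have hm : ∀ k, m k ≠ 0 := fun k => by positivity
  apply mem_closure_UR (fun k => m k • v)
    (fun k => m k • (α + ((m k)⁻¹ * (m k)⁻¹ * (dot v v)⁻¹) • v))
  · intro k
    show dot (m k • v) (m k • (α + ((m k)⁻¹ * (m k)⁻¹ * (dot v v)⁻¹) • v)) = 1
    rw [dot_smul_left, dot_smul_right, dot_add_right, dot_smul_right, hva]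
    field_simp
    ring
    rw [← mul_pow, mul_inv_cancel₀ (hm k), one_pow]
  · -- first component
    have heq : (fun k => Projectivization.mk ℝ (m k • v, 1) (sndOne_ne n (m k • v)))
        = fun k => Projectivization.mk ℝ (v, (m k)⁻¹) (fst_ne hv _) := by
      funext k
      exact mk_eq_of_smul _ _ (m k)
        (Prod.ext (by rw [Prod.smul_fst]) (by simp [mul_inv_cancel₀ (hm k)]))
    rw [heq]
    have hx0 : ((v, (0 : ℝ)) : Vn n) = x := Prod.ext (by rw [hvdef]) hxs.symm
    have hT : Tendsto (fun k => ((v, (m k)⁻¹) : Vn n)) atTop (𝓝 ((v, 0) : Vn n)) :=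
      tendsto_const_nhds.prodMk_nhds tendsto_inv_m
    have := tendsto_mk (fun k => fst_ne hv ((m k)⁻¹)) (fst_ne hv 0) hT
    have hmk : Projectivization.mk ℝ ((v, (0:ℝ)) : Vn n) (fst_ne hv 0)
        = Projectivization.mk ℝ x hx := mk_eq_of_smul _ _ 1 (by rw [one_smul, hx0])
    rw [hmk] at this
    exact this
  · -- second component
    have ha0 : α ≠ 0 := fun h => hy (Prod.ext (hadef ▸ h) hys)
    have heq : (fun k => Projectivization.mk ℝ
          (m k • (α + ((m k)⁻¹ * (m k)⁻¹ * (dot v v)⁻¹) • v), 1)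
          (sndOne_ne n (m k • (α + ((m k)⁻¹ * (m k)⁻¹ * (dot v v)⁻¹) • v))))
        = fun k => Projectivization.mk ℝ
            ((α + ((m k)⁻¹ * (m k)⁻¹ * (dot v v)⁻¹) • v, (m k)⁻¹) : Vn n)
            (snd_ne (inv_ne_zero (hm k)) _) := by
      funext k
      exact mk_eq_of_smul _ _ (m k)
        (Prod.ext (by rw [Prod.smul_fst]) (by simp [mul_inv_cancel₀ (hm k)]))
    rw [heq]
    have hy0 : ((α, (0 : ℝ)) : Vn n) = y := Prod.ext (by rw [hadef]) hys.symm
    have hT : Tendsto (fun k => ((α + ((m k)⁻¹ * (m k)⁻¹ * (dot v v)⁻¹) • v, (m k)⁻¹) : Vn n))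
        atTop (𝓝 ((α, 0) : Vn n)) := by
      refine Tendsto.prodMk_nhds ?_ tendsto_inv_m
      have h2 : Tendsto (fun k : ℕ => ((m k)⁻¹ * (m k)⁻¹ * (dot v v)⁻¹ : ℝ)) atTop (𝓝 0) := by
        simpa using (tendsto_inv_m.mul tendsto_inv_m).mul_const (dot v v)⁻¹
      have h3 : Tendsto (fun k : ℕ => ((m k)⁻¹ * (m k)⁻¹ * (dot v v)⁻¹) • v) atTop
          (𝓝 ((0:ℝ) • v)) := h2.smul tendsto_const_nhds
      have := (tendsto_const_nhds (x := α) (f := atTop)).add h3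
      simpa using this
    have := tendsto_mk (fun k => snd_ne (inv_ne_zero (hm k)) _) (fst_ne ha0 0) hT
    have hmk : Projectivization.mk ℝ ((α, (0:ℝ)) : Vn n) (fst_ne ha0 0)
        = Projectivization.mk ℝ y hy := mk_eq_of_smul _ _ 1 (by rw [one_smul, hy0])
    rw [hmk] at this
    exact this


lemma swap_UR : Prod.swap '' UR n = UR n := by
  have h : ∀ p ∈ UR n, Prod.swap p ∈ UR n := by
    rintro p ⟨v, α, hs, rfl⟩
    exact ⟨α, v, by rw [show (∑ i, α i * v i) = ∑ i, v i * α i from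
      Finset.sum_congr rfl fun i _ => mul_comm _ _]; exact hs, rfl⟩
  ext p
  constructor
  · rintro ⟨q, hq, rfl⟩
    exact h q hq
  · intro hp
    exact ⟨Prod.swap p, h p hp, Prod.swap_swap p⟩

lemma closure_swap {p : Pt n × Pt n} (h : Prod.swap p ∈ closure (UR n)) :
    p ∈ closure (UR n) := by
  have h2 : p ∈ Prod.swap '' closure (UR n) := ⟨Prod.swap p, h, Prod.swap_swap p⟩
  have h3 := image_closure_subset_closure_image (f := Prod.swap) continuous_swap h2
  rwa [swap_UR] at h3

end Statement7Aux

open Statement7Aux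

/-- `U(ℝ)` is a connected subset of `X(ℝ)` which is dense in `X(ℝ)` for the analytic
(Euclidean) topology. -/
theorem statement7 (n : ℕ) (hn : 1 ≤ n) :
    UR n ⊆ XR n ∧ IsConnected (UR n) ∧ XR n ⊆ closure (UR n) := by
  refine ⟨?_, isConnected_UR hn, ?_⟩
  · rintro p ⟨v, α, hsum, rfl⟩
    exact ⟨(v, 1), (α, 1), sndOne_ne n v, sndOne_ne n α, rfl, rfl, by simpa using hsum⟩
  · rintro p ⟨x, y, hx, hy, hp1, hp2, hxy⟩
    have hp : p = (Projectivization.mk ℝ x hx, Projectivization.mk ℝ y hy) := Prod.ext hp1 hp2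
    rw [hp]
    have hyx : (∑ i, y.1 i * x.1 i) = y.2 * x.2 := by
      rw [show (∑ i, y.1 i * x.1 i) = ∑ i, x.1 i * y.1 i from
        Finset.sum_congr rfl fun i _ => mul_comm _ _, hxy, mul_comm]
    by_cases hxs : x.2 = 0 <;> by_cases hys : y.2 = 0
    · exact caseD hx hy hxy hxs hys
    · exact caseB hx hy hxy hxs hys
    · exact closure_swap (caseB hy hx hyx hys hxs)
    · exact subset_closure (caseA hx hy hxy hxs hys)


end
end

section
/- X^{INC}(ℝ) is the disjoint union of the four G-orbits G·o, G·x₂, G·x₃, G·x₄ and the set D¹ ∪ D²; that is, these five sets are pairwise disjoint and their union is all of X^{INC}(ℝ). -/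
open Matrix

noncomputable section

/-- A sextuple `(L₁, L₂, L₃, P₁₂, P₁₃, P₂₃)` of linear subspaces of `ℝ³`. -/
structure TriangleConfig where
  L1 : Submodule ℝ (Fin 3 → ℝ)
  L2 : Submodule ℝ (Fin 3 → ℝ)
  L3 : Submodule ℝ (Fin 3 → ℝ)
  P12 : Submodule ℝ (Fin 3 → ℝ)
  P13 : Submodule ℝ (Fin 3 → ℝ)
  P23 : Submodule ℝ (Fin 3 → ℝ)

/-- The incidence variety `X^{INC}(ℝ)`: each `Lᵢ` is a line, each `P_{ij}` is a plane,
and `Lᵢ, Lⱼ ⊆ P_{ij}`. -/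
def XINC : Set TriangleConfig :=
  {c | Module.finrank ℝ c.L1 = 1 ∧ Module.finrank ℝ c.L2 = 1 ∧ Module.finrank ℝ c.L3 = 1 ∧
       Module.finrank ℝ c.P12 = 2 ∧ Module.finrank ℝ c.P13 = 2 ∧ Module.finrank ℝ c.P23 = 2 ∧
       c.L1 ≤ c.P12 ∧ c.L2 ≤ c.P12 ∧ c.L1 ≤ c.P13 ∧ c.L3 ≤ c.P13 ∧
       c.L2 ≤ c.P23 ∧ c.L3 ≤ c.P23}

/-- The coordinatewise action of `G = SL₃(ℝ)` on sextuples of subspaces. -/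
def actC (g : Matrix.SpecialLinearGroup (Fin 3) ℝ) (c : TriangleConfig) : TriangleConfig :=
  ⟨c.L1.map (Matrix.toLin' (g : Matrix (Fin 3) (Fin 3) ℝ)),
   c.L2.map (Matrix.toLin' (g : Matrix (Fin 3) (Fin 3) ℝ)),
   c.L3.map (Matrix.toLin' (g : Matrix (Fin 3) (Fin 3) ℝ)),
   c.P12.map (Matrix.toLin' (g : Matrix (Fin 3) (Fin 3) ℝ)),
   c.P13.map (Matrix.toLin' (g : Matrix (Fin 3) (Fin 3) ℝ)),
   c.P23.map (Matrix.toLin' (g : Matrix (Fin 3) (Fin 3) ℝ))⟩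

/-- The `G`-orbit of a configuration. -/
def orbitC (c : TriangleConfig) : Set TriangleConfig :=
  {c' | ∃ g : Matrix.SpecialLinearGroup (Fin 3) ℝ, c' = actC g c}

/-- The line `ℝ·v`. -/
def sp (v : Fin 3 → ℝ) : Submodule ℝ (Fin 3 → ℝ) := Submodule.span ℝ {v}

/-- The span `⟨v, w⟩`. -/
def sp2 (v w : Fin 3 → ℝ) : Submodule ℝ (Fin 3 → ℝ) := Submodule.span ℝ {v, w}

/-- Standard basis vector. -/
def sbv (i : Fin 3) : Fin 3 → ℝ := Pi.single i 1

/-- `o = (ℝe₁, ℝe₂, ℝe₃, ⟨e₁,e₂⟩, ⟨e₁,e₃⟩, ⟨e₂,e₃⟩)`. -/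
def basePt : TriangleConfig :=
  ⟨sp (sbv 0), sp (sbv 1), sp (sbv 2),
   sp2 (sbv 0) (sbv 1), sp2 (sbv 0) (sbv 2), sp2 (sbv 1) (sbv 2)⟩

/-- `x₂ = (ℝe₁, ℝe₁, ℝe₃, ⟨e₁,e₂⟩, ⟨e₁,e₃⟩, ⟨e₁,e₃⟩)`. -/
def basePt2 : TriangleConfig :=
  ⟨sp (sbv 0), sp (sbv 0), sp (sbv 2),
   sp2 (sbv 0) (sbv 1), sp2 (sbv 0) (sbv 2), sp2 (sbv 0) (sbv 2)⟩

/-- `x₃ = (ℝe₁, ℝe₂, ℝe₁, ⟨e₁,e₂⟩, ⟨e₁,e₃⟩, ⟨e₁,e₂⟩)`. -/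
def basePt3 : TriangleConfig :=
  ⟨sp (sbv 0), sp (sbv 1), sp (sbv 0),
   sp2 (sbv 0) (sbv 1), sp2 (sbv 0) (sbv 2), sp2 (sbv 0) (sbv 1)⟩

/-- `x₄ = (ℝe₁, ℝe₂, ℝe₂, ⟨e₁,e₂⟩, ⟨e₁,e₂⟩, ⟨e₂,e₃⟩)`. -/
def basePt4 : TriangleConfig :=
  ⟨sp (sbv 0), sp (sbv 1), sp (sbv 1),
   sp2 (sbv 0) (sbv 1), sp2 (sbv 0) (sbv 1), sp2 (sbv 1) (sbv 2)⟩

/-- `D¹ = {x ∈ X^{INC}(ℝ) : L₁ = L₂ = L₃}`. -/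
def D1 : Set TriangleConfig := {c ∈ XINC | c.L1 = c.L2 ∧ c.L2 = c.L3}

/-- `D² = {x ∈ X^{INC}(ℝ) : P₁₂ = P₁₃ = P₂₃}`. -/
def D2 : Set TriangleConfig := {c ∈ XINC | c.P12 = c.P13 ∧ c.P13 = c.P23}

/-- The five sets: the four orbits `G·o`, `G·x₂`, `G·x₃`, `G·x₄` and `D¹ ∪ D²`. -/
def pieces : Fin 5 → Set TriangleConfig :=
  ![orbitC basePt, orbitC basePt2, orbitC basePt3, orbitC basePt4, D1 ∪ D2]

/-! ### Auxiliary lemmas -/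

section Aux

lemma sp2_eqq (v w : Fin 3 → ℝ) : sp2 v w = sp v ⊔ sp w := by
  rw [sp2, sp, sp, ← Submodule.span_insert]

lemma sp_le_sp2_left (v w : Fin 3 → ℝ) : sp v ≤ sp2 v w := by
  rw [sp2_eqq]; exact le_sup_left

lemma sp_le_sp2_right (v w : Fin 3 → ℝ) : sp w ≤ sp2 v w := by
  rw [sp2_eqq]; exact le_sup_right

lemma sp_smul {c : ℝ} (hc : c ≠ 0) (v : Fin 3 → ℝ) : sp (c • v) = sp v :=
  Submodule.span_singleton_smul_eq (isUnit_iff_ne_zero.2 hc) v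

lemma sp2_smul {c : ℝ} (hc : c ≠ 0) (v w : Fin 3 → ℝ) : sp2 (c • v) w = sp2 v w := by
  rw [sp2_eqq, sp2_eqq, sp_smul hc]

lemma finrank_sp {v : Fin 3 → ℝ} (hv : v ≠ 0) : Module.finrank ℝ (sp v) = 1 :=
  finrank_span_singleton hv

lemma range_pair (v w : Fin 3 → ℝ) : Set.range ![v, w] = {v, w} := by
  ext x
  constructor
  · rintro ⟨i, rfl⟩; fin_cases i <;> simp
  · rintro (rfl | rfl)
    · exact ⟨0, rfl⟩
    · exact ⟨1, rfl⟩

lemma finrank_sp2 {v w : Fin 3 → ℝ} (h : LinearIndependent ℝ ![v, w]) :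
    Module.finrank ℝ (sp2 v w) = 2 := by
  have h2 := finrank_span_eq_card h
  rw [range_pair, Fintype.card_fin] at h2
  exact h2

lemma sp_mem_iff {v x : Fin 3 → ℝ} : x ∈ sp v ↔ ∃ a : ℝ, a • v = x := Submodule.mem_span_singleton

lemma sp_le_iff {v : Fin 3 → ℝ} {P : Submodule ℝ (Fin 3 → ℝ)} : sp v ≤ P ↔ v ∈ P :=
  Submodule.span_singleton_le_iff_mem v P

lemma pair_indep {v w : Fin 3 → ℝ} (hv : v ≠ 0) (hw : w ∉ sp v) : LinearIndependent ℝ ![v, w] := by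
  rw [LinearIndependent.pair_iff' hv]
  intro a ha
  exact hw (sp_mem_iff.2 ⟨a, ha⟩)

lemma lines_indep {v w : Fin 3 → ℝ} (hv : v ≠ 0) (hw : w ≠ 0) (h : sp v ≠ sp w) :
    LinearIndependent ℝ ![v, w] := by
  apply pair_indep hv
  intro hmem
  apply h
  exact (Submodule.eq_of_le_of_finrank_le (sp_le_iff.2 hmem)
    (by rw [finrank_sp hv, finrank_sp hw])).symm

lemma line_exists {S : Submodule ℝ (Fin 3 → ℝ)} (h : Module.finrank ℝ S = 1) :
    ∃ v : Fin 3 → ℝ, v ≠ 0 ∧ S = sp v := by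
  have hr : Module.rank ℝ S = 1 := Module.rank_eq_one_iff_finrank_eq_one.2 h
  obtain ⟨v, hvS, hv0, hle⟩ := (rank_submodule_eq_one_iff S).1 hr
  exact ⟨v, hv0, le_antisymm hle ((Submodule.span_singleton_le_iff_mem v S).2 hvS)⟩

lemma triple_indep {v0 v1 x : Fin 3 → ℝ} (h : LinearIndependent ℝ ![v0, v1])
    (hx : x ∉ sp2 v0 v1) : LinearIndependent ℝ ![x, v0, v1] := by
  have e : (![x, v0, v1] : Fin 3 → (Fin 3 → ℝ)) = Fin.cons x ![v0, v1] := by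
    funext i; fin_cases i <;> rfl
  rw [e, linearIndependent_fin_cons]
  exact ⟨h, by rwa [range_pair]⟩

def rot3 : Fin 3 ≃ Fin 3 := ⟨fun i => ![1, 2, 0] i, fun i => ![2, 0, 1] i, by decide, by decide⟩
def swp3 : Fin 3 ≃ Fin 3 := ⟨fun i => ![0, 2, 1] i, fun i => ![0, 2, 1] i, by decide, by decide⟩

lemma li_to_last {a b x : Fin 3 → ℝ} (h : LinearIndependent ℝ ![x, a, b]) :
    LinearIndependent ℝ ![a, b, x] := by
  have e : (![a, b, x] : Fin 3 → (Fin 3 → ℝ)) = ![x, a, b] ∘ rot3 := by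
    funext i; fin_cases i <;> simp [rot3]
  rw [e]
  exact (linearIndependent_equiv rot3).2 h

lemma li_to_mid {a b x : Fin 3 → ℝ} (h : LinearIndependent ℝ ![x, a, b]) :
    LinearIndependent ℝ ![a, x, b] := by
  have h' := li_to_last h
  have e : (![a, x, b] : Fin 3 → (Fin 3 → ℝ)) = ![a, b, x] ∘ swp3 := by
    funext i; fin_cases i <;> simp [swp3]
  rw [e]
  exact (linearIndependent_equiv swp3).2 h'

lemma plane_eq {v w : Fin 3 → ℝ} {P : Submodule ℝ (Fin 3 → ℝ)}
    (h : LinearIndependent ℝ ![v, w]) (hle : sp2 v w ≤ P) (hP : Module.finrank ℝ P = 2) :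
    sp2 v w = P :=
  Submodule.eq_of_le_of_finrank_le hle (by rw [hP, finrank_sp2 h])

lemma plane_eq2 {v w : Fin 3 → ℝ} {P : Submodule ℝ (Fin 3 → ℝ)}
    (h : LinearIndependent ℝ ![v, w]) (hle : P ≤ sp2 v w) (hP : Module.finrank ℝ P = 2) :
    P = sp2 v w :=
  Submodule.eq_of_le_of_finrank_le hle (by rw [hP, finrank_sp2 h])

lemma map_sp (f : (Fin 3 → ℝ) →ₗ[ℝ] (Fin 3 → ℝ)) (v : Fin 3 → ℝ) :
    (sp v).map f = sp (f v) := by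
  rw [sp, sp, Submodule.map_span, Set.image_singleton]

lemma map_sp2 (f : (Fin 3 → ℝ) →ₗ[ℝ] (Fin 3 → ℝ)) (v w : Fin 3 → ℝ) :
    (sp2 v w).map f = sp2 (f v) (f w) := by
  rw [sp2, sp2, Submodule.map_span, Set.image_pair]

/-! ### Standard basis facts -/

lemma sbv_ne (i : Fin 3) : sbv i ≠ 0 := by
  intro h
  have := congr_fun h i
  simp [sbv] at this

lemma sbv_not_mem {i j : Fin 3} (hij : i ≠ j) : sbv j ∉ sp (sbv i) := by
  rw [sp_mem_iff]
  rintro ⟨a, ha⟩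
  have := congr_fun ha j
  simp [sbv, Pi.single_apply, hij.symm] at this

lemma sbv_pair_indep {i j : Fin 3} (hij : i ≠ j) : LinearIndependent ℝ ![sbv i, sbv j] :=
  pair_indep (sbv_ne i) (sbv_not_mem hij)

lemma sp_sbv_ne {i j : Fin 3} (hij : i ≠ j) : sp (sbv i) ≠ sp (sbv j) := by
  intro h
  exact sbv_not_mem hij.symm (h ▸ Submodule.subset_span rfl)

lemma sbv_not_mem_sp2 {i j k : Fin 3} (hi : k ≠ i) (hj : k ≠ j) :
    sbv k ∉ sp2 (sbv i) (sbv j) := by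
  rw [sp2, Submodule.mem_span_pair]
  rintro ⟨a, b, hab⟩
  have := congr_fun hab k
  simp [sbv, Pi.single_apply, hi, hj] at this

lemma p_ne_12_13 : sp2 (sbv 0) (sbv 1) ≠ sp2 (sbv 0) (sbv 2) := by
  intro h
  have h1 : sbv 1 ∈ sp2 (sbv 0) (sbv 1) := Submodule.subset_span (by simp)
  rw [h] at h1
  exact sbv_not_mem_sp2 (by decide) (by decide) h1

lemma p_ne_12_23 : sp2 (sbv 0) (sbv 1) ≠ sp2 (sbv 1) (sbv 2) := by
  intro h
  have h1 : sbv 0 ∈ sp2 (sbv 0) (sbv 1) := Submodule.subset_span (by simp)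
  rw [h] at h1
  exact sbv_not_mem_sp2 (by decide) (by decide) h1

/-! ### Base points lie in `XINC` -/

lemma basePt_mem : basePt ∈ XINC :=
  ⟨finrank_sp (sbv_ne 0), finrank_sp (sbv_ne 1), finrank_sp (sbv_ne 2),
   finrank_sp2 (sbv_pair_indep (by decide)), finrank_sp2 (sbv_pair_indep (by decide)),
   finrank_sp2 (sbv_pair_indep (by decide)),
   sp_le_sp2_left _ _, sp_le_sp2_right _ _, sp_le_sp2_left _ _, sp_le_sp2_right _ _,
   sp_le_sp2_left _ _, sp_le_sp2_right _ _⟩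

lemma basePt2_mem : basePt2 ∈ XINC :=
  ⟨finrank_sp (sbv_ne 0), finrank_sp (sbv_ne 0), finrank_sp (sbv_ne 2),
   finrank_sp2 (sbv_pair_indep (by decide)), finrank_sp2 (sbv_pair_indep (by decide)),
   finrank_sp2 (sbv_pair_indep (by decide)),
   sp_le_sp2_left _ _, sp_le_sp2_left _ _, sp_le_sp2_left _ _, sp_le_sp2_right _ _,
   sp_le_sp2_left _ _, sp_le_sp2_right _ _⟩

lemma basePt3_mem : basePt3 ∈ XINC :=
  ⟨finrank_sp (sbv_ne 0), finrank_sp (sbv_ne 1), finrank_sp (sbv_ne 0),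
   finrank_sp2 (sbv_pair_indep (by decide)), finrank_sp2 (sbv_pair_indep (by decide)),
   finrank_sp2 (sbv_pair_indep (by decide)),
   sp_le_sp2_left _ _, sp_le_sp2_right _ _, sp_le_sp2_left _ _, sp_le_sp2_left _ _,
   sp_le_sp2_right _ _, sp_le_sp2_left _ _⟩

lemma basePt4_mem : basePt4 ∈ XINC :=
  ⟨finrank_sp (sbv_ne 0), finrank_sp (sbv_ne 1), finrank_sp (sbv_ne 1),
   finrank_sp2 (sbv_pair_indep (by decide)), finrank_sp2 (sbv_pair_indep (by decide)),
   finrank_sp2 (sbv_pair_indep (by decide)),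
   sp_le_sp2_left _ _, sp_le_sp2_right _ _, sp_le_sp2_left _ _, sp_le_sp2_right _ _,
   sp_le_sp2_left _ _, sp_le_sp2_left _ _⟩

/-! ### The action preserves `XINC` and submodule (in)equalities -/

lemma toLin'_SL_eq (g : Matrix.SpecialLinearGroup (Fin 3) ℝ) :
    Matrix.toLin' (g : Matrix (Fin 3) (Fin 3) ℝ)
      = (SpecialLinearGroup.toLin' g : (Fin 3 → ℝ) →ₗ[ℝ] (Fin 3 → ℝ)) :=
  (SpecialLinearGroup.toLin'_to_linearMap g).symm

lemma finrank_map_g (g : Matrix.SpecialLinearGroup (Fin 3) ℝ) (p : Submodule ℝ (Fin 3 → ℝ)) :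
    Module.finrank ℝ (p.map (Matrix.toLin' (g : Matrix (Fin 3) (Fin 3) ℝ))) =
      Module.finrank ℝ p := by
  rw [toLin'_SL_eq]
  exact LinearEquiv.finrank_map_eq (SpecialLinearGroup.toLin' g) p

lemma map_g_inj (g : Matrix.SpecialLinearGroup (Fin 3) ℝ)
    {p q : Submodule ℝ (Fin 3 → ℝ)}
    (h : p.map (Matrix.toLin' (g : Matrix (Fin 3) (Fin 3) ℝ)) =
         q.map (Matrix.toLin' (g : Matrix (Fin 3) (Fin 3) ℝ))) : p = q := by
  rw [toLin'_SL_eq] at h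
  exact Submodule.map_injective_of_injective (SpecialLinearGroup.toLin' g).injective h

lemma act_XINC {c : TriangleConfig} (g : Matrix.SpecialLinearGroup (Fin 3) ℝ)
    (hc : c ∈ XINC) : actC g c ∈ XINC := by
  obtain ⟨h1, h2, h3, h4, h5, h6, h7, h8, h9, h10, h11, h12⟩ := hc
  exact ⟨by rw [actC]; rw [finrank_map_g]; exact h1,
         by rw [actC]; rw [finrank_map_g]; exact h2,
         by rw [actC]; rw [finrank_map_g]; exact h3,
         by rw [actC]; rw [finrank_map_g]; exact h4,
         by rw [actC]; rw [finrank_map_g]; exact h5,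
         by rw [actC]; rw [finrank_map_g]; exact h6,
         Submodule.map_mono h7, Submodule.map_mono h8, Submodule.map_mono h9,
         Submodule.map_mono h10, Submodule.map_mono h11, Submodule.map_mono h12⟩

/-! ### Orbit invariants -/

lemma orbit1_inv {c : TriangleConfig} (hc : c ∈ orbitC basePt) :
    c ∈ XINC ∧ c.L1 ≠ c.L2 ∧ c.L1 ≠ c.L3 ∧ c.L2 ≠ c.L3 ∧ c.P12 ≠ c.P13 := by
  obtain ⟨g, rfl⟩ := hc
  refine ⟨act_XINC g basePt_mem, ?_, ?_, ?_, ?_⟩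
  · exact fun h => sp_sbv_ne (i := 0) (j := 1) (by decide) (map_g_inj g h)
  · exact fun h => sp_sbv_ne (i := 0) (j := 2) (by decide) (map_g_inj g h)
  · exact fun h => sp_sbv_ne (i := 1) (j := 2) (by decide) (map_g_inj g h)
  · exact fun h => p_ne_12_13 (map_g_inj g h)

lemma orbit2_inv {c : TriangleConfig} (hc : c ∈ orbitC basePt2) :
    c ∈ XINC ∧ c.L1 = c.L2 ∧ c.L2 ≠ c.L3 ∧ c.P12 ≠ c.P13 ∧ c.P13 = c.P23 := by
  obtain ⟨g, rfl⟩ := hc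
  refine ⟨act_XINC g basePt2_mem, rfl, ?_, ?_, rfl⟩
  · exact fun h => sp_sbv_ne (i := 0) (j := 2) (by decide) (map_g_inj g h)
  · exact fun h => p_ne_12_13 (map_g_inj g h)

lemma orbit3_inv {c : TriangleConfig} (hc : c ∈ orbitC basePt3) :
    c ∈ XINC ∧ c.L1 = c.L3 ∧ c.L1 ≠ c.L2 ∧ c.P12 ≠ c.P13 ∧ c.P12 = c.P23 := by
  obtain ⟨g, rfl⟩ := hc
  refine ⟨act_XINC g basePt3_mem, rfl, ?_, ?_, rfl⟩
  · exact fun h => sp_sbv_ne (i := 0) (j := 1) (by decide) (map_g_inj g h)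
  · exact fun h => p_ne_12_13 (map_g_inj g h)

lemma orbit4_inv {c : TriangleConfig} (hc : c ∈ orbitC basePt4) :
    c ∈ XINC ∧ c.L2 = c.L3 ∧ c.L1 ≠ c.L2 ∧ c.P12 = c.P13 ∧ c.P13 ≠ c.P23 := by
  obtain ⟨g, rfl⟩ := hc
  refine ⟨act_XINC g basePt4_mem, rfl, ?_, rfl, ?_⟩
  · exact fun h => sp_sbv_ne (i := 0) (j := 1) (by decide) (map_g_inj g h)
  · exact fun h => p_ne_12_23 (map_g_inj g h)

end Aux

section Aux2

/-- Given three linearly independent vectors, an `SL₃` element sending the standard basis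
to (a scaling of) them. -/
lemma exists_SL (v0 v1 v2 : Fin 3 → ℝ) (h : LinearIndependent ℝ ![v0, v1, v2]) :
    ∃ g : Matrix.SpecialLinearGroup (Fin 3) ℝ, ∃ c : ℝ, c ≠ 0 ∧
      Matrix.toLin' (g : Matrix (Fin 3) (Fin 3) ℝ) (sbv 0) = c • v0 ∧
      Matrix.toLin' (g : Matrix (Fin 3) (Fin 3) ℝ) (sbv 1) = v1 ∧
      Matrix.toLin' (g : Matrix (Fin 3) (Fin 3) ℝ) (sbv 2) = v2 := by
  set M : Matrix (Fin 3) (Fin 3) ℝ := of ![v0, v1, v2] with hM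
  have hunit : IsUnit M := by
    rw [← linearIndependent_rows_iff_isUnit]
    have e : (fun i => M i) = ![v0, v1, v2] := by funext i; fin_cases i <;> rfl
    rw [show M.row = ![v0, v1, v2] from e]; exact h
  have hdet : det M ≠ 0 := isUnit_iff_ne_zero.1 ((isUnit_iff_isUnit_det M).1 hunit)
  set d := det M with hd
  set N : Matrix (Fin 3) (Fin 3) ℝ := of ![d⁻¹ • v0, v1, v2] with hN
  have hNup : N = updateRow M 0 (d⁻¹ • v0) := by
    ext i j; fin_cases i <;> simp [hN, hM, updateRow_apply]
  have hdetN : det Nᵀ = 1 := by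
    rw [det_transpose, hNup, det_updateRow_smul]
    have e2 : updateRow M 0 v0 = M := by
      ext i j; fin_cases i <;> simp [hM, updateRow_apply]
    rw [e2, ← hd, inv_mul_cancel₀ hdet]
  refine ⟨⟨Nᵀ, hdetN⟩, d⁻¹, inv_ne_zero hdet, ?_, ?_, ?_⟩ <;>
  · show Nᵀ.mulVec (Pi.single _ 1) = _
    rw [mulVec_single_one]
    rfl

lemma mem_orbit1 {v0 v1 v2 : Fin 3 → ℝ} (h : LinearIndependent ℝ ![v0, v1, v2]) :
    (⟨sp v0, sp v1, sp v2, sp2 v0 v1, sp2 v0 v2, sp2 v1 v2⟩ : TriangleConfig)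
      ∈ orbitC basePt := by
  obtain ⟨g, c, hc, h0, h1, h2⟩ := exists_SL v0 v1 v2 h
  refine ⟨g, ?_⟩
  show (⟨_, _, _, _, _, _⟩ : TriangleConfig) = ⟨_, _, _, _, _, _⟩
  simp only [basePt, map_sp, map_sp2, h0, h1, h2, sp_smul hc, sp2_smul hc]

lemma mem_orbit2 {v0 v1 v2 : Fin 3 → ℝ} (h : LinearIndependent ℝ ![v0, v1, v2]) :
    (⟨sp v0, sp v0, sp v2, sp2 v0 v1, sp2 v0 v2, sp2 v0 v2⟩ : TriangleConfig)
      ∈ orbitC basePt2 := by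
  obtain ⟨g, c, hc, h0, h1, h2⟩ := exists_SL v0 v1 v2 h
  refine ⟨g, ?_⟩
  show (⟨_, _, _, _, _, _⟩ : TriangleConfig) = ⟨_, _, _, _, _, _⟩
  simp only [basePt2, map_sp, map_sp2, h0, h1, h2, sp_smul hc, sp2_smul hc]

lemma mem_orbit3 {v0 v1 v2 : Fin 3 → ℝ} (h : LinearIndependent ℝ ![v0, v1, v2]) :
    (⟨sp v0, sp v1, sp v0, sp2 v0 v1, sp2 v0 v2, sp2 v0 v1⟩ : TriangleConfig)
      ∈ orbitC basePt3 := by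
  obtain ⟨g, c, hc, h0, h1, h2⟩ := exists_SL v0 v1 v2 h
  refine ⟨g, ?_⟩
  show (⟨_, _, _, _, _, _⟩ : TriangleConfig) = ⟨_, _, _, _, _, _⟩
  simp only [basePt3, map_sp, map_sp2, h0, h1, h2, sp_smul hc, sp2_smul hc]

lemma mem_orbit4 {v0 v1 v2 : Fin 3 → ℝ} (h : LinearIndependent ℝ ![v0, v1, v2]) :
    (⟨sp v0, sp v1, sp v1, sp2 v0 v1, sp2 v0 v1, sp2 v1 v2⟩ : TriangleConfig)
      ∈ orbitC basePt4 := by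
  obtain ⟨g, c, hc, h0, h1, h2⟩ := exists_SL v0 v1 v2 h
  refine ⟨g, ?_⟩
  show (⟨_, _, _, _, _, _⟩ : TriangleConfig) = ⟨_, _, _, _, _, _⟩
  simp only [basePt4, map_sp, map_sp2, h0, h1, h2, sp_smul hc, sp2_smul hc]

lemma TC_ext {c d : TriangleConfig} (h1 : c.L1 = d.L1) (h2 : c.L2 = d.L2)
    (h3 : c.L3 = d.L3) (h4 : c.P12 = d.P12) (h5 : c.P13 = d.P13) (h6 : c.P23 = d.P23) :
    c = d := by
  cases c; cases d
  simp only at h1 h2 h3 h4 h5 h6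
  subst h1 h2 h3 h4 h5 h6
  rfl

end Aux2

section Cover

lemma main_cover {c : TriangleConfig} (hX : c ∈ XINC) :
    c ∈ orbitC basePt ∨ c ∈ orbitC basePt2 ∨ c ∈ orbitC basePt3 ∨ c ∈ orbitC basePt4 ∨
      c ∈ D1 ∪ D2 := by
  obtain ⟨hL1, hL2, hL3, hP12, hP13, hP23, h112, h212, h113, h313, h223, h323⟩ := hX.out
  obtain ⟨v1, hv1, hL1e⟩ := line_exists hL1
  obtain ⟨v2, hv2, hL2e⟩ := line_exists hL2
  obtain ⟨v3, hv3, hL3e⟩ := line_exists hL3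
  by_cases h12 : c.L1 = c.L2
  · by_cases h23 : c.L2 = c.L3
    · -- D¹
      exact Or.inr (Or.inr (Or.inr (Or.inr (Or.inl ⟨hX, h12, h23⟩))))
    · -- L1 = L2 ≠ L3 : orbit of x₂ or D²
      have hne13 : sp v1 ≠ sp v3 := by
        rw [← hL1e, ← hL3e, h12]; exact h23
      have hind13 : LinearIndependent ℝ ![v1, v3] := lines_indep hv1 hv3 hne13
      have hP13e : sp2 v1 v3 = c.P13 := by
        refine plane_eq hind13 ?_ hP13
        rw [sp2_eqq]
        exact sup_le (by rw [← hL1e]; exact h113) (by rw [← hL3e]; exact h313)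
      have hP23e : sp2 v1 v3 = c.P23 := by
        refine plane_eq hind13 ?_ hP23
        rw [sp2_eqq]
        exact sup_le (by rw [← hL1e, h12]; exact h223) (by rw [← hL3e]; exact h323)
      by_cases hPP : c.P12 = c.P13
      · refine Or.inr (Or.inr (Or.inr (Or.inr (Or.inr ⟨hX, hPP, ?_⟩))))
        rw [← hP13e, ← hP23e]
      · have hnle : ¬ c.P12 ≤ sp2 v1 v3 := fun hle =>
          hPP ((plane_eq2 hind13 hle hP12).trans hP13e)
        obtain ⟨v2', hv2'P, hv2'n⟩ := SetLike.not_le_iff_exists.1 hnle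
        have hind12 : LinearIndependent ℝ ![v1, v2'] :=
          pair_indep hv1 (fun hm => hv2'n (sp_le_sp2_left v1 v3 hm))
        have hP12e : sp2 v1 v2' = c.P12 := by
          refine plane_eq hind12 ?_ hP12
          rw [sp2_eqq]
          exact sup_le (by rw [← hL1e]; exact h112) (sp_le_iff.2 hv2'P)
        have htriple : LinearIndependent ℝ ![v1, v2', v3] :=
          li_to_mid (triple_indep hind13 hv2'n)
        have hc_eq : c = ⟨sp v1, sp v1, sp v3, sp2 v1 v2', sp2 v1 v3, sp2 v1 v3⟩ := by
          refine TC_ext hL1e (by rw [← h12]; exact hL1e) hL3e hP12e.symm hP13e.symm hP23e.symm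
        refine Or.inr (Or.inl ?_)
        rw [hc_eq]
        exact mem_orbit2 htriple
  · by_cases h13 : c.L1 = c.L3
    · -- L1 = L3 ≠ L2 : orbit of x₃ or D²
      have hne12 : sp v1 ≠ sp v2 := by rw [← hL1e, ← hL2e]; exact h12
      have hind12 : LinearIndependent ℝ ![v1, v2] := lines_indep hv1 hv2 hne12
      have hP12e : sp2 v1 v2 = c.P12 := by
        refine plane_eq hind12 ?_ hP12
        rw [sp2_eqq]
        exact sup_le (by rw [← hL1e]; exact h112) (by rw [← hL2e]; exact h212)
      have hP23e : sp2 v1 v2 = c.P23 := by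
        refine plane_eq hind12 ?_ hP23
        rw [sp2_eqq]
        exact sup_le (by rw [← hL1e, h13]; exact h323) (by rw [← hL2e]; exact h223)
      by_cases hPP : c.P13 = c.P12
      · refine Or.inr (Or.inr (Or.inr (Or.inr (Or.inr ⟨hX, hPP.symm, ?_⟩))))
        rw [hPP, ← hP12e, ← hP23e]
      · have hnle : ¬ c.P13 ≤ sp2 v1 v2 := fun hle =>
          hPP ((plane_eq2 hind12 hle hP13).trans hP12e)
        obtain ⟨v3', hv3'P, hv3'n⟩ := SetLike.not_le_iff_exists.1 hnle
        have hind13 : LinearIndependent ℝ ![v1, v3'] :=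
          pair_indep hv1 (fun hm => hv3'n (sp_le_sp2_left v1 v2 hm))
        have hP13e : sp2 v1 v3' = c.P13 := by
          refine plane_eq hind13 ?_ hP13
          rw [sp2_eqq]
          exact sup_le (by rw [← hL1e]; exact h113) (sp_le_iff.2 hv3'P)
        have htriple : LinearIndependent ℝ ![v1, v2, v3'] :=
          li_to_last (triple_indep hind12 hv3'n)
        have hc_eq : c = ⟨sp v1, sp v2, sp v1, sp2 v1 v2, sp2 v1 v3', sp2 v1 v2⟩ :=
          TC_ext hL1e hL2e (by rw [← h13]; exact hL1e) hP12e.symm hP13e.symm hP23e.symm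
        refine Or.inr (Or.inr (Or.inl ?_))
        rw [hc_eq]
        exact mem_orbit3 htriple
    · by_cases h23 : c.L2 = c.L3
      · -- L2 = L3 ≠ L1 : orbit of x₄ or D²
        have hne12 : sp v1 ≠ sp v2 := by rw [← hL1e, ← hL2e]; exact h12
        have hind12 : LinearIndependent ℝ ![v1, v2] := lines_indep hv1 hv2 hne12
        have hP12e : sp2 v1 v2 = c.P12 := by
          refine plane_eq hind12 ?_ hP12
          rw [sp2_eqq]
          exact sup_le (by rw [← hL1e]; exact h112) (by rw [← hL2e]; exact h212)
        have hP13e : sp2 v1 v2 = c.P13 := by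
          refine plane_eq hind12 ?_ hP13
          rw [sp2_eqq]
          exact sup_le (by rw [← hL1e]; exact h113) (by rw [← hL2e, h23]; exact h313)
        by_cases hPP : c.P23 = c.P13
        · refine Or.inr (Or.inr (Or.inr (Or.inr (Or.inr ⟨hX, ?_, hPP.symm⟩))))
          rw [← hP12e, ← hP13e]
        · have hnle : ¬ c.P23 ≤ sp2 v1 v2 := fun hle =>
            hPP ((plane_eq2 hind12 hle hP23).trans hP13e)
          obtain ⟨v3', hv3'P, hv3'n⟩ := SetLike.not_le_iff_exists.1 hnle
          have hind23 : LinearIndependent ℝ ![v2, v3'] :=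
            pair_indep hv2 (fun hm => hv3'n (sp_le_sp2_right v1 v2 hm))
          have hP23e : sp2 v2 v3' = c.P23 := by
            refine plane_eq hind23 ?_ hP23
            rw [sp2_eqq]
            exact sup_le (by rw [← hL2e]; exact h223) (sp_le_iff.2 hv3'P)
          have htriple : LinearIndependent ℝ ![v1, v2, v3'] :=
            li_to_last (triple_indep hind12 hv3'n)
          have hc_eq : c = ⟨sp v1, sp v2, sp v2, sp2 v1 v2, sp2 v1 v2, sp2 v2 v3'⟩ :=
            TC_ext hL1e hL2e (by rw [← h23]; exact hL2e) hP12e.symm hP13e.symm hP23e.symm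
          refine Or.inr (Or.inr (Or.inr (Or.inl ?_)))
          rw [hc_eq]
          exact mem_orbit4 htriple
      · -- lines pairwise distinct : generic orbit or D²
        have hne12 : sp v1 ≠ sp v2 := by rw [← hL1e, ← hL2e]; exact h12
        have hind12 : LinearIndependent ℝ ![v1, v2] := lines_indep hv1 hv2 hne12
        have hne13 : sp v1 ≠ sp v3 := by rw [← hL1e, ← hL3e]; exact h13
        have hind13 : LinearIndependent ℝ ![v1, v3] := lines_indep hv1 hv3 hne13
        have hne23 : sp v2 ≠ sp v3 := by rw [← hL2e, ← hL3e]; exact h23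
        have hind23 : LinearIndependent ℝ ![v2, v3] := lines_indep hv2 hv3 hne23
        have hP12e : sp2 v1 v2 = c.P12 := by
          refine plane_eq hind12 ?_ hP12
          rw [sp2_eqq]
          exact sup_le (by rw [← hL1e]; exact h112) (by rw [← hL2e]; exact h212)
        have hP13e : sp2 v1 v3 = c.P13 := by
          refine plane_eq hind13 ?_ hP13
          rw [sp2_eqq]
          exact sup_le (by rw [← hL1e]; exact h113) (by rw [← hL3e]; exact h313)
        have hP23e : sp2 v2 v3 = c.P23 := by
          refine plane_eq hind23 ?_ hP23
          rw [sp2_eqq]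
          exact sup_le (by rw [← hL2e]; exact h223) (by rw [← hL3e]; exact h323)
        by_cases hv3m : v3 ∈ sp2 v1 v2
        · -- coplanar: D²
          have heq13 : sp2 v1 v3 = sp2 v1 v2 := by
            apply plane_eq2 hind12 _ (finrank_sp2 hind13)
            rw [sp2_eqq (v := v1) (w := v3)]
            exact sup_le (sp_le_sp2_left v1 v2) (sp_le_iff.2 hv3m)
          have heq23 : sp2 v2 v3 = sp2 v1 v2 := by
            apply plane_eq2 hind12 _ (finrank_sp2 hind23)
            rw [sp2_eqq (v := v2) (w := v3)]
            exact sup_le (sp_le_sp2_right v1 v2) (sp_le_iff.2 hv3m)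
          refine Or.inr (Or.inr (Or.inr (Or.inr (Or.inr ⟨hX, ?_, ?_⟩))))
          · rw [← hP12e, ← hP13e, heq13]
          · rw [← hP13e, ← hP23e, heq13, heq23]
        · have htriple : LinearIndependent ℝ ![v1, v2, v3] :=
            li_to_last (triple_indep hind12 hv3m)
          have hc_eq : c = ⟨sp v1, sp v2, sp v3, sp2 v1 v2, sp2 v1 v3, sp2 v2 v3⟩ :=
            TC_ext hL1e hL2e hL3e hP12e.symm hP13e.symm hP23e.symm
          refine Or.inl ?_
          rw [hc_eq]
          exact mem_orbit1 htriple

end Cover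

section Disj

lemma d01 : Disjoint (orbitC basePt) (orbitC basePt2) :=
  Set.disjoint_left.2 fun _ h1 h2 => (orbit1_inv h1).2.1 (orbit2_inv h2).2.1

lemma d02 : Disjoint (orbitC basePt) (orbitC basePt3) :=
  Set.disjoint_left.2 fun _ h1 h2 => (orbit1_inv h1).2.2.1 (orbit3_inv h2).2.1

lemma d03 : Disjoint (orbitC basePt) (orbitC basePt4) :=
  Set.disjoint_left.2 fun _ h1 h2 => (orbit1_inv h1).2.2.2.1 (orbit4_inv h2).2.1

lemma d12 : Disjoint (orbitC basePt2) (orbitC basePt3) :=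
  Set.disjoint_left.2 fun _ h1 h2 => (orbit3_inv h2).2.2.1 (orbit2_inv h1).2.1

lemma d13 : Disjoint (orbitC basePt2) (orbitC basePt4) :=
  Set.disjoint_left.2 fun _ h1 h2 => (orbit2_inv h1).2.2.1 (orbit4_inv h2).2.1

lemma d23 : Disjoint (orbitC basePt3) (orbitC basePt4) :=
  Set.disjoint_left.2 fun _ h1 h2 =>
    (orbit3_inv h1).2.2.1 ((orbit3_inv h1).2.1.trans (orbit4_inv h2).2.1.symm)

lemma d0D : Disjoint (orbitC basePt) (D1 ∪ D2) :=
  Set.disjoint_left.2 fun _ h1 h2 => by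
    rcases h2 with ⟨_, hL, _⟩ | ⟨_, hP, _⟩
    · exact (orbit1_inv h1).2.1 hL
    · exact (orbit1_inv h1).2.2.2.2 hP

lemma d1D : Disjoint (orbitC basePt2) (D1 ∪ D2) :=
  Set.disjoint_left.2 fun _ h1 h2 => by
    rcases h2 with ⟨_, _, hL⟩ | ⟨_, hP, _⟩
    · exact (orbit2_inv h1).2.2.1 hL
    · exact (orbit2_inv h1).2.2.2.1 hP

lemma d2D : Disjoint (orbitC basePt3) (D1 ∪ D2) :=
  Set.disjoint_left.2 fun _ h1 h2 => by
    rcases h2 with ⟨_, hL, _⟩ | ⟨_, hP, _⟩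
    · exact (orbit3_inv h1).2.2.1 hL
    · exact (orbit3_inv h1).2.2.2.1 hP

lemma d3D : Disjoint (orbitC basePt4) (D1 ∪ D2) :=
  Set.disjoint_left.2 fun _ h1 h2 => by
    rcases h2 with ⟨_, hL, _⟩ | ⟨_, _, hP⟩
    · exact (orbit4_inv h1).2.2.1 hL
    · exact (orbit4_inv h1).2.2.2.2 hP

end Disj

/-- `X^{INC}(ℝ)` is the disjoint union of the four orbits `G·o`, `G·x₂`, `G·x₃`, `G·x₄`
and the set `D¹ ∪ D²`. -/
theorem statement8 :
    (⋃ i, pieces i) = XINC ∧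
    (∀ i j : Fin 5, i ≠ j → Disjoint (pieces i) (pieces j)) := by
  constructor
  · ext c
    simp only [Set.mem_iUnion]
    constructor
    · rintro ⟨i, hi⟩
      fin_cases i
      · exact (orbit1_inv hi).1
      · exact (orbit2_inv hi).1
      · exact (orbit3_inv hi).1
      · exact (orbit4_inv hi).1
      · rcases hi with h | h
        · exact h.1
        · exact h.1
    · intro hc
      rcases main_cover hc with h | h | h | h | h
      · exact ⟨0, h⟩
      · exact ⟨1, h⟩
      · exact ⟨2, h⟩
      · exact ⟨3, h⟩
      · exact ⟨4, h⟩
  · intro i j hij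
    fin_cases i <;> fin_cases j <;>
      first
        | exact absurd rfl hij
        | exact d01 | exact d02 | exact d03 | exact d12 | exact d13 | exact d23
        | exact d0D | exact d1D | exact d2D | exact d3D
        | exact d01.symm | exact d02.symm | exact d03.symm | exact d12.symm
        | exact d13.symm | exact d23.symm
        | exact d0D.symm | exact d1D.symm | exact d2D.symm | exact d3D.symm

end
end

section
/- In the polynomial ring ℂ[x, y, w, a, b] in five variables over ℂ, the ideal I generated by the two polynomials xy − w² and xa + yb is a prime ideal. -/
open MvPolynomial

set_option maxRecDepth 40000
set_option synthInstance.maxHeartbeats 1000000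

noncomputable section
namespace S9

abbrev R5 := MvPolynomial (Fin 5) ℂ
abbrev R4 := MvPolynomial (Fin 4) ℂ
abbrev R3 := MvPolynomial (Fin 3) ℂ

def Φ : R5 →ₐ[ℂ] R4 := aeval ![X 1 ^ 2, X 2 ^ 2, X 1 * X 2, X 0, X 3]
def σ' : R4 →ₐ[ℂ] R4 := aeval ![X 0, -X 1, -X 2, X 3]
def hh : R4 := X 1 ^ 2 * X 0 + X 2 ^ 2 * X 3
def q1 : R5 := X 0 * X 1 - X 2 ^ 2
def q2 : R5 := X 0 * X 3 + X 1 * X 4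

def T (m : Fin 5 →₀ ℕ) : Fin 4 →₀ ℕ :=
  Finsupp.single 0 (m 3) + Finsupp.single 1 (2 * m 0 + m 2) +
  Finsupp.single 2 (2 * m 1 + m 2) + Finsupp.single 3 (m 4)

lemma T_apply (m : Fin 5 →₀ ℕ) :
    T m 0 = m 3 ∧ T m 1 = 2 * m 0 + m 2 ∧ T m 2 = 2 * m 1 + m 2 ∧ T m 3 = m 4 := by
  refine ⟨?_, ?_, ?_, ?_⟩ <;> simp [T, Finsupp.single_apply]

lemma Phi_monomial (m : Fin 5 →₀ ℕ) (c : ℂ) : Φ (monomial m c) = monomial (T m) c := by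
  show aeval _ _ = _
  rw [aeval_monomial]
  rw [monomial_eq]
  rw [Finsupp.prod_fintype _ _ (fun i => pow_zero _), Finsupp.prod_fintype _ _ (fun i => pow_zero _)]
  rw [Fin.prod_univ_five, Fin.prod_univ_four]
  simp only [T, Finsupp.single_apply, Finsupp.add_apply]
  norm_num [Fin.ext_iff, algebraMap_eq]
  simp only [Matrix.cons_val]
  norm_num
  exact Or.inl (by ring)

lemma sigma_monomial (e : Fin 4 →₀ ℕ) (c : ℂ) :
    σ' (monomial e c) = monomial e ((-1 : ℂ) ^ (e 1 + e 2) * c) := by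
  show aeval _ _ = _
  rw [aeval_monomial, monomial_eq]
  rw [Finsupp.prod_fintype _ _ (fun i => pow_zero _), Finsupp.prod_fintype _ _ (fun i => pow_zero _)]
  rw [Fin.prod_univ_four, Fin.prod_univ_four]
  simp only [Matrix.cons_val_zero, Matrix.cons_val_one, Matrix.head_cons, algebraMap_eq,
    Matrix.cons_val_two, Matrix.tail_cons, Matrix.cons_val_three]
  rw [show ((-1:ℂ)) ^ (e 1 + e 2) * c = c * (-1) ^ (e 1) * (-1) ^ (e 2) by ring,
    map_mul, map_mul, map_pow, map_pow, map_neg, C_1,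
    neg_pow (X 1 : R4) (e 1), neg_pow (X 2 : R4) (e 2)]
  ring

lemma coeff_sigma (e : Fin 4 →₀ ℕ) (g : R4) :
    coeff e (σ' g) = (-1 : ℂ) ^ (e 1 + e 2) * coeff e g := by
  conv_lhs => rw [← g.support_sum_monomial_coeff, map_sum]
  rw [coeff_sum]
  simp only [sigma_monomial, coeff_monomial]
  rw [Finset.sum_ite_eq' g.support e]
  split_ifs with hmem
  · rfl
  · rw [notMem_support_iff.mp hmem, mul_zero]

lemma even_of_invariant {g : R4} (hg : σ' g = g) {e : Fin 4 →₀ ℕ} (he : e ∈ g.support) :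
    Even (e 1 + e 2) := by
  have h1 := coeff_sigma e g
  rw [hg] at h1
  by_contra hodd
  have hneg : (-1 : ℂ) ^ (e 1 + e 2) = -1 :=
    Odd.neg_one_pow (Nat.not_even_iff_odd.mp hodd)
  rw [hneg] at h1
  exact mem_support_iff.mp he (by linear_combination h1 / 2)

lemma exists_T_preimage (e : Fin 4 →₀ ℕ) (he : Even (e 1 + e 2)) : ∃ m, T m = e := by
  rcases Nat.even_or_odd (e 1) with h1 | h1
  · obtain ⟨i, hi⟩ := h1
    have h2 : Even (e 2) := by rcases he with ⟨k, hk⟩; exact ⟨k - i, by omega⟩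
    obtain ⟨j, hj⟩ := h2
    refine ⟨Finsupp.equivFunOnFinite.symm ![i, j, 0, e 0, e 3], ?_⟩
    ext x
    fin_cases x <;>
      simp [T, Finsupp.single_apply, Fin.ext_iff, show ((2:Fin 4):ℕ) = 2 from rfl,
        show ((3:Fin 4):ℕ) = 3 from rfl] <;> omega
  · obtain ⟨i, hi⟩ := h1
    have h2 : Odd (e 2) := by rcases he with ⟨k, hk⟩; exact ⟨k - i - 1, by omega⟩
    obtain ⟨j, hj⟩ := h2
    refine ⟨Finsupp.equivFunOnFinite.symm ![i, j, 1, e 0, e 3], ?_⟩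
    ext x
    fin_cases x <;>
      simp [T, Finsupp.single_apply, Fin.ext_iff, show ((2:Fin 4):ℕ) = 2 from rfl,
        show ((3:Fin 4):ℕ) = 3 from rfl] <;> omega

lemma mem_range_of_invariant {g : R4} (hg : σ' g = g) : ∃ f : R5, Φ f = g := by
  have key : ∀ e ∈ g.support, (monomial e (coeff e g) : R4) ∈ Φ.range := by
    intro e he
    obtain ⟨m, hm⟩ := exists_T_preimage e (even_of_invariant hg he)
    exact ⟨monomial m (coeff e g), by show Φ _ = _; rw [Phi_monomial, hm]⟩
  have hg' : g ∈ Φ.range := by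
    rw [← g.support_sum_monomial_coeff]
    exact Subalgebra.sum_mem _ key
  exact hg'

lemma mul_q1 (m : Fin 5 →₀ ℕ) (c : ℂ) :
    monomial m c * q1 = monomial (m + Finsupp.single 0 1 + Finsupp.single 1 1) c
      - monomial (m + Finsupp.single 2 2) c := by
  have hX01 : (X 0 * X 1 : R5) = monomial (Finsupp.single 0 1 + Finsupp.single 1 1) 1 := by
    rw [X, X, monomial_mul, one_mul]
  rw [q1, mul_sub, X_pow_eq_monomial, hX01, monomial_mul, monomial_mul]
  simp [add_assoc]

lemma monomial_reduce : ∀ (n : ℕ) (m : Fin 5 →₀ ℕ) (c : ℂ), m 0 ≤ n →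
    ∃ g : R5, monomial m c - g ∈ Ideal.span {q1} ∧
      ∀ m' ∈ g.support, m' 0 = 0 ∨ m' 1 = 0 := by
  intro n
  induction n with
  | zero =>
    intro m c hm
    refine ⟨monomial m c, by simp, fun m' hm' => Or.inl ?_⟩
    rw [support_monomial] at hm'
    split_ifs at hm' with h
    · simp at hm'
    · simp only [Finset.mem_singleton] at hm'
      subst hm'
      omega
  | succ n ih =>
    intro m c hm
    by_cases h0 : m 0 = 0
    · refine ⟨monomial m c, by simp, fun m' hm' => Or.inl ?_⟩
      rw [support_monomial] at hm'
      split_ifs at hm' with h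
      · simp at hm'
      · simp only [Finset.mem_singleton] at hm'; subst hm'; exact h0
    by_cases h1 : m 1 = 0
    · refine ⟨monomial m c, by simp, fun m' hm' => Or.inr ?_⟩
      rw [support_monomial] at hm'
      split_ifs at hm' with h
      · simp at hm'
      · simp only [Finset.mem_singleton] at hm'; subst hm'; exact h1
    · set m'' := m - Finsupp.single 0 1 - Finsupp.single 1 1 with hm''def
      have hm'' : m'' + Finsupp.single 0 1 + Finsupp.single 1 1 = m := by
        ext i
        simp only [Finsupp.add_apply, Finsupp.tsub_apply, hm''def, Finsupp.single_apply]
        fin_cases i <;>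
          simp [Fin.ext_iff, show ((2:Fin 5):ℕ) = 2 from rfl, show ((3:Fin 5):ℕ) = 3 from rfl,
            show ((4:Fin 5):ℕ) = 4 from rfl] <;> omega
      have hkey : (m'' + Finsupp.single 2 2 : Fin 5 →₀ ℕ) 0 ≤ n := by
        simp only [Finsupp.add_apply, Finsupp.tsub_apply, hm''def, Finsupp.single_apply]
        norm_num [Fin.ext_iff, show ((2:Fin 5):ℕ) = 2 from rfl]
        omega
      obtain ⟨g, hg1, hg2⟩ := ih (m'' + Finsupp.single 2 2) c hkey
      refine ⟨g, ?_, hg2⟩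
      have hsplit : monomial m c - g =
          monomial m'' c * q1 + (monomial (m'' + Finsupp.single 2 2) c - g) := by
        rw [mul_q1, hm'']
        ring
      rw [hsplit]
      exact Ideal.add_mem _
        (Ideal.mul_mem_left _ _ (Ideal.subset_span (Set.mem_singleton _))) hg1

lemma Phi_q1 : Φ q1 = 0 := by
  show aeval _ _ = _
  simp only [q1, map_sub, map_mul, map_pow, aeval_X]
  simp only [Matrix.cons_val_zero, Matrix.cons_val_one, Matrix.head_cons, Matrix.cons_val_two,
    Matrix.tail_cons]
  try ring

lemma Phi_q2 : Φ q2 = hh := by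
  show aeval _ _ = _
  simp only [q2, hh, map_add, map_mul, aeval_X]
  simp only [Matrix.cons_val_zero, Matrix.cons_val_one, Matrix.head_cons, Matrix.cons_val_two,
    Matrix.tail_cons, Matrix.cons_val_three, Matrix.cons_val_four]
  try ring

lemma Phi_span_q1 {u : R5} (hu : u ∈ Ideal.span {q1}) : Φ u = 0 := by
  rw [Ideal.mem_span_singleton] at hu
  obtain ⟨v, rfl⟩ := hu
  rw [map_mul, Phi_q1, zero_mul]

lemma T_inj {m m' : Fin 5 →₀ ℕ} (hm : m 0 = 0 ∨ m 1 = 0) (hm' : m' 0 = 0 ∨ m' 1 = 0)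
    (hT : T m = T m') : m = m' := by
  obtain ⟨a0, a1, a2, a3⟩ := T_apply m
  obtain ⟨b0, b1, b2, b3⟩ := T_apply m'
  have e0 : m 3 = m' 3 := by rw [← a0, ← b0, hT]
  have e1 : 2 * m 0 + m 2 = 2 * m' 0 + m' 2 := by rw [← a1, ← b1, hT]
  have e2 : 2 * m 1 + m 2 = 2 * m' 1 + m' 2 := by rw [← a2, ← b2, hT]
  have e3 : m 4 = m' 4 := by rw [← a3, ← b3, hT]
  have g0 : m 0 = m' 0 := by omega
  have g1 : m 1 = m' 1 := by omega
  have g2 : m 2 = m' 2 := by omega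
  ext i
  fin_cases i
  exacts [g0, g1, g2, e0, e3]

lemma normal_eq_zero {g : R5} (hg : ∀ m ∈ g.support, m 0 = 0 ∨ m 1 = 0)
    (h0 : Φ g = 0) : g = 0 := by
  by_contra hne
  obtain ⟨m, hm⟩ := support_nonempty.mpr hne
  have hc : coeff (T m) (Φ g) = coeff m g := by
    conv_lhs => rw [← g.support_sum_monomial_coeff, map_sum]
    rw [coeff_sum]
    simp only [Phi_monomial, coeff_monomial]
    rw [Finset.sum_eq_single m]
    · simp
    · intro b hb hbm
      rw [if_neg (fun hTb => hbm (T_inj (hg b hb) (hg m hm) hTb))]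
    · intro h
      exact absurd hm h
  rw [h0, coeff_zero] at hc
  exact mem_support_iff.mp hm hc.symm

lemma ker_sub {f : R5} (hf : Φ f = 0) : f ∈ Ideal.span {q1} := by
  have hred := fun (m : Fin 5 →₀ ℕ) (c : ℂ) => monomial_reduce (m 0) m c le_rfl
  choose G hG1 hG2 using hred
  set g : R5 := ∑ m ∈ f.support, G m (coeff m f) with hgdef
  have hfg : f - g ∈ Ideal.span {q1} := by
    have hsplit : f - g = ∑ m ∈ f.support, (monomial m (coeff m f) - G m (coeff m f)) := by
      rw [Finset.sum_sub_distrib, f.support_sum_monomial_coeff]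
    rw [hsplit]
    exact Ideal.sum_mem _ fun m _ => hG1 m _
  have hgnorm : ∀ m' ∈ g.support, m' 0 = 0 ∨ m' 1 = 0 := by
    intro m' hm'
    have hsub := MvPolynomial.support_sum hm'
    rw [Finset.mem_biUnion] at hsub
    obtain ⟨m, _, hmem⟩ := hsub
    exact hG2 m _ m' hmem
  have hΦg : Φ g = 0 := by
    have h1 : Φ (f - g) = 0 := Phi_span_q1 hfg
    rw [map_sub, hf, zero_sub, neg_eq_zero] at h1
    exact h1
  rw [normal_eq_zero hgnorm hΦg, sub_zero] at hfg
  exact hfg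

-- Primality of hh
lemma prime_X0_R3 : Prime (X 0 : R3) := by
  rw [← MulEquiv.prime_iff (finSuccEquiv ℂ 2).toRingEquiv.toMulEquiv]
  have hX : (finSuccEquiv ℂ 2).toRingEquiv.toMulEquiv (X 0) = Polynomial.X :=
    finSuccEquiv_X_zero
  rw [hX]
  exact Polynomial.prime_X

lemma X0_not_dvd (i : Fin 3) (hi : i ≠ 0) : ¬ (X 0 : R3) ∣ X i := by
  rintro ⟨c, hc⟩
  have h := congrArg (eval fun j => if j = 0 then (0:ℂ) else 1) hc
  rw [eval_X, eval_mul, eval_X, if_pos rfl, if_neg hi, zero_mul] at h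
  exact one_ne_zero h

lemma unit_of_dvd {r : R3} (h1 : r ∣ X 0 ^ 2) (h2 : r ∣ X 1 ^ 2 * X 2) : IsUnit r := by
  obtain ⟨i, hi2, hassoc⟩ := (dvd_prime_pow prime_X0_R3 2).mp h1
  match i, hassoc with
  | 0, hassoc => exact associated_one_iff_isUnit.mp (by simpa using hassoc)
  | 1, hassoc =>
    exfalso
    have hX0r : (X 0 : R3) ∣ r := by
      rw [pow_one] at hassoc
      exact hassoc.symm.dvd
    have : (X 0 : R3) ∣ X 1 ^ 2 * X 2 := hX0r.trans h2
    rcases (prime_X0_R3.dvd_mul).mp this with h | h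
    · exact X0_not_dvd 1 (by decide) (prime_X0_R3.dvd_of_dvd_pow h)
    · exact X0_not_dvd 2 (by decide) h
  | 2, hassoc =>
    exfalso
    have hX0r : (X 0 : R3) ∣ r := (dvd_pow_self (X 0 : R3) (by norm_num)).trans hassoc.symm.dvd
    have : (X 0 : R3) ∣ X 1 ^ 2 * X 2 := hX0r.trans h2
    rcases (prime_X0_R3.dvd_mul).mp this with h | h
    · exact X0_not_dvd 1 (by decide) (prime_X0_R3.dvd_of_dvd_pow h)
    · exact X0_not_dvd 2 (by decide) h

lemma irred_lin :
    Irreducible (Polynomial.C (X 0 ^ 2 : R3) * Polynomial.X + Polynomial.C (X 1 ^ 2 * X 2)) := by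
  set p := Polynomial.C (X 0 ^ 2 : R3) * Polynomial.X + Polynomial.C (X 1 ^ 2 * X 2) with hp
  have hX0 : (X 0 : R3) ^ 2 ≠ 0 := pow_ne_zero _ (X_ne_zero 0)
  have hdeg : p.natDegree = 1 := Polynomial.natDegree_linear hX0
  have hpne : p ≠ 0 := fun h => by simp [h] at hdeg
  constructor
  · intro hu
    rw [Polynomial.natDegree_eq_zero_of_isUnit hu] at hdeg
    exact absurd hdeg (by norm_num)
  · intro u v huv
    have hu0 : u ≠ 0 := fun h => hpne (by rw [huv, h, zero_mul])
    have hv0 : v ≠ 0 := fun h => hpne (by rw [huv, h, mul_zero])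
    have hsum : u.natDegree + v.natDegree = 1 := by
      rw [← Polynomial.natDegree_mul hu0 hv0, ← huv, hdeg]
    have hdvd_coeffs : ∀ r : R3, Polynomial.C r ∣ p → IsUnit r := by
      intro r hr
      rw [Polynomial.C_dvd_iff_dvd_coeff] at hr
      have hc1 : p.coeff 1 = X 0 ^ 2 := by
        rw [hp, Polynomial.coeff_add, Polynomial.coeff_C_mul, Polynomial.coeff_X_one,
          Polynomial.coeff_C, mul_one]
        norm_num
      have hc0 : p.coeff 0 = X 1 ^ 2 * X 2 := by
        rw [hp, Polynomial.coeff_add, Polynomial.coeff_C_mul, Polynomial.coeff_X_zero,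
          Polynomial.coeff_C, mul_zero]
        norm_num
      exact unit_of_dvd (hc1 ▸ hr 1) (hc0 ▸ hr 0)
    rcases Nat.eq_zero_or_pos u.natDegree with hu | hu
    · left
      obtain ⟨r, hr⟩ := Polynomial.natDegree_eq_zero.mp hu
      have : Polynomial.C r ∣ p := ⟨v, by rw [huv, hr]⟩
      rw [← hr]
      exact (Polynomial.isUnit_C).mpr (hdvd_coeffs r this)
    · right
      have hv : v.natDegree = 0 := by omega
      obtain ⟨r, hr⟩ := Polynomial.natDegree_eq_zero.mp hv
      have : Polynomial.C r ∣ p := ⟨u, by rw [huv, ← hr, mul_comm]⟩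
      rw [← hr]
      exact (Polynomial.isUnit_C).mpr (hdvd_coeffs r this)

lemma finSuccEquiv_hh :
    (finSuccEquiv ℂ 3) hh =
      Polynomial.C (X 0 ^ 2 : R3) * Polynomial.X + Polynomial.C (X 1 ^ 2 * X 2) := by
  have h1 : (1 : Fin 4) = (0 : Fin 3).succ := rfl
  have h2 : (2 : Fin 4) = (1 : Fin 3).succ := rfl
  have h3 : (3 : Fin 4) = (2 : Fin 3).succ := rfl
  rw [hh, map_add, map_mul, map_mul, map_pow, map_pow, h1, h2, h3,
    finSuccEquiv_X_zero, finSuccEquiv_X_succ, finSuccEquiv_X_succ, finSuccEquiv_X_succ]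
  have hC : (Polynomial.C (X 1 ^ 2 * X 2) : Polynomial R3) =
      Polynomial.C (X 1) ^ 2 * Polynomial.C (X 2) := by
    rw [map_mul, map_pow]
  have hC0 : (Polynomial.C (X 0 ^ 2 : R3)) = Polynomial.C (X 0) ^ 2 := map_pow _ _ _
  rw [hC, hC0]
  try ring

lemma prime_hh : Prime hh := by
  rw [← MulEquiv.prime_iff (finSuccEquiv ℂ 3).toRingEquiv.toMulEquiv]
  have hX : (finSuccEquiv ℂ 3).toRingEquiv.toMulEquiv hh =
      Polynomial.C (X 0 ^ 2 : R3) * Polynomial.X + Polynomial.C (X 1 ^ 2 * X 2) :=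
    finSuccEquiv_hh
  rw [hX]
  exact UniqueFactorizationMonoid.irreducible_iff_prime.mp irred_lin

lemma hh_ne_zero : hh ≠ 0 := prime_hh.ne_zero

lemma sigma_comp_Phi : σ'.comp Φ = Φ := by
  apply MvPolynomial.algHom_ext
  intro i
  fin_cases i <;>
    simp [Φ, σ']

lemma sigma_hh : σ' hh = hh := by
  simp [σ', hh]
  try ring

theorem main : Ideal.span {q1, q2} = Ideal.comap Φ.toRingHom (Ideal.span {hh}) := by
  apply le_antisymm
  · rw [Ideal.span_le]
    rintro x hx
    simp only [Set.mem_insert_iff, Set.mem_singleton_iff] at hx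
    simp only [SetLike.mem_coe, Ideal.mem_comap]
    rcases hx with rfl | rfl
    · show Φ q1 ∈ _
      rw [Phi_q1]
      exact Ideal.zero_mem _
    · show Φ q2 ∈ _
      rw [Phi_q2]
      exact Ideal.subset_span (Set.mem_singleton _)
  · intro f hf
    rw [Ideal.mem_comap, Ideal.mem_span_singleton] at hf
    obtain ⟨g, hg'⟩ := hf
    have hg : Φ f = hh * g := hg'
    have hinv : σ' g = g := by
      have h1 : σ' (Φ f) = Φ f := by
        rw [← AlgHom.comp_apply, sigma_comp_Phi]
      rw [hg, map_mul, sigma_hh] at h1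
      exact mul_left_cancel₀ hh_ne_zero h1
    obtain ⟨f', hf'⟩ := mem_range_of_invariant hinv
    have hker : Φ (f - f' * q2) = 0 := by
      rw [map_sub, map_mul, hf', Phi_q2, hg, mul_comm, sub_self]
    have h1 : f - f' * q2 ∈ Ideal.span {q1, q2} := by
      apply Ideal.span_mono (Set.singleton_subset_iff.mpr (Set.mem_insert _ _))
      exact ker_sub hker
    have h2 : f' * q2 ∈ Ideal.span {q1, q2} :=
      Ideal.mul_mem_left _ _ (Ideal.subset_span (Set.mem_insert_of_mem _ rfl))
    simpa using Ideal.add_mem _ h1 h2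

end S9
end

/-- In the polynomial ring `ℂ[x, y, w, a, b]` (variables indexed by `Fin 5`:
`x = X 0`, `y = X 1`, `w = X 2`, `a = X 3`, `b = X 4`), the ideal generated by
`x*y - w^2` and `x*a + y*b` is prime. -/
theorem statement9 :
    (Ideal.span {(X 0 * X 1 - X 2 ^ 2 : MvPolynomial (Fin 5) ℂ),
                 (X 0 * X 3 + X 1 * X 4 : MvPolynomial (Fin 5) ℂ)}).IsPrime := by
  have h := S9.main
  rw [show ({(X 0 * X 1 - X 2 ^ 2 : MvPolynomial (Fin 5) ℂ),
      (X 0 * X 3 + X 1 * X 4 : MvPolynomial (Fin 5) ℂ)} : Set (MvPolynomial (Fin 5) ℂ)) =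
      {S9.q1, S9.q2} from rfl, h]
  have hprime : (Ideal.span {S9.hh}).IsPrime :=
    (Ideal.span_singleton_prime S9.hh_ne_zero).mpr S9.prime_hh
  haveI := hprime
  exact hprime.comap _
end

section
/- Let I be the ideal of ℂ[x, y, w, a, b] generated by xy − w² and xa + yb. Then the image of the variable x in the quotient ring ℂ[x, y, w, a, b]/I is not a zero divisor; equivalently, for every φ ∈ ℂ[x, y, w, a, b], if x·φ ∈ I then φ ∈ I. -/
open MvPolynomial

/-- The algebra map sending `X i` to `0` and fixing the other variables. -/
noncomputable def evk (i : Fin 5) : MvPolynomial (Fin 5) ℂ →ₐ[ℂ] MvPolynomial (Fin 5) ℂ :=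
  aeval (fun j => if j = i then 0 else X j)

lemma evk_X (i j : Fin 5) : evk i (X j) = if j = i then 0 else X j := by
  simp [evk]

lemma X_dvd_sub_evk (i : Fin 5) (f : MvPolynomial (Fin 5) ℂ) : X i ∣ f - evk i f := by
  induction f using MvPolynomial.induction_on with
  | C a => simp [evk]
  | add p q hp hq =>
      have h : p + q - evk i (p + q) = (p - evk i p) + (q - evk i q) := by
        rw [map_add]; ring
      rw [h]; exact dvd_add hp hq
  | mul_X p j hp =>
      rw [map_mul, evk_X]
      by_cases h : j = i
      · subst h
        rw [if_pos rfl, mul_zero, sub_zero]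
        exact ⟨p, mul_comm _ _⟩
      · rw [if_neg h]
        have h2 : p * X j - evk i p * X j = (p - evk i p) * X j := by ring
        rw [h2]; exact hp.mul_right _

lemma X_dvd_iff_evk (i : Fin 5) (f : MvPolynomial (Fin 5) ℂ) :
    X i ∣ f ↔ evk i f = 0 := by
  constructor
  · rintro ⟨c, rfl⟩
    rw [map_mul, evk_X, if_pos rfl, zero_mul]
  · intro h
    have := X_dvd_sub_evk i f
    rwa [h, sub_zero] at this

lemma prime_Xk (i : Fin 5) : Prime (X i : MvPolynomial (Fin 5) ℂ) := by
  refine ⟨X_ne_zero i, ?_, ?_⟩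
  · intro hu
    have h1 : (X i : MvPolynomial (Fin 5) ℂ) ∣ 1 := hu.dvd
    rw [X_dvd_iff_evk] at h1
    simp at h1
  · intro a b hab
    rw [X_dvd_iff_evk] at hab ⊢
    rw [X_dvd_iff_evk, map_mul] at *
    rcases mul_eq_zero.mp hab with h | h
    · exact Or.inl h
    · exact Or.inr h

/-- Let `I` be the ideal of `ℂ[x, y, w, a, b]` (variables indexed by `Fin 5`:
`x = X 0`, `y = X 1`, `w = X 2`, `a = X 3`, `b = X 4`) generated by `x*y - w^2` and
`x*a + y*b`.  Then the image of `x` in the quotient ring is not a zero divisor: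
for every polynomial `φ`, if `x * φ ∈ I` then `φ ∈ I`. -/
theorem statement10 (φ : MvPolynomial (Fin 5) ℂ)
    (h : (X 0 : MvPolynomial (Fin 5) ℂ) * φ ∈
      Ideal.span {(X 0 * X 1 - X 2 ^ 2 : MvPolynomial (Fin 5) ℂ),
                  (X 0 * X 3 + X 1 * X 4 : MvPolynomial (Fin 5) ℂ)}) :
    φ ∈ Ideal.span {(X 0 * X 1 - X 2 ^ 2 : MvPolynomial (Fin 5) ℂ),
                    (X 0 * X 3 + X 1 * X 4 : MvPolynomial (Fin 5) ℂ)} := by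
  rw [Ideal.mem_span_pair] at h ⊢
  obtain ⟨p, q, hpq⟩ := h
  have hx2 : (X 2 : MvPolynomial (Fin 5) ℂ) ≠ 0 := X_ne_zero 2
  have hx0 : (X 0 : MvPolynomial (Fin 5) ℂ) ≠ 0 := X_ne_zero 0
  -- evaluate at x = 0
  have h0 : X 2 ^ 2 * evk 0 p = X 1 * X 4 * evk 0 q := by
    have h1 := congrArg (evk 0) hpq
    simp only [map_add, map_mul, map_sub, map_pow, evk_X] at h1
    simp at h1
    linear_combination -h1
  have prime2 := prime_Xk 2
  have hnd : ¬ (X 2 : MvPolynomial (Fin 5) ℂ) ∣ X 1 * X 4 := by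
    intro hd
    rcases prime2.dvd_mul.mp hd with h' | h' <;> rw [X_dvd_X] at h' <;> exact absurd h' (by decide)
  have hdvd1 : (X 2 : MvPolynomial (Fin 5) ℂ) ∣ evk 0 q := by
    have hd : (X 2 : MvPolynomial (Fin 5) ℂ) ∣ X 1 * X 4 * evk 0 q :=
      ⟨X 2 * evk 0 p, by linear_combination -h0⟩
    rcases prime2.dvd_mul.mp hd with h' | h'
    · exact absurd h' hnd
    · exact h'
  obtain ⟨q', hq'⟩ := hdvd1
  have h1 : X 2 * evk 0 p = X 1 * X 4 * q' := by
    apply mul_left_cancel₀ hx2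
    linear_combination h0 + X 1 * X 4 * hq'
  have hdvd2 : (X 2 : MvPolynomial (Fin 5) ℂ) ∣ q' := by
    have hd : (X 2 : MvPolynomial (Fin 5) ℂ) ∣ X 1 * X 4 * q' := ⟨evk 0 p, h1.symm⟩
    rcases prime2.dvd_mul.mp hd with h' | h'
    · exact absurd h' hnd
    · exact h'
  obtain ⟨r, hr⟩ := hdvd2
  have hp0 : evk 0 p = X 1 * X 4 * r := by
    apply mul_left_cancel₀ hx2
    linear_combination h1 + X 1 * X 4 * hr
  have hq0 : evk 0 q = X 2 ^ 2 * r := by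
    linear_combination hq' + X 2 * hr
  obtain ⟨p₁, hp₁⟩ := X_dvd_sub_evk 0 p
  obtain ⟨q₁, hq₁⟩ := X_dvd_sub_evk 0 q
  refine ⟨p₁ - X 3 * r, q₁ + X 1 * r, ?_⟩
  apply mul_left_cancel₀ hx0
  linear_combination hpq - (X 0 * X 1 - X 2 ^ 2) * (hp₁ + hp0)
    - (X 0 * X 3 + X 1 * X 4) * (hq₁ + hq0)
end

section
/- In the polynomial ring ℝ[λ, β₁, β₂, y₁, y₂, α, x] in seven variables over ℝ, the ideal generated by the two polynomials β₂y₂ − λ² and β₂y₁ + β₁y₂ is a prime ideal. -/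
open MvPolynomial

noncomputable section Statement11Aux

abbrev R7 := MvPolynomial (Fin 7) ℝ
abbrev R5 := MvPolynomial (Fin 5) ℝ

def pf : R7 := X 2 * X 4 - X 0 ^ 2
def pg : R7 := X 2 * X 3 + X 1 * X 4
def I7 : Ideal R7 := Ideal.span {pf, pg}

lemma hpf_mem : pf ∈ I7 := Ideal.subset_span (by left; rfl)
lemma hpg_mem : pg ∈ I7 := Ideal.subset_span (by right; rfl)

def emb : Fin 5 → Fin 7 := fun i =>
  if i = 0 then 0 else if i = 1 then 3 else if i = 2 then 4 else if i = 3 then 5 else 6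

def pt (v : Fin 5 → ℝ) : Fin 7 → ℝ := fun i =>
  if i = 0 then v 0 else if i = 1 then -(v 0)^2 * v 1 / (v 2)^2
  else if i = 2 then (v 0)^2 / v 2 else if i = 3 then v 1
  else if i = 4 then v 2 else if i = 5 then v 3 else v 4

lemma eval_pt_zero {v : Fin 5 → ℝ} (hv : v 2 ≠ 0) {p : R7} (hp : p ∈ I7) :
    eval (pt v) p = 0 := by
  rw [I7, Ideal.mem_span_pair] at hp
  obtain ⟨a, b, rfl⟩ := hp
  have e0 : pt v 0 = v 0 := rfl
  have e1 : pt v 1 = -(v 0)^2 * v 1 / (v 2)^2 := rfl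
  have e2 : pt v 2 = (v 0)^2 / v 2 := rfl
  have e3 : pt v 3 = v 1 := rfl
  have e4 : pt v 4 = v 2 := rfl
  have hf : eval (pt v) pf = 0 := by
    rw [pf, map_sub, map_mul, map_pow, eval_X, eval_X, eval_X, e2, e4, e0]
    field_simp
    ring
  have hg : eval (pt v) pg = 0 := by
    rw [pg, map_add, map_mul, map_mul, eval_X, eval_X, eval_X, eval_X, e2, e3, e1, e4]
    field_simp
    ring
  rw [map_add, map_mul, map_mul, hf, hg, mul_zero, mul_zero, add_zero]

lemma rename_eq_zero {P : R5} (hP : rename emb P ∈ I7) : P = 0 := by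
  have hev : ∀ v : Fin 5 → ℝ, v 2 ≠ 0 → eval v P = 0 := by
    intro v hv
    have h0 := eval_pt_zero hv hP
    rw [eval_rename] at h0
    have hc : pt v ∘ emb = v := by
      funext i
      fin_cases i <;> rfl
    rwa [hc] at h0
  have hz : (X 2 : R5) * P = 0 := by
    apply MvPolynomial.funext
    intro v
    by_cases hv : v 2 = 0
    · simp [hv]
    · simp [hev v hv]
  rcases mul_eq_zero.mp hz with h | h
  · exact absurd h (X_ne_zero _)
  · exact h

def sig : R7 →ₐ[ℝ] R7 := aeval (fun i : Fin 7 => if i = 4 then 0 else X i)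

lemma sig_X4 : sig (X 4) = 0 := by simp [sig]
lemma sig_X {i : Fin 7} (h : i ≠ 4) : sig (X i) = X i := by simp [sig, h]

lemma X4_dvd_sub_sig (p : R7) : (X 4 : R7) ∣ p - sig p := by
  induction p using MvPolynomial.induction_on with
  | C a => simp [sig]
  | add p q hp hq =>
      have h : (p + q) - (sig p + sig q) = (p - sig p) + (q - sig q) := by ring
      rw [map_add, h]
      exact dvd_add hp hq
  | mul_X p i hp =>
      rw [map_mul]
      by_cases hi : i = 4
      · subst hi
        rw [sig_X4, mul_zero, sub_zero]
        exact dvd_mul_left _ _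
      · rw [sig_X hi]
        obtain ⟨c, hc⟩ := hp
        exact ⟨c * X i, by rw [← sub_mul, hc]; ring⟩

lemma prime_X0 : Prime (X 0 : R7) := by
  have h : Prime ((MvPolynomial.finSuccEquiv ℝ 6) (X 0)) := by
    rw [MvPolynomial.finSuccEquiv_X_zero]
    exact Polynomial.prime_X
  exact (MulEquiv.prime_iff (MvPolynomial.finSuccEquiv ℝ 6).toRingEquiv.toMulEquiv).mp h

lemma X0_not_dvd {j : Fin 7} (hj : j ≠ 0) : ¬ (X 0 : R7) ∣ X j := by
  rintro ⟨d, hd⟩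
  have := congrArg (eval (fun i : Fin 7 => if i = 0 then (0:ℝ) else 1)) hd
  simp [hj] at this

lemma X4_mul_mem {h : R7} (hm : X 4 * h ∈ I7) : h ∈ I7 := by
  rw [I7, Ideal.mem_span_pair] at hm
  obtain ⟨a, b, hab⟩ := hm
  have hsab := congrArg sig hab
  rw [map_add, map_mul, map_mul, map_mul, sig_X4, zero_mul] at hsab
  have hsf : sig pf = - X 0 ^ 2 := by
    simp only [pf, map_sub, map_mul, map_pow, sig_X4]
    rw [sig_X (by decide : (2:Fin 7) ≠ 4), sig_X (by decide : (0:Fin 7) ≠ 4)]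
    ring
  have hsg : sig pg = X 2 * X 3 := by
    simp only [pg, map_add, map_mul, sig_X4]
    rw [sig_X (by decide : (2:Fin 7) ≠ 4), sig_X (by decide : (3:Fin 7) ≠ 4),
      sig_X (by decide : (1:Fin 7) ≠ 4)]
    ring
  rw [hsf, hsg] at hsab
  have hX0 := prime_X0
  have h1 : (X 0 : R7) ∣ sig b := by
    have hd : (X 0 : R7) ∣ sig b * (X 2 * X 3) :=
      ⟨sig a * X 0, by linear_combination hsab⟩
    rcases (hX0.dvd_mul.mp hd) with h | h
    · exact h
    rcases (hX0.dvd_mul.mp h) with h | h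
    · exact absurd h (X0_not_dvd (by decide))
    · exact absurd h (X0_not_dvd (by decide))
  obtain ⟨b', hb'⟩ := h1
  have h2 : b' * (X 2 * X 3) = sig a * X 0 := by
    apply mul_left_cancel₀ (X_ne_zero (0 : Fin 7))
    linear_combination hsab - (X 2 * X 3) * hb'
  have h3 : (X 0 : R7) ∣ b' := by
    have hd : (X 0 : R7) ∣ b' * (X 2 * X 3) := ⟨sig a, by rw [h2]; ring⟩
    rcases (hX0.dvd_mul.mp hd) with h | h
    · exact h
    rcases (hX0.dvd_mul.mp h) with h | h
    · exact absurd h (X0_not_dvd (by decide))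
    · exact absurd h (X0_not_dvd (by decide))
  obtain ⟨c, hc⟩ := h3
  have ha' : sig a = c * (X 2 * X 3) := by
    apply mul_right_cancel₀ (X_ne_zero (0 : Fin 7))
    linear_combination (X 2 * X 3) * hc - h2
  obtain ⟨a₁, ha₁⟩ := X4_dvd_sub_sig a
  obtain ⟨b₁, hb₁⟩ := X4_dvd_sub_sig b
  have key : X 4 * h = X 4 * (c * (X 2 ^ 2 * X 3 + X 0 ^ 2 * X 1) + a₁ * pf + b₁ * pg) := by
    simp only [pf, pg] at hab ⊢
    linear_combination (X 2 * X 4 - X 0 ^ 2) * ha₁ + (X 2 * X 3 + X 1 * X 4) * hb₁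
      + (X 2 * X 4 - X 0 ^ 2) * ha' + (X 2 * X 3 + X 1 * X 4) * hb'
      + (X 0 * (X 2 * X 3 + X 1 * X 4)) * hc - hab
  have hh : h = c * (X 2 ^ 2 * X 3 + X 0 ^ 2 * X 1) + a₁ * pf + b₁ * pg :=
    mul_left_cancel₀ (X_ne_zero (4 : Fin 7)) key
  rw [hh]
  have hmem : (X 2 ^ 2 * X 3 + X 0 ^ 2 * X 1 : R7) ∈ I7 := by
    have he : (X 2 ^ 2 * X 3 + X 0 ^ 2 * X 1 : R7) = X 2 * pg - X 1 * pf := by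
      simp only [pf, pg]; ring
    rw [he]
    exact sub_mem (Ideal.mul_mem_left _ _ hpg_mem) (Ideal.mul_mem_left _ _ hpf_mem)
  exact add_mem (add_mem (Ideal.mul_mem_left _ _ hmem) (Ideal.mul_mem_left _ _ hpf_mem))
    (Ideal.mul_mem_left _ _ hpg_mem)

lemma X4_pow_mul_mem {h : R7} {N : ℕ} (hm : X 4 ^ N * h ∈ I7) : h ∈ I7 := by
  induction N with
  | zero => simpa using hm
  | succ n ih =>
      apply ih
      apply X4_mul_mem
      have he : X 4 * (X 4 ^ n * h) = X 4 ^ (n + 1) * h := by ring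
      rw [he]
      exact hm

lemma reduce (p : R7) : ∃ (N : ℕ) (P : R5), X 4 ^ N * p - rename emb P ∈ I7 := by
  induction p using MvPolynomial.induction_on with
  | C a =>
      exact ⟨0, C a, by simp⟩
  | add p q hp hq =>
      obtain ⟨N, P, hP⟩ := hp
      obtain ⟨M, Q, hQ⟩ := hq
      refine ⟨N + M, X 2 ^ M * P + X 2 ^ N * Q, ?_⟩
      have hr2 : rename emb (X 2 : R5) = (X 4 : R7) := by
        rw [rename_X, show emb 2 = 4 from rfl]
      have he : X 4 ^ (N + M) * (p + q) - rename emb (X 2 ^ M * P + X 2 ^ N * Q)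
          = X 4 ^ M * (X 4 ^ N * p - rename emb P)
            + X 4 ^ N * (X 4 ^ M * q - rename emb Q) := by
        rw [map_add, map_mul, map_mul, map_pow, map_pow, hr2]
        ring
      rw [he]
      exact add_mem (Ideal.mul_mem_left _ _ hP) (Ideal.mul_mem_left _ _ hQ)
  | mul_X p i hp =>
      obtain ⟨N, P, hP⟩ := hp
      fin_cases i
      · show ∃ N' P', (X 4 : R7) ^ N' * (p * X 0) - rename emb P' ∈ I7
        refine ⟨N, P * X 0, ?_⟩
        have he : X 4 ^ N * (p * X 0) - rename emb (P * X 0)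
            = (X 4 ^ N * p - rename emb P) * X 0 := by
          rw [map_mul, rename_X, show emb 0 = 0 from rfl]; ring
        rw [he]; exact Ideal.mul_mem_right _ _ hP
      · show ∃ N' P', (X 4 : R7) ^ N' * (p * X 1) - rename emb P' ∈ I7
        refine ⟨N + 2, -(P * X 0 ^ 2 * X 1), ?_⟩
        have he : X 4 ^ (N + 2) * (p * X 1) - rename emb (-(P * X 0 ^ 2 * X 1))
            = (X 4 ^ N * p - rename emb P) * (X 4 ^ 2 * X 1)
              + rename emb P * (X 4 * pg - X 3 * pf) := by
          rw [map_neg, map_mul, map_mul, map_pow, rename_X, rename_X,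
            show emb 0 = 0 from rfl, show emb 1 = 3 from rfl]
          simp only [pf, pg]; ring
        rw [he]
        refine add_mem (Ideal.mul_mem_right _ _ hP) (Ideal.mul_mem_left _ _ ?_)
        exact sub_mem (Ideal.mul_mem_left _ _ hpg_mem) (Ideal.mul_mem_left _ _ hpf_mem)
      · show ∃ N' P', (X 4 : R7) ^ N' * (p * X 2) - rename emb P' ∈ I7
        refine ⟨N + 1, P * X 0 ^ 2, ?_⟩
        have he : X 4 ^ (N + 1) * (p * X 2) - rename emb (P * X 0 ^ 2)
            = (X 4 ^ N * p - rename emb P) * (X 4 * X 2) + rename emb P * pf := by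
          rw [map_mul, map_pow, rename_X, show emb 0 = 0 from rfl]
          simp only [pf]; ring
        rw [he]
        exact add_mem (Ideal.mul_mem_right _ _ hP) (Ideal.mul_mem_left _ _ hpf_mem)
      · show ∃ N' P', (X 4 : R7) ^ N' * (p * X 3) - rename emb P' ∈ I7
        refine ⟨N, P * X 1, ?_⟩
        have he : X 4 ^ N * (p * X 3) - rename emb (P * X 1)
            = (X 4 ^ N * p - rename emb P) * X 3 := by
          rw [map_mul, rename_X, show emb 1 = 3 from rfl]; ring
        rw [he]; exact Ideal.mul_mem_right _ _ hP
      · show ∃ N' P', (X 4 : R7) ^ N' * (p * X 4) - rename emb P' ∈ I7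
        refine ⟨N, P * X 2, ?_⟩
        have he : X 4 ^ N * (p * X 4) - rename emb (P * X 2)
            = (X 4 ^ N * p - rename emb P) * X 4 := by
          rw [map_mul, rename_X, show emb 2 = 4 from rfl]; ring
        rw [he]; exact Ideal.mul_mem_right _ _ hP
      · show ∃ N' P', (X 4 : R7) ^ N' * (p * X 5) - rename emb P' ∈ I7
        refine ⟨N, P * X 3, ?_⟩
        have he : X 4 ^ N * (p * X 5) - rename emb (P * X 3)
            = (X 4 ^ N * p - rename emb P) * X 5 := by
          rw [map_mul, rename_X, show emb 3 = 5 from rfl]; ring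
        rw [he]; exact Ideal.mul_mem_right _ _ hP
      · show ∃ N' P', (X 4 : R7) ^ N' * (p * X 6) - rename emb P' ∈ I7
        refine ⟨N, P * X 4, ?_⟩
        have he : X 4 ^ N * (p * X 6) - rename emb (P * X 4)
            = (X 4 ^ N * p - rename emb P) * X 6 := by
          rw [map_mul, rename_X, show emb 4 = 6 from rfl]; ring
        rw [he]; exact Ideal.mul_mem_right _ _ hP

end Statement11Aux

/-- In the polynomial ring `ℝ[λ, β₁, β₂, y₁, y₂, α, x]` (variables indexed by `Fin 7`:
`λ = X 0`, `β₁ = X 1`, `β₂ = X 2`, `y₁ = X 3`, `y₂ = X 4`, `α = X 5`, `x = X 6`),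
the ideal generated by `β₂*y₂ - λ^2` and `β₂*y₁ + β₁*y₂` is prime. -/
theorem statement11 :
    (Ideal.span {(X 2 * X 4 - X 0 ^ 2 : MvPolynomial (Fin 7) ℝ),
                 (X 2 * X 3 + X 1 * X 4 : MvPolynomial (Fin 7) ℝ)}).IsPrime := by
  have hI : Ideal.span {(X 2 * X 4 - X 0 ^ 2 : MvPolynomial (Fin 7) ℝ),
                 (X 2 * X 3 + X 1 * X 4 : MvPolynomial (Fin 7) ℝ)} = I7 := rfl
  rw [hI]
  rw [Ideal.isPrime_iff]
  constructor
  · intro htop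
    have h1 : (1 : R7) ∈ I7 := by rw [htop]; trivial
    have := eval_pt_zero (v := fun _ => 1) (by norm_num) h1
    simp at this
  · intro p q hpq
    obtain ⟨N, P, hP⟩ := reduce p
    obtain ⟨M, Q, hQ⟩ := reduce q
    have hprod : rename emb (P * Q) ∈ I7 := by
      have he : rename emb (P * Q)
          = X 4 ^ (N + M) * (p * q)
            - (X 4 ^ M * q) * (X 4 ^ N * p - rename emb P)
            - rename emb P * (X 4 ^ M * q - rename emb Q) := by
        rw [map_mul]; ring
      rw [he]
      exact sub_mem (sub_mem (Ideal.mul_mem_left _ _ hpq)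
        (Ideal.mul_mem_left _ _ hP)) (Ideal.mul_mem_left _ _ hQ)
    have hPQ : P * Q = 0 := rename_eq_zero hprod
    rcases mul_eq_zero.mp hPQ with h | h
    · left
      apply X4_pow_mul_mem (N := N)
      have he : X 4 ^ N * p = X 4 ^ N * p - rename emb P := by rw [h, map_zero, sub_zero]
      rw [he]; exact hP
    · right
      apply X4_pow_mul_mem (N := M)
      have he : X 4 ^ M * q = X 4 ^ M * q - rename emb Q := by rw [h, map_zero, sub_zero]
      rw [he]; exact hQ
end

section
/- In the polynomial ring ℝ[a₂, a₃, b₂, b₃, c₂, c₃, α₁₃, α₂₃, β₁₃, β₂₃, γ₁₃, γ₂₃] in twelve variables over ℝ, the ideal generated by the six polynomials f₁ = α₂₃ − a₂α₁₃ + a₃, f₂ = β₂₃ − a₂β₁₃ + a₃, f₃ = α₂₃ − b₂α₁₃ + b₃, f₄ = γ₂₃ − b₂γ₁₃ + b₃, f₅ = β₂₃ − c₂β₁₃ + c₃, f₆ = γ₂₃ − c₂γ₁₃ + c₃ is a prime ideal. -/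
open MvPolynomial

/-- A primitive linear polynomial over a domain is irreducible. -/
lemma linear_irred {R : Type*} [CommRing R] [IsDomain R] {a b : R} (ha : a ≠ 0)
    (hco : ∀ d : R, d ∣ a → d ∣ b → IsUnit d) :
    Irreducible (Polynomial.C a * Polynomial.X + Polynomial.C b) := by
  set p : Polynomial R := Polynomial.C a * Polynomial.X + Polynomial.C b with hp
  have hdeg : p.natDegree = 1 := Polynomial.natDegree_linear ha
  have hpne : p ≠ 0 := fun h0 => by simp [h0] at hdeg
  have key : ∀ s : Polynomial R, s ∣ p → s.natDegree = 0 → IsUnit s := by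
    intro s hs hds
    have hsc : s = Polynomial.C (s.coeff 0) := Polynomial.eq_C_of_natDegree_eq_zero hds
    have hdvd : ∀ i, s.coeff 0 ∣ p.coeff i :=
      (Polynomial.C_dvd_iff_dvd_coeff _ _).mp (hsc ▸ hs)
    have h1 : p.coeff 1 = a := by simp [hp]
    have h0 : p.coeff 0 = b := by simp [hp]
    have := hco (s.coeff 0) (h1 ▸ hdvd 1) (h0 ▸ hdvd 0)
    rw [hsc]
    exact Polynomial.isUnit_C.mpr this
  constructor
  · intro hu
    have := Polynomial.natDegree_eq_zero_of_isUnit hu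
    omega
  · intro q r hqr
    have hq0 : q ≠ 0 := fun h => hpne (by rw [hqr, h, zero_mul])
    have hr0 : r ≠ 0 := fun h => hpne (by rw [hqr, h, mul_zero])
    have hsum : q.natDegree + r.natDegree = 1 := by
      rw [← Polynomial.natDegree_mul hq0 hr0, ← hqr, hdeg]
    rcases Nat.add_eq_one_iff.mp hsum with ⟨hq, _⟩ | ⟨_, hr⟩
    · exact Or.inl (key q (Dvd.intro r hqr.symm) hq)
    · exact Or.inr (key r (Dvd.intro_left q hqr.symm) hr)

lemma prime_X0_s12 : Prime (X 0 : MvPolynomial (Fin 6) ℝ) := by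
  rw [← MulEquiv.prime_iff (finSuccEquiv ℝ 5).toMulEquiv]
  have : (finSuccEquiv ℝ 5).toMulEquiv (X 0) = Polynomial.X := finSuccEquiv_X_zero
  rw [this]
  exact Polynomial.prime_X

lemma not_X0_dvd : ¬ (X 0 : MvPolynomial (Fin 6) ℝ) ∣ (X 1 * X 2) := by
  intro hdvd
  have h := map_dvd (eval (fun i : Fin 6 => if i = 0 then (0 : ℝ) else 1)) hdvd
  simp only [map_mul, eval_X, if_true] at h
  rw [if_neg (by decide), if_neg (by decide)] at h
  norm_num at h

noncomputable def hpoly : MvPolynomial (Fin 7) ℝ := X 0 * X 1 - X 2 * X 3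

lemma hpoly_irred : Irreducible hpoly := by
  have key : Irreducible (Polynomial.C (X 0 : MvPolynomial (Fin 6) ℝ) * Polynomial.X +
      Polynomial.C (-(X 1 * X 2))) := by
    apply linear_irred (X_ne_zero 0)
    intro d hda hdb
    obtain ⟨e, he⟩ := hda
    rcases (prime_X0_s12.irreducible).isUnit_or_isUnit he with h | h
    · exact h
    · exfalso
      have hassoc : Associated d (X 0 : MvPolynomial (Fin 6) ℝ) :=
        ⟨h.unit, by rw [IsUnit.unit_spec]; exact he.symm⟩
      have : (X 0 : MvPolynomial (Fin 6) ℝ) ∣ -(X 1 * X 2) := hassoc.symm.dvd.trans hdb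
      exact not_X0_dvd ((dvd_neg).mp this)
  apply (MulEquiv.irreducible_iff (finSuccEquiv ℝ 6).toMulEquiv).mp
  have himg : (finSuccEquiv ℝ 6).toMulEquiv hpoly =
      Polynomial.C (X 0 : MvPolynomial (Fin 6) ℝ) * Polynomial.X + Polynomial.C (-(X 1 * X 2)) := by
    show (finSuccEquiv ℝ 6) hpoly = _
    have h1 : (X 1 : MvPolynomial (Fin 7) ℝ) = X (Fin.succ 0) := rfl
    have h2 : (X 2 : MvPolynomial (Fin 7) ℝ) = X (Fin.succ 1) := rfl
    have h3 : (X 3 : MvPolynomial (Fin 7) ℝ) = X (Fin.succ 2) := rfl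
    rw [hpoly, map_sub, map_mul, map_mul, h1, h2, h3, finSuccEquiv_X_zero,
      finSuccEquiv_X_succ, finSuccEquiv_X_succ, finSuccEquiv_X_succ]
    rw [map_neg, ← Polynomial.C_mul]
    ring
  rw [himg]
  exact key

noncomputable def Phi : Fin 12 → MvPolynomial (Fin 7) ℝ :=
  ![X 4, X 5, X 4 - X 2, X 5 - X 2 * (X 6 - X 3), X 4 - X 0, X 5 - X 0 * (X 6 - X 1),
    X 6 - X 3, X 4 * (X 6 - X 3) - X 5, X 6 - X 1, X 4 * (X 6 - X 1) - X 5, X 6,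
    X 4 * X 6 - X 2 * X 3 - X 5]

noncomputable def Psi : Fin 7 → MvPolynomial (Fin 12) ℝ :=
  ![X 0 - X 4, X 10 - X 8, X 0 - X 2, X 10 - X 6, X 0, X 1, X 10]

/-- In the polynomial ring `ℝ[a₂, a₃, b₂, b₃, c₂, c₃, α₁₃, α₂₃, β₁₃, β₂₃, γ₁₃, γ₂₃]`
(variables indexed by `Fin 12` in this order: `a₂ = X 0`, `a₃ = X 1`, `b₂ = X 2`,
`b₃ = X 3`, `c₂ = X 4`, `c₃ = X 5`, `α₁₃ = X 6`, `α₂₃ = X 7`, `β₁₃ = X 8`, `β₂₃ = X 9`,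
`γ₁₃ = X 10`, `γ₂₃ = X 11`), the ideal generated by the six polynomials
`f₁ = α₂₃ - a₂·α₁₃ + a₃`, `f₂ = β₂₃ - a₂·β₁₃ + a₃`, `f₃ = α₂₃ - b₂·α₁₃ + b₃`,
`f₄ = γ₂₃ - b₂·γ₁₃ + b₃`, `f₅ = β₂₃ - c₂·β₁₃ + c₃`, `f₆ = γ₂₃ - c₂·γ₁₃ + c₃`
is prime. -/
theorem statement12 :
    (Ideal.span {(X 7 - X 0 * X 6 + X 1 : MvPolynomial (Fin 12) ℝ),
                 (X 9 - X 0 * X 8 + X 1 : MvPolynomial (Fin 12) ℝ),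
                 (X 7 - X 2 * X 6 + X 3 : MvPolynomial (Fin 12) ℝ),
                 (X 11 - X 2 * X 10 + X 3 : MvPolynomial (Fin 12) ℝ),
                 (X 9 - X 4 * X 8 + X 5 : MvPolynomial (Fin 12) ℝ),
                 (X 11 - X 4 * X 10 + X 5 : MvPolynomial (Fin 12) ℝ)}).IsPrime := by
  set g1 : MvPolynomial (Fin 12) ℝ := X 7 - X 0 * X 6 + X 1 with hg1
  set g2 : MvPolynomial (Fin 12) ℝ := X 9 - X 0 * X 8 + X 1 with hg2
  set g3 : MvPolynomial (Fin 12) ℝ := X 7 - X 2 * X 6 + X 3 with hg3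
  set g4 : MvPolynomial (Fin 12) ℝ := X 11 - X 2 * X 10 + X 3 with hg4
  set g5 : MvPolynomial (Fin 12) ℝ := X 9 - X 4 * X 8 + X 5 with hg5
  set g6 : MvPolynomial (Fin 12) ℝ := X 11 - X 4 * X 10 + X 5 with hg6
  set I : Ideal (MvPolynomial (Fin 12) ℝ) := Ideal.span {g1, g2, g3, g4, g5, g6} with hI
  have m1 : g1 ∈ I := Ideal.subset_span (by simp)
  have m2 : g2 ∈ I := Ideal.subset_span (by simp)
  have m3 : g3 ∈ I := Ideal.subset_span (by simp)
  have m4 : g4 ∈ I := Ideal.subset_span (by simp)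
  have m5 : g5 ∈ I := Ideal.subset_span (by simp)
  have m6 : g6 ∈ I := Ideal.subset_span (by simp)
  set J : Ideal (MvPolynomial (Fin 7) ℝ) := Ideal.span {hpoly} with hJ
  have hJprime : J.IsPrime :=
    (Ideal.span_singleton_prime hpoly_irred.ne_zero).mpr
      (UniqueFactorizationMonoid.irreducible_iff_prime.mp hpoly_irred)
  haveI : IsDomain (MvPolynomial (Fin 7) ℝ ⧸ J) := (Ideal.Quotient.isDomain_iff_prime J).mpr hJprime
  rw [← Ideal.Quotient.isDomain_iff_prime]
  set φ : MvPolynomial (Fin 12) ℝ →ₐ[ℝ] (MvPolynomial (Fin 7) ℝ ⧸ J) :=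
    (Ideal.Quotient.mkₐ ℝ J).comp (aeval Phi) with hφ
  set ψ : MvPolynomial (Fin 7) ℝ →ₐ[ℝ] (MvPolynomial (Fin 12) ℝ ⧸ I) :=
    (Ideal.Quotient.mkₐ ℝ I).comp (aeval Psi) with hψ
  have hmk : ∀ q : MvPolynomial (Fin 12) ℝ, φ q = Ideal.Quotient.mk J (aeval Phi q) := fun q => rfl
  have hmk' : ∀ q : MvPolynomial (Fin 7) ℝ, ψ q = Ideal.Quotient.mk I (aeval Psi q) := fun q => rfl
  have hzJ : ∀ q : MvPolynomial (Fin 12) ℝ, aeval Phi q ∈ J → φ q = 0 := by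
    intro q hq
    rw [hmk q, Ideal.Quotient.eq_zero_iff_mem]
    exact hq
  have hφI : ∀ a ∈ I, φ a = 0 := by
    have hle : I ≤ RingHom.ker (φ : MvPolynomial (Fin 12) ℝ →+* (MvPolynomial (Fin 7) ℝ ⧸ J)) := by
      rw [hI, Ideal.span_le]
      intro p hp
      simp only [Set.mem_insert_iff, Set.mem_singleton_iff] at hp
      have memker : φ p = 0 → p ∈ (RingHom.ker (φ : MvPolynomial (Fin 12) ℝ →+* (MvPolynomial (Fin 7) ℝ ⧸ J)) : Set (MvPolynomial (Fin 12) ℝ)) := by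
        intro h0
        simp only [SetLike.mem_coe, RingHom.mem_ker]
        exact h0
      rcases hp with h | h | h | h | h | h <;> subst h <;> apply memker <;> apply hzJ
      · have : aeval Phi g1 = 0 := by
          simp only [hg1, map_add, map_sub, map_mul, aeval_X]
          show (X 4 * (X 6 - X 3) - X 5) - X 4 * (X 6 - X 3) + X 5 = 0
          ring
        rw [this]; exact J.zero_mem
      · have : aeval Phi g2 = 0 := by
          simp only [hg2, map_add, map_sub, map_mul, aeval_X]
          show (X 4 * (X 6 - X 1) - X 5) - X 4 * (X 6 - X 1) + X 5 = 0
          ring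
        rw [this]; exact J.zero_mem
      · have : aeval Phi g3 = 0 := by
          simp only [hg3, map_add, map_sub, map_mul, aeval_X]
          show (X 4 * (X 6 - X 3) - X 5) - (X 4 - X 2) * (X 6 - X 3) + (X 5 - X 2 * (X 6 - X 3)) = 0
          ring
        rw [this]; exact J.zero_mem
      · have : aeval Phi g4 = 0 := by
          simp only [hg4, map_add, map_sub, map_mul, aeval_X]
          show (X 4 * X 6 - X 2 * X 3 - X 5) - (X 4 - X 2) * X 6 + (X 5 - X 2 * (X 6 - X 3)) = 0
          ring
        rw [this]; exact J.zero_mem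
      · have : aeval Phi g5 = 0 := by
          simp only [hg5, map_add, map_sub, map_mul, aeval_X]
          show (X 4 * (X 6 - X 1) - X 5) - (X 4 - X 0) * (X 6 - X 1) + (X 5 - X 0 * (X 6 - X 1)) = 0
          ring
        rw [this]; exact J.zero_mem
      · have : aeval Phi g6 = hpoly := by
          simp only [hg6, map_add, map_sub, map_mul, aeval_X]
          show (X 4 * X 6 - X 2 * X 3 - X 5) - (X 4 - X 0) * X 6 + (X 5 - X 0 * (X 6 - X 1)) = hpoly
          rw [hpoly]; ring
        rw [this, hJ]
        exact Ideal.subset_span rfl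
    intro a ha
    exact hle ha
  have hψJ : ∀ a ∈ J, ψ a = 0 := by
    have hle : J ≤ RingHom.ker (ψ : MvPolynomial (Fin 7) ℝ →+* (MvPolynomial (Fin 12) ℝ ⧸ I)) := by
      rw [hJ, Ideal.span_le]
      intro p hp
      simp only [Set.mem_singleton_iff] at hp
      subst hp
      have h0 : ψ hpoly = 0 := by
        rw [hmk' hpoly, Ideal.Quotient.eq_zero_iff_mem]
        have hc : aeval Psi hpoly = g3 + g2 + g6 - g1 - g5 - g4 := by
          simp only [hpoly, map_sub, map_mul, aeval_X]
          show (X 0 - X 4) * (X 10 - X 8) - (X 0 - X 2) * (X 10 - X 6) =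
            g3 + g2 + g6 - g1 - g5 - g4
          rw [hg1, hg2, hg3, hg4, hg5, hg6]; ring
        rw [hc]
        exact sub_mem (sub_mem (sub_mem (add_mem (add_mem m3 m2) m6) m1) m5) m4
      simp only [SetLike.mem_coe, RingHom.mem_ker]
      exact h0
    intro a ha
    exact hle ha
  set φbar := Ideal.Quotient.liftₐ I φ hφI with hφbar
  set ψbar := Ideal.Quotient.liftₐ J ψ hψJ with hψbar
  have hmkφ : ∀ q, φbar (Ideal.Quotient.mk I q) = Ideal.Quotient.mk J (aeval Phi q) := by
    intro q
    rw [hφbar, Ideal.Quotient.liftₐ_apply]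
    exact hmk q
  have hmkψ : ∀ q, ψbar (Ideal.Quotient.mk J q) = Ideal.Quotient.mk I (aeval Psi q) := by
    intro q
    rw [hψbar, Ideal.Quotient.liftₐ_apply]
    exact hmk' q
  have h1 : ψbar.comp φbar = AlgHom.id ℝ (MvPolynomial (Fin 12) ℝ ⧸ I) := by
    apply Ideal.Quotient.algHom_ext
    apply MvPolynomial.algHom_ext
    intro i
    simp only [AlgHom.comp_apply, Ideal.Quotient.mkₐ_eq_mk, AlgHom.id_apply]
    rw [hmkφ, hmkψ, Ideal.Quotient.eq, aeval_X]
    fin_cases i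
    · show aeval Psi (Phi 0) - X 0 ∈ I
      have hc : aeval Psi (Phi 0) - X 0 = 0 := by
        show aeval Psi (X 4) - X 0 = 0
        simp only [map_add, map_sub, map_mul, aeval_X]
        show (X 0 : MvPolynomial (Fin 12) ℝ) - X 0 = 0
        ring
      rw [hc]; exact I.zero_mem
    · show aeval Psi (Phi 1) - X 1 ∈ I
      have hc : aeval Psi (Phi 1) - X 1 = 0 := by
        show aeval Psi (X 5) - X 1 = 0
        simp only [map_add, map_sub, map_mul, aeval_X]
        show (X 1 : MvPolynomial (Fin 12) ℝ) - X 1 = 0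
        ring
      rw [hc]; exact I.zero_mem
    · show aeval Psi (Phi 2) - X 2 ∈ I
      have hc : aeval Psi (Phi 2) - X 2 = 0 := by
        show aeval Psi (X 4 - X 2) - X 2 = 0
        simp only [map_add, map_sub, map_mul, aeval_X]
        show (X 0 : MvPolynomial (Fin 12) ℝ) - (X 0 - X 2) - X 2 = 0
        ring
      rw [hc]; exact I.zero_mem
    · show aeval Psi (Phi 3) - X 3 ∈ I
      have hc : aeval Psi (Phi 3) - X 3 = g1 - g3 := by
        show aeval Psi (X 5 - X 2 * (X 6 - X 3)) - X 3 = g1 - g3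
        simp only [map_add, map_sub, map_mul, aeval_X]
        show (X 1 : MvPolynomial (Fin 12) ℝ) - (X 0 - X 2) * (X 10 - (X 10 - X 6)) - X 3 = g1 - g3
        rw [hg1, hg3]; ring
      rw [hc]; exact sub_mem m1 m3
    · show aeval Psi (Phi 4) - X 4 ∈ I
      have hc : aeval Psi (Phi 4) - X 4 = 0 := by
        show aeval Psi (X 4 - X 0) - X 4 = 0
        simp only [map_add, map_sub, map_mul, aeval_X]
        show (X 0 : MvPolynomial (Fin 12) ℝ) - (X 0 - X 4) - X 4 = 0
        ring
      rw [hc]; exact I.zero_mem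
    · show aeval Psi (Phi 5) - X 5 ∈ I
      have hc : aeval Psi (Phi 5) - X 5 = g2 - g5 := by
        show aeval Psi (X 5 - X 0 * (X 6 - X 1)) - X 5 = g2 - g5
        simp only [map_add, map_sub, map_mul, aeval_X]
        show (X 1 : MvPolynomial (Fin 12) ℝ) - (X 0 - X 4) * (X 10 - (X 10 - X 8)) - X 5 = g2 - g5
        rw [hg2, hg5]; ring
      rw [hc]; exact sub_mem m2 m5
    · show aeval Psi (Phi 6) - X 6 ∈ I
      have hc : aeval Psi (Phi 6) - X 6 = 0 := by
        show aeval Psi (X 6 - X 3) - X 6 = 0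
        simp only [map_add, map_sub, map_mul, aeval_X]
        show (X 10 : MvPolynomial (Fin 12) ℝ) - (X 10 - X 6) - X 6 = 0
        ring
      rw [hc]; exact I.zero_mem
    · show aeval Psi (Phi 7) - X 7 ∈ I
      have hc : aeval Psi (Phi 7) - X 7 = -g1 := by
        show aeval Psi (X 4 * (X 6 - X 3) - X 5) - X 7 = -g1
        simp only [map_add, map_sub, map_mul, aeval_X]
        show (X 0 : MvPolynomial (Fin 12) ℝ) * (X 10 - (X 10 - X 6)) - X 1 - X 7 = -g1
        rw [hg1]; ring
      rw [hc]; exact neg_mem m1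
    · show aeval Psi (Phi 8) - X 8 ∈ I
      have hc : aeval Psi (Phi 8) - X 8 = 0 := by
        show aeval Psi (X 6 - X 1) - X 8 = 0
        simp only [map_add, map_sub, map_mul, aeval_X]
        show (X 10 : MvPolynomial (Fin 12) ℝ) - (X 10 - X 8) - X 8 = 0
        ring
      rw [hc]; exact I.zero_mem
    · show aeval Psi (Phi 9) - X 9 ∈ I
      have hc : aeval Psi (Phi 9) - X 9 = -g2 := by
        show aeval Psi (X 4 * (X 6 - X 1) - X 5) - X 9 = -g2
        simp only [map_add, map_sub, map_mul, aeval_X]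
        show (X 0 : MvPolynomial (Fin 12) ℝ) * (X 10 - (X 10 - X 8)) - X 1 - X 9 = -g2
        rw [hg2]; ring
      rw [hc]; exact neg_mem m2
    · show aeval Psi (Phi 10) - X 10 ∈ I
      have hc : aeval Psi (Phi 10) - X 10 = 0 := by
        show aeval Psi (X 6) - X 10 = 0
        simp only [map_add, map_sub, map_mul, aeval_X]
        show (X 10 : MvPolynomial (Fin 12) ℝ) - X 10 = 0
        ring
      rw [hc]; exact I.zero_mem
    · show aeval Psi (Phi 11) - X 11 ∈ I
      have hc : aeval Psi (Phi 11) - X 11 = g3 - g1 - g4 := by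
        show aeval Psi (X 4 * X 6 - X 2 * X 3 - X 5) - X 11 = g3 - g1 - g4
        simp only [map_add, map_sub, map_mul, aeval_X]
        show (X 0 : MvPolynomial (Fin 12) ℝ) * X 10 - (X 0 - X 2) * (X 10 - X 6) - X 1 - X 11 = g3 - g1 - g4
        rw [hg1, hg3, hg4]; ring
      rw [hc]; exact sub_mem (sub_mem m3 m1) m4
  have h2 : φbar.comp ψbar = AlgHom.id ℝ (MvPolynomial (Fin 7) ℝ ⧸ J) := by
    apply Ideal.Quotient.algHom_ext
    apply MvPolynomial.algHom_ext
    intro i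
    simp only [AlgHom.comp_apply, Ideal.Quotient.mkₐ_eq_mk, AlgHom.id_apply]
    rw [hmkψ, hmkφ, Ideal.Quotient.eq, aeval_X]
    fin_cases i
    · show aeval Phi (Psi 0) - X 0 ∈ J
      have hc : aeval Phi (Psi 0) - X 0 = 0 := by
        show aeval Phi (X 0 - X 4) - X 0 = 0
        simp only [map_add, map_sub, map_mul, aeval_X]
        show (X 4 : MvPolynomial (Fin 7) ℝ) - (X 4 - X 0) - X 0 = 0
        ring
      rw [hc]; exact J.zero_mem
    · show aeval Phi (Psi 1) - X 1 ∈ J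
      have hc : aeval Phi (Psi 1) - X 1 = 0 := by
        show aeval Phi (X 10 - X 8) - X 1 = 0
        simp only [map_add, map_sub, map_mul, aeval_X]
        show (X 6 : MvPolynomial (Fin 7) ℝ) - (X 6 - X 1) - X 1 = 0
        ring
      rw [hc]; exact J.zero_mem
    · show aeval Phi (Psi 2) - X 2 ∈ J
      have hc : aeval Phi (Psi 2) - X 2 = 0 := by
        show aeval Phi (X 0 - X 2) - X 2 = 0
        simp only [map_add, map_sub, map_mul, aeval_X]
        show (X 4 : MvPolynomial (Fin 7) ℝ) - (X 4 - X 2) - X 2 = 0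
        ring
      rw [hc]; exact J.zero_mem
    · show aeval Phi (Psi 3) - X 3 ∈ J
      have hc : aeval Phi (Psi 3) - X 3 = 0 := by
        show aeval Phi (X 10 - X 6) - X 3 = 0
        simp only [map_add, map_sub, map_mul, aeval_X]
        show (X 6 : MvPolynomial (Fin 7) ℝ) - (X 6 - X 3) - X 3 = 0
        ring
      rw [hc]; exact J.zero_mem
    · show aeval Phi (Psi 4) - X 4 ∈ J
      have hc : aeval Phi (Psi 4) - X 4 = 0 := by
        show aeval Phi (X 0) - X 4 = 0
        simp only [map_add, map_sub, map_mul, aeval_X]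
        show (X 4 : MvPolynomial (Fin 7) ℝ) - X 4 = 0
        ring
      rw [hc]; exact J.zero_mem
    · show aeval Phi (Psi 5) - X 5 ∈ J
      have hc : aeval Phi (Psi 5) - X 5 = 0 := by
        show aeval Phi (X 1) - X 5 = 0
        simp only [map_add, map_sub, map_mul, aeval_X]
        show (X 5 : MvPolynomial (Fin 7) ℝ) - X 5 = 0
        ring
      rw [hc]; exact J.zero_mem
    · show aeval Phi (Psi 6) - X 6 ∈ J
      have hc : aeval Phi (Psi 6) - X 6 = 0 := by
        show aeval Phi (X 10) - X 6 = 0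
        simp only [map_add, map_sub, map_mul, aeval_X]
        show (X 6 : MvPolynomial (Fin 7) ℝ) - X 6 = 0
        ring
      rw [hc]; exact J.zero_mem
  have e : (MvPolynomial (Fin 12) ℝ ⧸ I) ≃ₐ[ℝ] (MvPolynomial (Fin 7) ℝ ⧸ J) :=
    AlgEquiv.ofAlgHom φbar ψbar h2 h1
  exact Function.Injective.isDomain e.toRingEquiv.toRingHom e.toRingEquiv.injective
end
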